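/- arXiv:2301.04735 — 9 statements merged into one kernel-verified Lean document; each statement's English description precedes it below -/
import Mathlib

section
/- Let d ≥ 1 and let R, T be positive semidefinite d×d complex matrices. Let λ₁(R) ≥ λ₂(R) ≥ … ≥ λ_d(R) and λ₁(T) ≥ … ≥ λ_d(T) denote their eigenvalues listed in nonincreasing order. Then the supremum over unitary d×d complex matrices U of F(R, U T U*) equals (Σ_{i=1}^d √(λ_i(R) λ_i(T)))², and this supremum is attained by some unitary U. -/
open Matrix
open scoped ComplexOrder Classical

namespace Matrix.PosSemidef

noncomputable def sqrt {n 𝕜 : Type*} [Fintype n] [RCLike 𝕜] [DecidableEq n]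
    {A : Matrix n n 𝕜} (hA : PosSemidef A) : Matrix n n 𝕜 :=
  hA.1.eigenvectorUnitary.1 * diagonal ((↑) ∘ (√·) ∘ hA.1.eigenvalues) *
  (star hA.1.eigenvectorUnitary : Matrix n n 𝕜)

lemma posSemidef_sqrt {n 𝕜 : Type*} [Fintype n] [RCLike 𝕜] [DecidableEq n]
    {A : Matrix n n 𝕜} (hA : PosSemidef A) : PosSemidef hA.sqrt := by
  apply PosSemidef.mul_mul_conjTranspose_same
  refine posSemidef_diagonal_iff.mpr fun i ↦ ?_
  rw [Function.comp_apply, RCLike.nonneg_iff]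
  constructor
  · simp only [RCLike.ofReal_re]
    exact Real.sqrt_nonneg _
  · simp only [RCLike.ofReal_im]

end Matrix.PosSemidef

/-- Fidelity of two positive semidefinite matrices:
`F(R,S) = (Tr √(√R S √R))²` (junk value `0` if either is not PSD). -/
noncomputable def fid {d : ℕ} (R S : Matrix (Fin d) (Fin d) ℂ) : ℝ :=
  if h : R.PosSemidef ∧ S.PosSemidef then
    ((Matrix.PosSemidef.sqrt (show ((h.1.sqrt * S * h.1.sqrt)).PosSemidef by
        have h2 := h.2.mul_mul_conjTranspose_same h.1.sqrt
        rwa [h.1.posSemidef_sqrt.isHermitian.eq] at h2)).trace).re ^ 2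
  else 0

lemma Matrix.PosSemidef.sqrt_eq_cfc {d : ℕ} {A : Matrix (Fin d) (Fin d) ℂ} (hA : A.PosSemidef) :
    hA.sqrt = cfc Real.sqrt A := by
  rw [hA.1.cfc_eq]; rfl

open MatrixOrder in
lemma Matrix.PosSemidef.eq_sqrt_of_sq_eq {d : ℕ} {A B : Matrix (Fin d) (Fin d) ℂ}
    (hB : B.PosSemidef) (hA : A.PosSemidef) (h : B ^ 2 = A) : B = hA.sqrt := by
  rw [hA.sqrt_eq_cfc, ← cfcₙ_eq_cfc (f := Real.sqrt), ← CFC.sqrt_eq_real_sqrt A hA.nonneg]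
  exact (CFC.sqrt_unique (by rw [← sq]; exact h) hB.nonneg).symm

open MatrixOrder in
lemma Matrix.PosSemidef.sqrt_mul_self {d : ℕ} {A : Matrix (Fin d) (Fin d) ℂ} (hA : A.PosSemidef) :
    hA.sqrt * hA.sqrt = A := by
  rw [hA.sqrt_eq_cfc, ← cfcₙ_eq_cfc (f := Real.sqrt), ← CFC.sqrt_eq_real_sqrt A hA.nonneg]
  exact CFC.sqrt_mul_sqrt_self A hA.nonneg

section Helpers

variable {d : ℕ}

lemma sqrt_congr {A B : Matrix (Fin d) (Fin d) ℂ} (hA : A.PosSemidef) (hB : B.PosSemidef)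
    (h : A = B) : hA.sqrt = hB.sqrt := by subst h; rfl

lemma unitary_hc {U : Matrix (Fin d) (Fin d) ℂ} (hU : U ∈ unitaryGroup (Fin d) ℂ) :
    Uᴴ * U = 1 := by
  rw [← star_eq_conjTranspose]; exact (Matrix.mem_unitaryGroup_iff').mp hU

lemma unitary_ch {U : Matrix (Fin d) (Fin d) ℂ} (hU : U ∈ unitaryGroup (Fin d) ℂ) :
    U * Uᴴ = 1 := by
  rw [← star_eq_conjTranspose]; exact (Matrix.mem_unitaryGroup_iff).mp hU

lemma star_mem' {U : Matrix (Fin d) (Fin d) ℂ} (hU : U ∈ unitaryGroup (Fin d) ℂ) :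
    Uᴴ ∈ unitaryGroup (Fin d) ℂ := by
  rw [← Matrix.star_eq_conjTranspose]; exact Unitary.star_mem hU

lemma trace_conj_diag {P : Matrix (Fin d) (Fin d) ℂ} (hP : P ∈ unitaryGroup (Fin d) ℂ)
    (g : Fin d → ℂ) : (P * diagonal g * Pᴴ).trace = ∑ i, g i := by
  rw [Matrix.trace_mul_cycle, unitary_hc hP, one_mul, Matrix.trace_diagonal]

lemma trace_sqrt' {N : Matrix (Fin d) (Fin d) ℂ} (hN : N.PosSemidef) :
    hN.sqrt.trace = ∑ i, (Real.sqrt (hN.1.eigenvalues i) : ℂ) := by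
  rw [Matrix.PosSemidef.sqrt, Matrix.trace_mul_cycle,
    show (star hN.1.eigenvectorUnitary.1 : Matrix (Fin d) (Fin d) ℂ) * hN.1.eigenvectorUnitary.1 = 1 from
      Unitary.coe_star_mul_self hN.1.eigenvectorUnitary, one_mul, Matrix.trace_diagonal]
  rfl

lemma conj_diag_posSemidef {P : Matrix (Fin d) (Fin d) ℂ} {f : Fin d → ℝ} (hf : ∀ i, 0 ≤ f i) :
    (P * diagonal (Complex.ofReal ∘ f) * Pᴴ).PosSemidef :=
  (Matrix.posSemidef_diagonal_iff.mpr fun i => by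
    simpa using Complex.zero_le_real.mpr (hf i)).mul_mul_conjTranspose_same P

lemma sqrt_conj_diag {P : Matrix (Fin d) (Fin d) ℂ} {f : Fin d → ℝ}
    (hP : P ∈ unitaryGroup (Fin d) ℂ) (hf : ∀ i, 0 ≤ f i)
    (h : (P * diagonal (Complex.ofReal ∘ f) * Pᴴ).PosSemidef) :
    h.sqrt = P * diagonal (Complex.ofReal ∘ Real.sqrt ∘ f) * Pᴴ := by
  refine (Matrix.PosSemidef.eq_sqrt_of_sq_eq (conj_diag_posSemidef fun i => Real.sqrt_nonneg _) h ?_).symm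
  rw [pow_two]
  calc P * diagonal (Complex.ofReal ∘ Real.sqrt ∘ f) * Pᴴ * (P * diagonal (Complex.ofReal ∘ Real.sqrt ∘ f) * Pᴴ)
      = P * (diagonal (Complex.ofReal ∘ Real.sqrt ∘ f) * (Pᴴ * P) * diagonal (Complex.ofReal ∘ Real.sqrt ∘ f)) * Pᴴ := by simp only [Matrix.mul_assoc]
    _ = P * diagonal ((Complex.ofReal ∘ Real.sqrt ∘ f) * (Complex.ofReal ∘ Real.sqrt ∘ f)) * Pᴴ := by
        rw [unitary_hc hP, Matrix.mul_one, diagonal_mul_diagonal]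
        rfl
    _ = P * diagonal (Complex.ofReal ∘ f) * Pᴴ := by
        have : (Complex.ofReal ∘ Real.sqrt ∘ f) * (Complex.ofReal ∘ Real.sqrt ∘ f)
            = Complex.ofReal ∘ f := by
          funext i
          simp only [Pi.mul_apply, Function.comp_apply]
          rw [← Complex.ofReal_mul, Real.mul_self_sqrt (hf i)]
        rw [this]

lemma perm_unitary {P : Matrix (Fin d) (Fin d) ℂ} (hP : P ∈ unitaryGroup (Fin d) ℂ)
    (σ : Equiv.Perm (Fin d)) : P.submatrix id ⇑σ ∈ unitaryGroup (Fin d) ℂ := by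
  rw [Matrix.mem_unitaryGroup_iff']
  ext i j
  have h2 : (Pᴴ * P) (σ i) (σ j) = (1 : Matrix (Fin d) (Fin d) ℂ) (σ i) (σ j) := by
    rw [unitary_hc hP]
  rw [Matrix.mul_apply] at h2
  simp only [Matrix.conjTranspose_apply] at h2
  calc (star (P.submatrix id ⇑σ) * P.submatrix id ⇑σ) i j
      = ∑ k, star (P k (σ i)) * P k (σ j) := by
        rw [Matrix.mul_apply]
        refine Finset.sum_congr rfl fun k _ => ?_
        rw [Matrix.star_apply, Matrix.submatrix_apply, Matrix.submatrix_apply]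
        rfl
    _ = (1 : Matrix (Fin d) (Fin d) ℂ) (σ i) (σ j) := h2
    _ = (1 : Matrix (Fin d) (Fin d) ℂ) i j := by
        simp [Matrix.one_apply]

lemma conj_perm (P : Matrix (Fin d) (Fin d) ℂ) (f : Fin d → ℝ) (σ : Equiv.Perm (Fin d)) :
    (P.submatrix id ⇑σ) * diagonal (Complex.ofReal ∘ (f ∘ ⇑σ)) * (P.submatrix id ⇑σ)ᴴ
      = P * diagonal (Complex.ofReal ∘ f) * Pᴴ := by
  have expand : ∀ (Q : Matrix (Fin d) (Fin d) ℂ) (g : Fin d → ℝ) (i j : Fin d),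
      (Q * diagonal (Complex.ofReal ∘ g) * Qᴴ) i j = ∑ l, Q i l * ((g l : ℂ) * star (Q j l)) := by
    intro Q g i j
    rw [Matrix.mul_apply]
    refine Finset.sum_congr rfl fun l _ => ?_
    rw [Matrix.mul_diagonal, Matrix.conjTranspose_apply]
    simp only [Function.comp_apply]
    ring
  ext i j
  rw [expand, expand]
  calc ∑ l, (P.submatrix id ⇑σ) i l * ((f (σ l) : ℂ) * star ((P.submatrix id ⇑σ) j l))
      = ∑ l, P i (σ l) * ((f (σ l) : ℂ) * star (P j (σ l))) := rfl
    _ = ∑ l, P i l * ((f l : ℂ) * star (P j l)) :=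
        Equiv.sum_comp σ (fun l => P i l * ((f l : ℂ) * star (P j l)))

lemma trace_diag (f g : Fin d → ℂ) (X Y : Matrix (Fin d) (Fin d) ℂ) :
    (diagonal f * X * diagonal g * Y).trace = ∑ k, ∑ l, f k * (X k l * (g l * Y l k)) := by
  rw [Matrix.trace]
  refine Finset.sum_congr rfl fun k _ => ?_
  rw [Matrix.diag, Matrix.mul_apply]
  refine Finset.sum_congr rfl fun l _ => ?_
  rw [Matrix.mul_diagonal, Matrix.diagonal_mul]
  ring

lemma trace_cyc (P Da U Q Db W : Matrix (Fin d) (Fin d) ℂ) :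
    ((P * Da * Pᴴ) * U * (Q * Db * Qᴴ) * W).trace
      = (Da * (Pᴴ * U * Q) * Db * (Qᴴ * (W * P))).trace := by
  rw [show (P * Da * Pᴴ) * U * (Q * Db * Qᴴ) * W
      = P * (Da * (Pᴴ * U * Q) * Db * (Qᴴ * W)) by simp only [Matrix.mul_assoc],
    Matrix.trace_mul_comm,
    show Da * (Pᴴ * U * Q) * Db * (Qᴴ * W) * P
      = Da * (Pᴴ * U * Q) * Db * (Qᴴ * (W * P)) by simp only [Matrix.mul_assoc]]

end Helpers

lemma ds_bound (d : ℕ) (a b : ℕ → ℝ) (ha : Antitone a) (hb : Antitone b)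
    (had : ∀ n, d ≤ n → a n = 0) (hbd : ∀ n, d ≤ n → b n = 0)
    (D : ℕ → ℕ → ℝ) (hD0 : ∀ k l, 0 ≤ D k l)
    (hrow : ∀ k, k < d → ∑ l ∈ Finset.range d, D k l = 1)
    (hcol : ∀ l, l < d → ∑ k ∈ Finset.range d, D k l = 1) :
    ∑ k ∈ Finset.range d, ∑ l ∈ Finset.range d, a k * (b l * D k l)
      ≤ ∑ k ∈ Finset.range d, a k * b k := by
  classical
  set R := Finset.range d with hR
  have ha0 : ∀ k, 0 ≤ a k := fun k => by
    have := ha (le_max_left k d); rw [had (max k d) (le_max_right _ _)] at this; linarith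
  have hb0 : ∀ k, 0 ≤ b k := fun k => by
    have := hb (le_max_left k d); rw [hbd (max k d) (le_max_right _ _)] at this; linarith
  have key : ∀ (c : ℕ → ℝ), Antitone c → (∀ n, d ≤ n → c n = 0) →
      ∀ k, c k = ∑ m ∈ R, if k ≤ m then c m - c (m+1) else 0 := by
    intro c hc hcd k
    by_cases hk : k < d
    · rw [← Finset.sum_filter]
      have hfil : R.filter (fun m => k ≤ m) = Finset.Ico k d := by
        ext m; simp [hR, Finset.mem_Ico, and_comm]
      rw [hfil, Finset.sum_Ico_eq_sub _ hk.le, Finset.sum_range_sub' c,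
        Finset.sum_range_sub' c, hcd d le_rfl]
      ring
    · rw [hcd k (not_lt.mp hk)]
      refine (Finset.sum_eq_zero fun m hm => ?_).symm
      rw [if_neg]
      exact fun h => hk (lt_of_le_of_lt h (Finset.mem_range.mp hm))
  have hcount : ∀ M, M < d → ∑ k ∈ R, (if k ≤ M then (1:ℝ) else 0) = M + 1 := by
    intro M hM
    rw [Finset.sum_boole]
    have : R.filter (fun k => k ≤ M) = Finset.range (M+1) := by
      ext k; simp [hR]; omega
    rw [this]; simp
  have hα0 : ∀ m, (0:ℝ) ≤ a m - a (m+1) := fun m => sub_nonneg.mpr (ha (Nat.le_succ m))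
  have hβ0 : ∀ n, (0:ℝ) ≤ b n - b (n+1) := fun n => sub_nonneg.mpr (hb (Nat.le_succ n))
  have hstep : ∀ p : ℕ × ℕ, a p.1 * (b p.2 * D p.1 p.2)
      = ∑ m ∈ R, ∑ n ∈ R, (if p.1 ≤ m then a m - a (m+1) else 0) *
          ((if p.2 ≤ n then b n - b (n+1) else 0) * D p.1 p.2) := by
    intro p
    have h1 : ∀ m, ∑ n ∈ R, (if p.1 ≤ m then a m - a (m+1) else 0) *
          ((if p.2 ≤ n then b n - b (n+1) else 0) * D p.1 p.2)
        = (if p.1 ≤ m then a m - a (m+1) else 0) *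
          ((∑ n ∈ R, if p.2 ≤ n then b n - b (n+1) else 0) * D p.1 p.2) := by
      intro m; rw [Finset.sum_mul, Finset.mul_sum]
    simp_rw [h1]
    rw [← Finset.sum_mul, ← key a ha had p.1, ← key b hb hbd p.2]
  have hLHS : ∑ k ∈ R, ∑ l ∈ R, a k * (b l * D k l)
      = ∑ q ∈ R ×ˢ R, ∑ p ∈ R ×ˢ R,
          (if p.1 ≤ q.1 then a q.1 - a (q.1+1) else 0) *
          ((if p.2 ≤ q.2 then b q.2 - b (q.2+1) else 0) * D p.1 p.2) := by
    calc ∑ k ∈ R, ∑ l ∈ R, a k * (b l * D k l)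
        = ∑ p ∈ R ×ˢ R, a p.1 * (b p.2 * D p.1 p.2) := by rw [← Finset.sum_product']
      _ = ∑ p ∈ R ×ˢ R, ∑ q ∈ R ×ˢ R,
            (if p.1 ≤ q.1 then a q.1 - a (q.1+1) else 0) *
            ((if p.2 ≤ q.2 then b q.2 - b (q.2+1) else 0) * D p.1 p.2) := by
          refine Finset.sum_congr rfl fun p _ => ?_
          rw [hstep p, ← Finset.sum_product']
      _ = _ := Finset.sum_comm
  have hRHS : ∑ k ∈ R, a k * b k
      = ∑ q ∈ R ×ˢ R, ∑ k ∈ R,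
          (if k ≤ q.1 then a q.1 - a (q.1+1) else 0) *
          (if k ≤ q.2 then b q.2 - b (q.2+1) else 0) := by
    rw [Finset.sum_comm]
    refine Finset.sum_congr rfl fun k _ => ?_
    rw [key a ha had k, key b hb hbd k, Finset.sum_mul_sum, ← Finset.sum_product']
  rw [hLHS, hRHS]
  refine Finset.sum_le_sum fun q hq => ?_
  obtain ⟨hq1', hq2'⟩ := Finset.mem_product.mp hq
  have hq1 : q.1 < d := Finset.mem_range.mp hq1'
  have hq2 : q.2 < d := Finset.mem_range.mp hq2'
  have hT : ∑ p ∈ R ×ˢ R,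
        (if p.1 ≤ q.1 then a q.1 - a (q.1+1) else 0) *
        ((if p.2 ≤ q.2 then b q.2 - b (q.2+1) else 0) * D p.1 p.2)
      = (a q.1 - a (q.1+1)) * ((b q.2 - b (q.2+1)) * (∑ k ∈ R, ∑ l ∈ R,
          (if k ≤ q.1 then (1:ℝ) else 0) * ((if l ≤ q.2 then (1:ℝ) else 0) * D k l))) := by
    rw [Finset.sum_product, Finset.mul_sum, Finset.mul_sum]
    refine Finset.sum_congr rfl fun k hk => ?_
    rw [Finset.mul_sum, Finset.mul_sum]
    refine Finset.sum_congr rfl fun l hl => ?_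
    split_ifs <;> ring
  have hN : ∑ k ∈ R, (if k ≤ q.1 then a q.1 - a (q.1+1) else 0) *
        (if k ≤ q.2 then b q.2 - b (q.2+1) else 0)
      = (a q.1 - a (q.1+1)) * ((b q.2 - b (q.2+1)) *
          (∑ k ∈ R, (if k ≤ q.1 then (1:ℝ) else 0) * (if k ≤ q.2 then (1:ℝ) else 0))) := by
    rw [Finset.mul_sum, Finset.mul_sum]
    refine Finset.sum_congr rfl fun k hk => ?_
    split_ifs <;> ring
  rw [hT, hN]
  refine mul_le_mul_of_nonneg_left (mul_le_mul_of_nonneg_left ?_ (hβ0 _)) (hα0 _)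
  have hNval : ∑ k ∈ R, (if k ≤ q.1 then (1:ℝ) else 0) * (if k ≤ q.2 then (1:ℝ) else 0)
      = ((min q.1 q.2 : ℕ) : ℝ) + 1 := by
    have h : ∀ k, (if k ≤ q.1 then (1:ℝ) else 0) * (if k ≤ q.2 then (1:ℝ) else 0)
        = (if k ≤ min q.1 q.2 then (1:ℝ) else 0) := by
      intro k
      by_cases h1 : k ≤ q.1 <;> by_cases h2 : k ≤ q.2 <;> simp [h1, h2, le_min_iff]
    simp_rw [h]
    exact hcount _ (lt_of_le_of_lt (min_le_left _ _) hq1)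
  rw [hNval]
  have hT1 : ∑ k ∈ R, ∑ l ∈ R, (if k ≤ q.1 then (1:ℝ) else 0) *
        ((if l ≤ q.2 then (1:ℝ) else 0) * D k l) ≤ (q.1:ℝ) + 1 := by
    calc ∑ k ∈ R, ∑ l ∈ R, (if k ≤ q.1 then (1:ℝ) else 0) * ((if l ≤ q.2 then (1:ℝ) else 0) * D k l)
        ≤ ∑ k ∈ R, (if k ≤ q.1 then (1:ℝ) else 0) := by
          refine Finset.sum_le_sum fun k hk => ?_
          rw [← Finset.mul_sum]
          by_cases h : k ≤ q.1
          · simp only [if_pos h, one_mul]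
            calc ∑ l ∈ R, (if l ≤ q.2 then (1:ℝ) else 0) * D k l
                ≤ ∑ l ∈ R, D k l := by
                  refine Finset.sum_le_sum fun l hl => ?_
                  split_ifs <;> simp [hD0]
              _ = 1 := hrow k (Finset.mem_range.mp hk)
          · simp only [if_neg h, zero_mul, le_refl]
      _ = (q.1:ℝ) + 1 := hcount _ hq1
  have hT2 : ∑ k ∈ R, ∑ l ∈ R, (if k ≤ q.1 then (1:ℝ) else 0) *
        ((if l ≤ q.2 then (1:ℝ) else 0) * D k l) ≤ (q.2:ℝ) + 1 := by
    rw [Finset.sum_comm]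
    calc ∑ l ∈ R, ∑ k ∈ R, (if k ≤ q.1 then (1:ℝ) else 0) * ((if l ≤ q.2 then (1:ℝ) else 0) * D k l)
        ≤ ∑ l ∈ R, (if l ≤ q.2 then (1:ℝ) else 0) := by
          refine Finset.sum_le_sum fun l hl => ?_
          have h' : ∀ k, (if k ≤ q.1 then (1:ℝ) else 0) * ((if l ≤ q.2 then (1:ℝ) else 0) * D k l)
              = (if l ≤ q.2 then (1:ℝ) else 0) * ((if k ≤ q.1 then (1:ℝ) else 0) * D k l) := by
            intro k; ring
          simp_rw [h']
          rw [← Finset.mul_sum]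
          by_cases h : l ≤ q.2
          · simp only [if_pos h, one_mul]
            calc ∑ k ∈ R, (if k ≤ q.1 then (1:ℝ) else 0) * D k l
                ≤ ∑ k ∈ R, D k l := by
                  refine Finset.sum_le_sum fun k hk => ?_
                  split_ifs <;> simp [hD0]
              _ = 1 := hcol l (Finset.mem_range.mp hl)
          · simp only [if_neg h, zero_mul, le_refl]
      _ = (q.2:ℝ) + 1 := hcount _ hq2
  rcases le_total q.1 q.2 with h | h
  · rw [min_eq_left h]; exact hT1
  · rw [min_eq_right h]; exact hT2

section LA
variable {d : ℕ}
lemma lemA (M : Matrix (Fin d) (Fin d) ℂ) (h : (M * Mᴴ).PosSemidef) :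
    ∃ V ∈ Matrix.unitaryGroup (Fin d) ℂ, (M * V).trace = h.sqrt.trace := by
  classical
  set W : Matrix (Fin d) (Fin d) ℂ := h.1.eigenvectorUnitary.1 with hW
  have hWmem : W ∈ Matrix.unitaryGroup (Fin d) ℂ := h.1.eigenvectorUnitary.2
  set ν : Fin d → ℝ := h.1.eigenvalues with hν
  have hν0 : ∀ i, 0 ≤ ν i := h.eigenvalues_nonneg
  have hdiag : Wᴴ * (M * Mᴴ) * W = diagonal (Complex.ofReal ∘ ν) := by
    have := h.1.conjStarAlgAut_star_eigenvectorUnitary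
    rw [Unitary.conjStarAlgAut_apply] at this
    rw [← Matrix.star_eq_conjTranspose]
    simpa using this
  set K : Matrix (Fin d) (Fin d) ℂ := Wᴴ * M with hK
  have hKK : K * Kᴴ = diagonal (Complex.ofReal ∘ ν) := by
    rw [hK, Matrix.conjTranspose_mul, Matrix.conjTranspose_conjTranspose, ← hdiag]
    simp only [Matrix.mul_assoc]
  have hKKentry : ∀ i j, ∑ l, K i l * (starRingEnd ℂ) (K j l) = if i = j then (ν i : ℂ) else 0 := by
    intro i j
    have h2 : (K * Kᴴ) i j = diagonal (Complex.ofReal ∘ ν) i j := by rw [hKK]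
    simpa [Matrix.mul_apply, Matrix.conjTranspose_apply, Matrix.diagonal_apply,
      Complex.star_def] using h2
  -- normalized rows
  set v : Fin d → EuclideanSpace ℂ (Fin d) := fun i => WithLp.toLp 2 (fun l => ((Real.sqrt (ν i) : ℂ))⁻¹ * K i l) with hv
  have hortho : Orthonormal ℂ (Set.restrict {i | ν i ≠ 0} v) := by
    rw [orthonormal_iff_ite]
    rintro ⟨i, hi⟩ ⟨j, hj⟩
    show inner ℂ (v i) (v j) = _
    rw [PiLp.inner_apply]
    simp only [RCLike.inner_apply]
    have hterm : ∀ l, v j l * (starRingEnd ℂ) (v i l)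
        = ((Real.sqrt (ν i) : ℂ))⁻¹ * ((Real.sqrt (ν j) : ℂ))⁻¹ * (K j l * (starRingEnd ℂ) (K i l)) := by
      intro l
      simp only [hv]
      rw [map_mul (starRingEnd ℂ), map_inv₀, Complex.conj_ofReal]
      ring
    rw [Finset.sum_congr rfl (fun l _ => hterm l), ← Finset.mul_sum, hKKentry j i]
    by_cases hij : i = j
    · subst hij
      simp only [if_pos rfl]
      have hs : (Real.sqrt (ν i) : ℂ) ≠ 0 := by
        simpa using Real.sqrt_ne_zero'.mpr (lt_of_le_of_ne (hν0 i) (Ne.symm hi))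
      field_simp
      rw [← Complex.ofReal_pow, Real.sq_sqrt (hν0 i)]
      simp
    · rw [if_neg (fun hh : j = i => hij hh.symm), mul_zero, if_neg (by simp [Subtype.ext_iff, hij])]
  obtain ⟨bb, hbb⟩ := hortho.exists_orthonormalBasis_extension_of_card_eq
      (by simp)
  set C : Matrix (Fin d) (Fin d) ℂ := Matrix.of (fun i l => bb i l) with hC
  have hbbortho := bb.orthonormal
  rw [orthonormal_iff_ite] at hbbortho
  have hCmem : C ∈ Matrix.unitaryGroup (Fin d) ℂ := by
    rw [Matrix.mem_unitaryGroup_iff]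
    ext i j
    have hinner := hbbortho j i
    rw [PiLp.inner_apply] at hinner
    simp only [RCLike.inner_apply] at hinner
    have hcc : (C * star C) i j = ∑ l, bb i l * (starRingEnd ℂ) (bb j l) := by
      rw [Matrix.mul_apply]
      rfl
    rw [hcc, hinner]
    split_ifs with hij
    · subst hij; simp
    · simp [Matrix.one_apply, Ne.symm hij]
  have hWW : W * Wᴴ = 1 := by
    rw [← Matrix.star_eq_conjTranspose]
    exact (Matrix.mem_unitaryGroup_iff).mp hWmem
  have hWW' : Wᴴ * W = 1 := by
    rw [← Matrix.star_eq_conjTranspose]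
    exact (Matrix.mem_unitaryGroup_iff').mp hWmem
  refine ⟨Cᴴ * Wᴴ, ?_, ?_⟩
  · have h1 : star C ∈ Matrix.unitaryGroup (Fin d) ℂ := Unitary.star_mem hCmem
    have h2 : star W ∈ Matrix.unitaryGroup (Fin d) ℂ := Unitary.star_mem hWmem
    rw [Matrix.star_eq_conjTranspose] at h1 h2
    exact mul_mem h1 h2
  · have hMW : M = W * K := by
      rw [hK, ← Matrix.mul_assoc, hWW, one_mul]
    have hrowtr : ∀ i, ∑ l, K i l * (starRingEnd ℂ) (C i l) = (Real.sqrt (ν i) : ℂ) := by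
      intro i
      by_cases hi : ν i ≠ 0
      · have hbi : bb i = v i := hbb i hi
        have hCil : ∀ l, C i l = ((Real.sqrt (ν i) : ℂ))⁻¹ * K i l := by
          intro l
          show bb i l = _
          rw [hbi]
        have hs : (Real.sqrt (ν i) : ℂ) ≠ 0 := by
          simpa using Real.sqrt_ne_zero'.mpr (lt_of_le_of_ne (hν0 i) (Ne.symm hi))
        have hterm : ∀ l, K i l * (starRingEnd ℂ) (C i l)
            = ((Real.sqrt (ν i) : ℂ))⁻¹ * (K i l * (starRingEnd ℂ) (K i l)) := by
          intro l
          rw [hCil l, map_mul (starRingEnd ℂ) (((Real.sqrt (ν i) : ℂ))⁻¹) (K i l), map_inv₀, Complex.conj_ofReal]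
          ring
        rw [Finset.sum_congr rfl (fun l _ => hterm l), ← Finset.mul_sum, hKKentry i i,
          if_pos rfl]
        field_simp
        rw [← Complex.ofReal_pow, Real.sq_sqrt (hν0 i)]
      · push_neg at hi
        have hK0 : ∀ l, K i l = 0 := by
          have h0 := hKKentry i i
          rw [if_pos rfl, hi, Complex.ofReal_zero] at h0
          have h1 : ∀ l : Fin d, K i l * (starRingEnd ℂ) (K i l) = (Complex.normSq (K i l) : ℂ) := by
            intro l; rw [Complex.mul_conj]
          rw [Finset.sum_congr rfl (fun l _ => h1 l)] at h0
          rw [← Complex.ofReal_sum] at h0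
          have h2 : ∑ l, Complex.normSq (K i l) = 0 := by exact_mod_cast h0
          intro l
          have := (Finset.sum_eq_zero_iff_of_nonneg (fun l _ => Complex.normSq_nonneg (K i l))).mp h2 l (Finset.mem_univ l)
          exact Complex.normSq_eq_zero.mp this
        simp [hK0, hi]
    rw [trace_sqrt' h]
    calc (M * (Cᴴ * Wᴴ)).trace = (W * (K * Cᴴ) * Wᴴ).trace := by
          rw [hMW]; simp only [Matrix.mul_assoc]
      _ = (Wᴴ * W * (K * Cᴴ)).trace := Matrix.trace_mul_cycle W (K * Cᴴ) Wᴴ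
      _ = (K * Cᴴ).trace := by rw [hWW', one_mul]
      _ = ∑ i, (Real.sqrt (ν i) : ℂ) := by
          rw [Matrix.trace]
          refine Finset.sum_congr rfl fun i _ => ?_
          rw [Matrix.diag]
          rw [Matrix.mul_apply]
          rw [← hrowtr i]
          refine Finset.sum_congr rfl fun l _ => ?_
          rw [Matrix.conjTranspose_apply, Complex.star_def]

end LA

lemma row_sum_one {d : ℕ} {G : Matrix (Fin d) (Fin d) ℂ} (hG : G ∈ unitaryGroup (Fin d) ℂ)
    (k : Fin d) : ∑ l, Complex.normSq (G k l) = 1 := by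
  have h1 : (G * Gᴴ) k k = (1 : Matrix (Fin d) (Fin d) ℂ) k k := by rw [unitary_ch hG]
  rw [Matrix.mul_apply] at h1
  simp only [Matrix.conjTranspose_apply, Complex.star_def, Matrix.one_apply_eq] at h1
  have h2 : ∀ l, G k l * (starRingEnd ℂ) (G k l) = (Complex.normSq (G k l) : ℂ) :=
    fun l => Complex.mul_conj _
  rw [Finset.sum_congr rfl (fun l _ => h2 l), ← Complex.ofReal_sum] at h1
  exact_mod_cast h1

lemma col_sum_one {d : ℕ} {G : Matrix (Fin d) (Fin d) ℂ} (hG : G ∈ unitaryGroup (Fin d) ℂ)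
    (l : Fin d) : ∑ k, Complex.normSq (G k l) = 1 := by
  have h1 : (Gᴴ * G) l l = (1 : Matrix (Fin d) (Fin d) ℂ) l l := by rw [unitary_hc hG]
  rw [Matrix.mul_apply] at h1
  simp only [Matrix.conjTranspose_apply, Complex.star_def, Matrix.one_apply_eq] at h1
  have h2 : ∀ k, (starRingEnd ℂ) (G k l) * G k l = (Complex.normSq (G k l) : ℂ) :=
    fun k => by rw [mul_comm, Complex.mul_conj]
  rw [Finset.sum_congr rfl (fun k _ => h2 k), ← Complex.ofReal_sum] at h1
  exact_mod_cast h1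

lemma lemB {d : ℕ} (a b : Fin d → ℝ) (ha : Antitone a) (hb : Antitone b)
    (ha0 : ∀ i, 0 ≤ a i) (hb0 : ∀ i, 0 ≤ b i) (σ τ : Equiv.Perm (Fin d))
    (G H : Matrix (Fin d) (Fin d) ℂ)
    (hG : G ∈ Matrix.unitaryGroup (Fin d) ℂ) (hH : H ∈ Matrix.unitaryGroup (Fin d) ℂ) :
    (∑ k, ∑ l, ((a (σ k) : ℂ) * (G k l * ((b (τ l) : ℂ) * H l k)))).re
      ≤ ∑ i, a i * b i := by
  classical
  -- the doubly stochastic bound, for an arbitrary doubly stochastic D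
  have main : ∀ (D : Fin d → Fin d → ℝ), (∀ k l, 0 ≤ D k l) → (∀ k, ∑ l, D k l = 1) →
      (∀ l, ∑ k, D k l = 1) →
      ∑ k, ∑ l, a (σ k) * (b (τ l) * D k l) ≤ ∑ i, a i * b i := by
    intro D hD0 hDrow hDcol
    set F : Fin d → Fin d → ℝ := fun k l => D (σ.symm k) (τ.symm l) with hF
    have hperm : ∑ k, ∑ l, a (σ k) * (b (τ l) * D k l) = ∑ k, ∑ l, a k * (b l * F k l) := by
      calc ∑ k, ∑ l, a (σ k) * (b (τ l) * D k l)
          = ∑ k, ∑ l, a (σ k) * (b (τ l) * F (σ k) (τ l)) := by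
            refine Finset.sum_congr rfl fun k _ => Finset.sum_congr rfl fun l _ => ?_
            simp [hF]
        _ = ∑ k, ∑ l, a (σ k) * (b l * F (σ k) l) := by
            refine Finset.sum_congr rfl fun k _ => ?_
            exact Equiv.sum_comp τ (fun l => a (σ k) * (b l * F (σ k) l))
        _ = ∑ k, ∑ l, a k * (b l * F k l) :=
            Equiv.sum_comp σ (fun k => ∑ l, a k * (b l * F k l))
    rw [hperm]
    set aN : ℕ → ℝ := fun n => if h : n < d then a ⟨n, h⟩ else 0 with haN
    set bN : ℕ → ℝ := fun n => if h : n < d then b ⟨n, h⟩ else 0 with hbN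
    set DN : ℕ → ℕ → ℝ := fun n m => if h : n < d ∧ m < d then F ⟨n, h.1⟩ ⟨m, h.2⟩ else 0 with hDN
    have hFrow : ∀ k, ∑ l, F k l = 1 := fun k =>
      (Equiv.sum_comp τ.symm (fun l => D (σ.symm k) l)).trans (hDrow _)
    have hFcol : ∀ l, ∑ k, F k l = 1 := fun l =>
      (Equiv.sum_comp σ.symm (fun k => D k (τ.symm l))).trans (hDcol _)
    have hanti : ∀ (c : Fin d → ℝ), Antitone c → (∀ i, 0 ≤ c i) →
        Antitone (fun n => if h : n < d then c ⟨n, h⟩ else 0) := by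
      intro c hc hc0 m n hmn
      dsimp only
      by_cases hn : n < d
      · rw [dif_pos hn, dif_pos (lt_of_le_of_lt hmn hn)]
        exact hc (by simpa using hmn)
      · rw [dif_neg hn]
        by_cases hm : m < d
        · rw [dif_pos hm]; exact hc0 _
        · rw [dif_neg hm]
    have hds := ds_bound d aN bN (hanti a ha ha0) (hanti b hb hb0)
      (fun n hn => by rw [haN]; exact dif_neg (not_lt.mpr hn))
      (fun n hn => by rw [hbN]; exact dif_neg (not_lt.mpr hn))
      DN
      (fun k l => by rw [hDN]; dsimp only; split_ifs; exacts [hD0 _ _, le_rfl])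
      (fun k hk => by
        rw [← Fin.sum_univ_eq_sum_range (fun m => DN k m) d]
        rw [show ∑ i : Fin d, DN k ↑i = ∑ i : Fin d, F ⟨k, hk⟩ i from
          Finset.sum_congr rfl fun i _ => by simp [hDN, hk, i.isLt]]
        exact hFrow _)
      (fun l hl => by
        rw [← Fin.sum_univ_eq_sum_range (fun n => DN n l) d]
        rw [show ∑ i : Fin d, DN ↑i l = ∑ i : Fin d, F i ⟨l, hl⟩ from
          Finset.sum_congr rfl fun i _ => by simp [hDN, hl, i.isLt]]
        exact hFcol _)
    have lhs_eq : ∑ k ∈ Finset.range d, ∑ l ∈ Finset.range d, aN k * (bN l * DN k l)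
        = ∑ k : Fin d, ∑ l : Fin d, a k * (b l * F k l) := by
      rw [← Fin.sum_univ_eq_sum_range (fun n => ∑ l ∈ Finset.range d, aN n * (bN l * DN n l)) d]
      refine Finset.sum_congr rfl fun k _ => ?_
      rw [← Fin.sum_univ_eq_sum_range (fun m => aN ↑k * (bN m * DN ↑k m)) d]
      refine Finset.sum_congr rfl fun l _ => ?_
      simp [haN, hbN, hDN, k.isLt, l.isLt]
    have rhs_eq : ∑ k ∈ Finset.range d, aN k * bN k = ∑ i : Fin d, a i * b i := by
      rw [← Fin.sum_univ_eq_sum_range (fun n => aN n * bN n) d]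
      refine Finset.sum_congr rfl fun k _ => ?_
      simp [haN, hbN, k.isLt]
    rw [lhs_eq, rhs_eq] at hds
    exact hds
  -- termwise bound
  have key1 : ∀ k l : Fin d, ((a (σ k) : ℂ) * (G k l * ((b (τ l) : ℂ) * H l k))).re
      ≤ a (σ k) * (b (τ l) * ((Complex.normSq (G k l) + Complex.normSq (H l k))/2)) := by
    intro k l
    rw [Complex.re_ofReal_mul]
    have h1 := Complex.re_le_norm (G k l * ((b (τ l) : ℂ) * H l k))
    have habs : ‖G k l * ((b (τ l) : ℂ) * H l k)‖
        = ‖G k l‖ * (b (τ l) * ‖H l k‖) := by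
      rw [norm_mul (G k l), norm_mul ((b (τ l) : ℂ)), Complex.norm_real, Real.norm_eq_abs,
        abs_of_nonneg (hb0 _)]
    have h2 : ‖G k l‖ * ‖H l k‖
        ≤ (Complex.normSq (G k l) + Complex.normSq (H l k))/2 := by
      have e1 : Complex.normSq (G k l) = ‖G k l‖^2 := (Complex.sq_norm _).symm
      have e2 : Complex.normSq (H l k) = ‖H l k‖^2 := (Complex.sq_norm _).symm
      nlinarith [sq_nonneg (‖G k l‖ - ‖H l k‖)]
    calc a (σ k) * (G k l * ((b (τ l) : ℂ) * H l k)).re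
        ≤ a (σ k) * (‖G k l‖ * (b (τ l) * ‖H l k‖)) :=
          mul_le_mul_of_nonneg_left (habs ▸ h1) (ha0 _)
      _ = a (σ k) * (b (τ l) * (‖G k l‖ * ‖H l k‖)) := by ring
      _ ≤ a (σ k) * (b (τ l) * ((Complex.normSq (G k l) + Complex.normSq (H l k))/2)) :=
          mul_le_mul_of_nonneg_left (mul_le_mul_of_nonneg_left h2 (hb0 _)) (ha0 _)
  have hsplit : ∀ k l : Fin d,
      a (σ k) * (b (τ l) * ((Complex.normSq (G k l) + Complex.normSq (H l k))/2))
      = (a (σ k) * (b (τ l) * Complex.normSq (G k l)))/2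
        + (a (σ k) * (b (τ l) * Complex.normSq (H l k)))/2 := by
    intro k l; ring
  have m1 := main (fun k l => Complex.normSq (G k l)) (fun k l => Complex.normSq_nonneg _)
    (row_sum_one hG) (col_sum_one hG)
  have m2 := main (fun k l => Complex.normSq (H l k)) (fun k l => Complex.normSq_nonneg _)
    (fun k => col_sum_one hH k) (fun l => row_sum_one hH l)
  calc (∑ k, ∑ l, ((a (σ k) : ℂ) * (G k l * ((b (τ l) : ℂ) * H l k)))).re
      = ∑ k, ∑ l, ((a (σ k) : ℂ) * (G k l * ((b (τ l) : ℂ) * H l k))).re := by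
        rw [Complex.re_sum]
        exact Finset.sum_congr rfl fun k _ => by rw [Complex.re_sum]
    _ ≤ ∑ k, ∑ l, a (σ k) * (b (τ l) * ((Complex.normSq (G k l) + Complex.normSq (H l k))/2)) :=
        Finset.sum_le_sum fun k _ => Finset.sum_le_sum fun l _ => key1 k l
    _ = (∑ k, ∑ l, a (σ k) * (b (τ l) * Complex.normSq (G k l)))/2
        + (∑ k, ∑ l, a (σ k) * (b (τ l) * Complex.normSq (H l k)))/2 := by
        simp_rw [hsplit, Finset.sum_add_distrib, Finset.sum_div]
    _ ≤ (∑ i, a i * b i)/2 + (∑ i, a i * b i)/2 := by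
        have := m1; have := m2; gcongr
    _ = ∑ i, a i * b i := by ring

set_option maxHeartbeats 2000000 in
/-- the supremum over unitaries `U` of `F(R, U T U*)` is
`(∑ i, √(λ_i(R) λ_i(T)))²` for the nonincreasingly ordered eigenvalues,
and it is attained. -/
theorem stmt_0 (d : ℕ) (hd : 1 ≤ d) (R T : Matrix (Fin d) (Fin d) ℂ)
    (hR : R.PosSemidef) (hT : T.PosSemidef)
    (lR lT : Fin d → ℝ) (hlR : Antitone lR) (hlT : Antitone lT)
    (hlRe : ∃ σ : Equiv.Perm (Fin d), lR = hR.1.eigenvalues ∘ σ)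
    (hlTe : ∃ σ : Equiv.Perm (Fin d), lT = hT.1.eigenvalues ∘ σ) :
    IsGreatest
      {x : ℝ | ∃ U ∈ Matrix.unitaryGroup (Fin d) ℂ, x = fid R (U * T * Uᴴ)}
      ((∑ i, Real.sqrt (lR i * lT i)) ^ 2) := by
  classical
  obtain ⟨σR, hσR⟩ := hlRe
  obtain ⟨σT, hσT⟩ := hlTe
  have hlR0 : ∀ i, 0 ≤ lR i := fun i => by rw [hσR]; exact hR.eigenvalues_nonneg _
  have hlT0 : ∀ i, 0 ≤ lT i := fun i => by rw [hσT]; exact hT.eigenvalues_nonneg _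
  have hcsplit : ∑ i, Real.sqrt (lR i * lT i) = ∑ i, Real.sqrt (lR i) * Real.sqrt (lT i) :=
    Finset.sum_congr rfl fun i _ => Real.sqrt_mul (hlR0 i) _
  constructor
  · -- attainment
    set P' := (hR.1.eigenvectorUnitary.1).submatrix id ⇑σR with hP'
    set Q' := (hT.1.eigenvectorUnitary.1).submatrix id ⇑σT with hQ'
    have hP'mem := perm_unitary hR.1.eigenvectorUnitary.2 σR
    have hQ'mem := perm_unitary hT.1.eigenvectorUnitary.2 σT
    have hRdec : R = P' * diagonal (Complex.ofReal ∘ lR) * P'ᴴ := by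
      rw [hσR, hP', conj_perm]
      have := hR.1.spectral_theorem
      rw [Unitary.conjStarAlgAut_apply] at this
      rwa [Matrix.star_eq_conjTranspose] at this
    have hTdec : T = Q' * diagonal (Complex.ofReal ∘ lT) * Q'ᴴ := by
      rw [hσT, hQ', conj_perm]
      have := hT.1.spectral_theorem
      rw [Unitary.conjStarAlgAut_apply] at this
      rwa [Matrix.star_eq_conjTranspose] at this
    set U₀ := P' * Q'ᴴ with hU₀
    have hU₀mem : U₀ ∈ unitaryGroup (Fin d) ℂ := mul_mem hP'mem (star_mem' hQ'mem)
    have hS0 : U₀ * T * U₀ᴴ = P' * diagonal (Complex.ofReal ∘ lT) * P'ᴴ := by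
      rw [hU₀]
      nth_rewrite 1 [hTdec]
      calc P' * Q'ᴴ * (Q' * diagonal (Complex.ofReal ∘ lT) * Q'ᴴ) * (P' * Q'ᴴ)ᴴ
          = P' * ((Q'ᴴ * Q') * (diagonal (Complex.ofReal ∘ lT) * ((Q'ᴴ * Q') * P'ᴴ))) := by
            simp only [Matrix.conjTranspose_mul, Matrix.conjTranspose_conjTranspose,
              Matrix.mul_assoc]
        _ = P' * diagonal (Complex.ofReal ∘ lT) * P'ᴴ := by
            rw [unitary_hc hQ'mem, one_mul, one_mul, ← Matrix.mul_assoc]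
    have hS0psd : (U₀ * T * U₀ᴴ).PosSemidef := hT.mul_mul_conjTranspose_same U₀
    refine ⟨U₀, hU₀mem, ?_⟩
    have hsq0 : (hR.sqrt * (U₀ * T * U₀ᴴ) * hR.sqrt).PosSemidef := by
      have h2 := hS0psd.mul_mul_conjTranspose_same hR.sqrt
      rwa [hR.posSemidef_sqrt.isHermitian.eq] at h2
    have hfid : fid R (U₀ * T * U₀ᴴ) = ((hsq0.sqrt).trace).re ^ 2 := by
      rw [fid, dif_pos ⟨hR, hS0psd⟩]
    rw [hfid]
    have hRpsd' : (P' * diagonal (Complex.ofReal ∘ lR) * P'ᴴ).PosSemidef := by rw [← hRdec]; exact hR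
    have hAeq : hR.sqrt = P' * diagonal (Complex.ofReal ∘ Real.sqrt ∘ lR) * P'ᴴ := by
      rw [sqrt_congr hR hRpsd' hRdec, sqrt_conj_diag hP'mem hlR0 hRpsd']
    have hcol : ∀ X : Matrix (Fin d) (Fin d) ℂ, P'ᴴ * (P' * X) = X := fun X => by
      rw [← Matrix.mul_assoc, unitary_hc hP'mem, one_mul]
    have hdd : (diagonal (Complex.ofReal ∘ Real.sqrt ∘ lR) : Matrix (Fin d) (Fin d) ℂ) *
          (diagonal (Complex.ofReal ∘ lT) * diagonal (Complex.ofReal ∘ Real.sqrt ∘ lR))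
        = diagonal (Complex.ofReal ∘ fun i => lR i * lT i) := by
      rw [show (diagonal (Complex.ofReal ∘ lT) : Matrix (Fin d) (Fin d) ℂ) *
            diagonal (Complex.ofReal ∘ Real.sqrt ∘ lR)
          = diagonal ((Complex.ofReal ∘ lT) * (Complex.ofReal ∘ Real.sqrt ∘ lR)) from
          diagonal_mul_diagonal _ _,
        diagonal_mul_diagonal]
      refine congrArg diagonal (funext fun i => ?_)
      simp only [Pi.mul_apply, Function.comp_apply]
      rw [← Complex.ofReal_mul, ← Complex.ofReal_mul]
      congr 1
      linear_combination lT i * Real.mul_self_sqrt (hlR0 i)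
    have hprod : hR.sqrt * (U₀ * T * U₀ᴴ) * hR.sqrt
        = P' * diagonal (Complex.ofReal ∘ fun i => lR i * lT i) * P'ᴴ := by
      rw [hAeq, hS0]
      calc (P' * diagonal (Complex.ofReal ∘ Real.sqrt ∘ lR) * P'ᴴ) *
            (P' * diagonal (Complex.ofReal ∘ lT) * P'ᴴ) *
            (P' * diagonal (Complex.ofReal ∘ Real.sqrt ∘ lR) * P'ᴴ)
          = P' * (diagonal (Complex.ofReal ∘ Real.sqrt ∘ lR) * (P'ᴴ * (P' *
              (diagonal (Complex.ofReal ∘ lT) * (P'ᴴ * (P' *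
              (diagonal (Complex.ofReal ∘ Real.sqrt ∘ lR) * P'ᴴ))))))) := by
            simp only [Matrix.mul_assoc]
        _ = P' * (diagonal (Complex.ofReal ∘ Real.sqrt ∘ lR) *
              (diagonal (Complex.ofReal ∘ lT) *
              (diagonal (Complex.ofReal ∘ Real.sqrt ∘ lR) * P'ᴴ))) := by
            rw [hcol, hcol]
        _ = P' * diagonal (Complex.ofReal ∘ fun i => lR i * lT i) * P'ᴴ := by
            rw [show (diagonal (Complex.ofReal ∘ Real.sqrt ∘ lR) : Matrix (Fin d) (Fin d) ℂ) *
                  (diagonal (Complex.ofReal ∘ lT) *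
                  (diagonal (Complex.ofReal ∘ Real.sqrt ∘ lR) * P'ᴴ))
                = (diagonal (Complex.ofReal ∘ Real.sqrt ∘ lR) *
                  (diagonal (Complex.ofReal ∘ lT) *
                   diagonal (Complex.ofReal ∘ Real.sqrt ∘ lR))) * P'ᴴ by
                simp only [Matrix.mul_assoc], hdd, ← Matrix.mul_assoc]
    have hlRT0 : ∀ i, 0 ≤ lR i * lT i := fun i => mul_nonneg (hlR0 i) (hlT0 i)
    have hpsd2 : (P' * diagonal (Complex.ofReal ∘ fun i => lR i * lT i) * P'ᴴ).PosSemidef :=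
      conj_diag_posSemidef hlRT0
    have hsqrt0 : hsq0.sqrt
        = P' * diagonal (Complex.ofReal ∘ Real.sqrt ∘ fun i => lR i * lT i) * P'ᴴ := by
      rw [sqrt_congr hsq0 hpsd2 hprod, sqrt_conj_diag hP'mem hlRT0 hpsd2]
    rw [hsqrt0, trace_conj_diag hP'mem]
    congr 1
    rw [Complex.re_sum]
    exact Finset.sum_congr rfl fun i _ => by simp
  · -- upper bound
    rintro x ⟨U, hU, rfl⟩
    have hS : (U * T * Uᴴ).PosSemidef := hT.mul_mul_conjTranspose_same U
    have hsq : (hR.sqrt * (U * T * Uᴴ) * hR.sqrt).PosSemidef := by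
      have h2 := hS.mul_mul_conjTranspose_same hR.sqrt
      rwa [hR.posSemidef_sqrt.isHermitian.eq] at h2
    have hfid : fid R (U * T * Uᴴ) = ((hsq.sqrt).trace).re ^ 2 := by
      rw [fid, dif_pos ⟨hR, hS⟩]
    rw [hfid]
    set A := hR.sqrt with hA
    set B := hT.sqrt with hB
    set M := A * U * B * Uᴴ with hM
    have hMMH : M * Mᴴ = A * (U * T * Uᴴ) * A := by
      have h1 : Mᴴ = U * (B * (Uᴴ * A)) := by
        rw [hM]
        simp only [Matrix.conjTranspose_mul, Matrix.conjTranspose_conjTranspose,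
          (show Aᴴ = A from hR.posSemidef_sqrt.isHermitian.eq),
          (show Bᴴ = B from hT.posSemidef_sqrt.isHermitian.eq), Matrix.mul_assoc]
      calc M * Mᴴ = A * (U * (B * ((Uᴴ * U) * (B * (Uᴴ * A))))) := by
            rw [h1, hM]; simp only [Matrix.mul_assoc]
        _ = A * (U * (B * (B * (Uᴴ * A)))) := by rw [unitary_hc hU, one_mul]
        _ = A * (U * T * Uᴴ) * A := by
            rw [show T = B * B from (hT.sqrt_mul_self).symm]
            simp only [Matrix.mul_assoc]
    have hMpsd : (M * Mᴴ).PosSemidef := by rw [hMMH]; exact hsq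
    obtain ⟨V, hVmem, hV⟩ := lemA M hMpsd
    have hval : hsq.sqrt.trace = (M * V).trace := by
      rw [hV]; exact congrArg Matrix.trace (sqrt_congr hsq hMpsd hMMH.symm)
    have hnn : 0 ≤ (hsq.sqrt.trace).re := by
      rw [trace_sqrt' hsq, Complex.re_sum]
      exact Finset.sum_nonneg fun i _ => by simp [Real.sqrt_nonneg]
    rw [hval] at hnn ⊢
    refine pow_le_pow_left₀ hnn ?_ 2
    set P := hR.1.eigenvectorUnitary.1 with hP
    set Q := hT.1.eigenvectorUnitary.1 with hQ
    have hPmem : P ∈ unitaryGroup (Fin d) ℂ := hR.1.eigenvectorUnitary.2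
    have hQmem : Q ∈ unitaryGroup (Fin d) ℂ := hT.1.eigenvectorUnitary.2
    have hAeq : A = P * diagonal (Complex.ofReal ∘ (Real.sqrt ∘ hR.1.eigenvalues)) * Pᴴ := by
      rw [hA, Matrix.PosSemidef.sqrt, Matrix.star_eq_conjTranspose]; rfl
    have hBeq : B = Q * diagonal (Complex.ofReal ∘ (Real.sqrt ∘ hT.1.eigenvalues)) * Qᴴ := by
      rw [hB, Matrix.PosSemidef.sqrt, Matrix.star_eq_conjTranspose]; rfl
    have hMV : M * V = (P * diagonal (Complex.ofReal ∘ (Real.sqrt ∘ hR.1.eigenvalues)) * Pᴴ)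
        * U * (Q * diagonal (Complex.ofReal ∘ (Real.sqrt ∘ hT.1.eigenvalues)) * Qᴴ)
        * (Uᴴ * V) := by
      rw [hM, hAeq, hBeq]; simp only [Matrix.mul_assoc]
    rw [hMV, trace_cyc, trace_diag]
    set G := Pᴴ * U * Q with hG
    set Hm := Qᴴ * (Uᴴ * V * P) with hHm
    have hGmem : G ∈ unitaryGroup (Fin d) ℂ := mul_mem (mul_mem (star_mem' hPmem) hU) hQmem
    have hHmem : Hm ∈ unitaryGroup (Fin d) ℂ :=
      mul_mem (star_mem' hQmem) (mul_mem (mul_mem (star_mem' hU) hVmem) hPmem)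
    have hshape : ∀ k l, (Complex.ofReal ∘ (Real.sqrt ∘ hR.1.eigenvalues)) k *
          (G k l * ((Complex.ofReal ∘ (Real.sqrt ∘ hT.1.eigenvalues)) l * Hm l k))
        = ((Real.sqrt (lR (σR.symm k)) : ℂ)) * (G k l * ((Real.sqrt (lT (σT.symm l)) : ℂ) * Hm l k)) := by
      intro k l
      have e1 : hR.1.eigenvalues k = lR (σR.symm k) := by rw [hσR]; simp
      have e2 : hT.1.eigenvalues l = lT (σT.symm l) := by rw [hσT]; simp
      simp [e1, e2]
    rw [Finset.sum_congr rfl fun k _ => Finset.sum_congr rfl fun l _ => hshape k l]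
    calc (∑ k, ∑ l, ((Real.sqrt (lR (σR.symm k)) : ℂ)) *
          (G k l * ((Real.sqrt (lT (σT.symm l)) : ℂ) * Hm l k))).re
        ≤ ∑ i, Real.sqrt (lR i) * Real.sqrt (lT i) :=
          lemB (fun i => Real.sqrt (lR i)) (fun i => Real.sqrt (lT i))
            (fun i j hij => Real.sqrt_le_sqrt (hlR hij))
            (fun i j hij => Real.sqrt_le_sqrt (hlT hij))
            (fun i => Real.sqrt_nonneg _) (fun i => Real.sqrt_nonneg _)
            σR.symm σT.symm G Hm hGmem hHmem
      _ = ∑ i, Real.sqrt (lR i * lT i) := hcsplit.symm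
end

section
/- Let d, d' ≥ 1 and let ψ ∈ ℂ^{Fin d × Fin d'} be a unit vector. Then there exist a unitary d×d matrix U, a unitary d'×d' matrix V, and a nonincreasing probability vector p on Fin (min d d'), such that ψ = (U ⊗ V)·ψ₀, where ψ₀ ∈ ℂ^{Fin d × Fin d'} is the vector with ψ₀(i,j) = √(p k) if i and j both equal the embedding of some index k < min d d' into Fin d and Fin d' respectively, and ψ₀(i,j) = 0 otherwise. (Every bipartite pure state is, up to local unitaries, of the canonical form with nonincreasing Schmidt coefficients.) -/
open Matrix
open scoped Kronecker
open scoped ComplexOrder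

namespace SchmidtAux

variable {d d' : ℕ}

lemma kron_mulVec (A : Matrix (Fin d) (Fin d) ℂ) (B : Matrix (Fin d') (Fin d') ℂ)
    (D : Matrix (Fin d) (Fin d') ℂ) :
    (A ⊗ₖ B) *ᵥ (fun x : Fin d × Fin d' => D x.1 x.2)
      = fun x => (A * D * Bᵀ) x.1 x.2 := by
  funext x
  obtain ⟨i, j⟩ := x
  simp only [mulVec, dotProduct, Fintype.sum_prod_type, kroneckerMap_apply,
    Matrix.mul_apply, transpose_apply, Finset.sum_mul, Finset.mul_sum]
  rw [Finset.sum_comm]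
  exact Finset.sum_congr rfl fun l _ => Finset.sum_congr rfl fun k _ => by ring

lemma svd_exists (M : Matrix (Fin d) (Fin d') ℂ) :
    ∃ U ∈ Matrix.unitaryGroup (Fin d) ℂ, ∃ W ∈ Matrix.unitaryGroup (Fin d') ℂ,
      ∃ lam : Fin d' → ℝ, (∀ j, 0 ≤ lam j) ∧ Antitone lam ∧
        (∀ j : Fin d', min d d' ≤ (j : ℕ) → lam j = 0) ∧
        (((∑ j, lam j : ℝ) : ℂ) = ∑ x : Fin d × Fin d', (starRingEnd ℂ) (M x.1 x.2) * M x.1 x.2) ∧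
        M = U * (Matrix.of fun (i : Fin d) (j : Fin d') =>
          if (i : ℕ) = (j : ℕ) then (Real.sqrt (lam j) : ℂ) else 0) * Wᴴ := by
  classical
  have hA : (Mᴴ * M).PosSemidef := Matrix.posSemidef_conjTranspose_mul_self M
  have hAh : (Mᴴ * M).IsHermitian := hA.1
  set μ : Fin d' → ℝ := hAh.eigenvalues with hμ
  set σ : Equiv.Perm (Fin d') := Tuple.sort (fun i => -μ i) with hσ
  set lam : Fin d' → ℝ := fun j => μ (σ j) with hlam
  have hnn : ∀ j, 0 ≤ lam j := fun j => hA.eigenvalues_nonneg _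
  have hanti : Antitone lam := by
    intro a b hab
    have h := Tuple.monotone_sort (fun i => -μ i) hab
    simpa [hlam] using h
  -- eigenvalues vanish past the rank
  have hrank : Fintype.card {i // μ i ≠ 0} ≤ min d d' := by
    rw [← hAh.rank_eq_card_non_zero_eigs, Matrix.rank_conjTranspose_mul_self M]
    exact le_min (Matrix.rank_le_height M) (Matrix.rank_le_width M)
  have hzero : ∀ j : Fin d', min d d' ≤ (j : ℕ) → lam j = 0 := by
    intro j hj
    by_contra h0
    have hall : ∀ i : Fin d', i ≤ j → μ (σ i) ≠ 0 := by
      intro i hij hi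
      exact h0 (le_antisymm (by simpa [hlam, hi] using hanti hij) (hnn j))
    have hcard : (Finset.Iic j).card ≤ Fintype.card {i // μ i ≠ 0} := by
      rw [Fintype.card_subtype]
      refine Finset.card_le_card_of_injOn σ ?_ (σ.injective.injOn)
      intro i hi
      simp only [Finset.mem_coe, Finset.mem_filter, Finset.mem_univ, true_and] at hi ⊢
      exact hall i (Finset.mem_Iic.mp hi)
    rw [Fin.card_Iic] at hcard
    omega
  -- the right singular basis
  set B := hAh.eigenvectorBasis.reindex σ.symm with hB
  have hBe : ∀ l, ⇑(B l) = ⇑(hAh.eigenvectorBasis (σ l)) := fun l => by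
    simp [hB]
  have heig : ∀ l, (Mᴴ * M) *ᵥ ⇑(B l) = lam l • ⇑(B l) := fun l => by
    rw [hBe]; exact hAh.mulVec_eigenvectorBasis (σ l)
  have horth : ∀ k l, dotProduct (star ⇑(B k)) ⇑(B l) = if k = l then 1 else 0 := by
    intro k l
    have h := orthonormal_iff_ite.mp B.orthonormal k l
    rw [← h, EuclideanSpace.inner_eq_star_dotProduct]
    exact dotProduct_comm _ _
  have hMM : ∀ k l, dotProduct (star (M *ᵥ ⇑(B k))) (M *ᵥ ⇑(B l))
      = ((lam l : ℝ) : ℂ) * (if k = l then 1 else 0) := by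
    intro k l
    rw [star_mulVec, ← dotProduct_mulVec, mulVec_mulVec, heig, dotProduct_smul, horth]
    simp [Complex.real_smul]
  have hMzero : ∀ l, lam l = 0 → M *ᵥ ⇑(B l) = 0 := by
    intro l h0
    have h := hMM l l
    rw [h0, if_pos rfl] at h
    simpa using dotProduct_star_self_eq_zero.mp (by simpa using h)
  -- left singular vectors
  set S : Set (Fin d) := {i | ∃ h : (i : ℕ) < d', lam ⟨(i : ℕ), h⟩ ≠ 0} with hS
  set u' : Fin d → EuclideanSpace ℂ (Fin d) := fun i =>
    if h : (i : ℕ) < d' then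
      ((Real.sqrt (lam ⟨(i : ℕ), h⟩))⁻¹ : ℂ) •
        (WithLp.equiv 2 (Fin d → ℂ)).symm (M *ᵥ ⇑(B ⟨(i : ℕ), h⟩))
    else 0 with hu'
  have horthu : Orthonormal ℂ (S.restrict u') := by
    rw [orthonormal_iff_ite]
    rintro ⟨i₁, hi₁⟩ ⟨i₂, hi₂⟩
    obtain ⟨h₁, hl₁⟩ := hi₁
    obtain ⟨h₂, hl₂⟩ := hi₂
    have key : (inner ℂ (u' i₁) (u' i₂) : ℂ)
        = ((Real.sqrt (lam ⟨(i₁ : ℕ), h₁⟩))⁻¹ : ℂ) * ((Real.sqrt (lam ⟨(i₂ : ℕ), h₂⟩))⁻¹ : ℂ)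
          * (((lam ⟨(i₂ : ℕ), h₂⟩ : ℝ) : ℂ) *
            (if (⟨(i₁ : ℕ), h₁⟩ : Fin d') = ⟨(i₂ : ℕ), h₂⟩ then 1 else 0)) := by
      rw [hu']
      simp only [dif_pos h₁, dif_pos h₂]
      rw [inner_smul_left, inner_smul_right, WithLp.equiv_symm_apply, EuclideanSpace.inner_toLp_toLp, dotProduct_comm, hMM]
      simp [Complex.conj_ofReal]
      ring
    show inner ℂ (u' i₁) (u' i₂) = _
    rw [key]
    by_cases he : i₁ = i₂
    · subst he
      simp only [Subtype.mk.injEq, if_pos rfl]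
      rw [show (⟨(i₁ : ℕ), h₂⟩ : Fin d') = ⟨(i₁ : ℕ), h₁⟩ from rfl]
      simp only [if_true, mul_one]
      norm_cast
      rw [← mul_inv, Real.mul_self_sqrt (hnn _), inv_mul_cancel₀ hl₁]
    · have hne : (⟨(i₁ : ℕ), h₁⟩ : Fin d') ≠ ⟨(i₂ : ℕ), h₂⟩ := by
        intro hc
        exact he (Fin.ext (by simpa using congrArg Fin.val hc))
      rw [if_neg hne, if_neg (by simpa [Subtype.mk.injEq] using he)]
      ring
  have hcardE : Module.finrank ℂ (EuclideanSpace ℂ (Fin d)) = Fintype.card (Fin d) := by simp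
  obtain ⟨bU, hbU⟩ := horthu.exists_orthonormalBasis_extension_of_card_eq hcardE
  -- the unitaries
  set U : Matrix (Fin d) (Fin d) ℂ :=
    (EuclideanSpace.basisFun (Fin d) ℂ).toBasis.toMatrix bU.toBasis with hU
  have hUmem : U ∈ Matrix.unitaryGroup (Fin d) ℂ :=
    (EuclideanSpace.basisFun (Fin d) ℂ).toMatrix_orthonormalBasis_mem_unitary bU
  have hUapp : ∀ i k, U i k = bU k i := fun i k => rfl
  set W : Matrix (Fin d') (Fin d') ℂ :=
    (EuclideanSpace.basisFun (Fin d') ℂ).toBasis.toMatrix B.toBasis with hW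
  have hWmem : W ∈ Matrix.unitaryGroup (Fin d') ℂ :=
    (EuclideanSpace.basisFun (Fin d') ℂ).toMatrix_orthonormalBasis_mem_unitary B
  have hWapp : ∀ j l, W j l = B l j := fun j l => rfl
  set D : Matrix (Fin d) (Fin d') ℂ := Matrix.of fun (i : Fin d) (j : Fin d') =>
    if (i : ℕ) = (j : ℕ) then (Real.sqrt (lam j) : ℂ) else 0 with hD
  -- M * W = U * D
  have hMW : M * W = U * D := by
    ext i l
    have hcol : (M * W) i l = (M *ᵥ ⇑(B l)) i := by
      simp [Matrix.mul_apply, mulVec, dotProduct, hWapp]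
    have hUD : (U * D) i l =
        if h : (l : ℕ) < d then (Real.sqrt (lam l) : ℂ) * bU ⟨(l : ℕ), h⟩ i else 0 := by
      rw [Matrix.mul_apply]
      by_cases h : (l : ℕ) < d
      · rw [dif_pos h, Finset.sum_eq_single (⟨(l : ℕ), h⟩ : Fin d)]
        · simp only [hD, hUapp, Matrix.of_apply, if_pos rfl, if_true]
          ring
        · intro k _ hk
          have : ¬ ((k : ℕ) = (l : ℕ)) := fun hc => hk (Fin.ext hc)
          simp [hD, this]
        · simp
      · rw [dif_neg h]
        refine Finset.sum_eq_zero fun k _ => ?_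
        have : ¬ ((k : ℕ) = (l : ℕ)) := fun hc => h (hc ▸ k.isLt)
        simp [hD, this]
    rw [hcol, hUD]
    by_cases h : (l : ℕ) < d
    · rw [dif_pos h]
      by_cases h0 : lam l = 0
      · have hz := hMzero l h0
        simp [hz, h0]
      · have hmem : (⟨(l : ℕ), h⟩ : Fin d) ∈ S := by
          refine ⟨l.isLt, ?_⟩
          have : (⟨((⟨(l : ℕ), h⟩ : Fin d) : ℕ), l.isLt⟩ : Fin d') = l := Fin.ext rfl
          rw [this]; exact h0
        rw [hbU _ hmem, hu']
        simp only [dif_pos l.isLt]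
        have hidx : (⟨((⟨(l : ℕ), h⟩ : Fin d) : ℕ), l.isLt⟩ : Fin d') = l := Fin.ext rfl
        rw [hidx]
        have hs : (Real.sqrt (lam l) : ℂ) ≠ 0 := by
          simp only [ne_eq, Complex.ofReal_eq_zero]
          exact Real.sqrt_ne_zero'.mpr (lt_of_le_of_ne (hnn l) (Ne.symm h0))
        simp only [PiLp.smul_apply, WithLp.equiv_symm_apply, PiLp.toLp_apply, smul_eq_mul]
        field_simp
    · rw [dif_neg h]
      have h0 : lam l = 0 := hzero l (by omega)
      simp [hMzero l h0]
  have hWuni : W * Wᴴ = 1 := by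
    have := (Matrix.mem_unitaryGroup_iff).mp hWmem
    rwa [Matrix.star_eq_conjTranspose] at this
  have hfinal : M = U * D * Wᴴ := by
    calc M = M * (W * Wᴴ) := by rw [hWuni, Matrix.mul_one]
    _ = (M * W) * Wᴴ := by rw [Matrix.mul_assoc]
    _ = U * D * Wᴴ := by rw [hMW]
  -- trace identity
  have htr : (((∑ j, lam j : ℝ)) : ℂ)
      = ∑ x : Fin d × Fin d', (starRingEnd ℂ) (M x.1 x.2) * M x.1 x.2 := by
    have h1 : ∑ j, lam j = ∑ j, μ j := Equiv.sum_comp σ μ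
    have h2 : (Mᴴ * M).trace = ∑ j, ((μ j : ℝ) : ℂ) := by
      nth_rewrite 1 [hAh.spectral_theorem]
      rw [Unitary.conjStarAlgAut_apply, Matrix.trace_mul_cycle]
      have hu : (star (hAh.eigenvectorUnitary : Matrix (Fin d') (Fin d') ℂ)) *
          (hAh.eigenvectorUnitary : Matrix (Fin d') (Fin d') ℂ) = 1 := by
        exact (Matrix.mem_unitaryGroup_iff').mp hAh.eigenvectorUnitary.2
      rw [hu, Matrix.one_mul, Matrix.trace_diagonal]
      rfl
    have h3 : (Mᴴ * M).trace
        = ∑ x : Fin d × Fin d', (starRingEnd ℂ) (M x.1 x.2) * M x.1 x.2 := by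
      rw [Matrix.trace]
      simp only [Matrix.diag_apply, Matrix.mul_apply, Matrix.conjTranspose_apply,
        Fintype.sum_prod_type]
      rw [Finset.sum_comm]
      rfl
    rw [h1] at *
    push_cast
    rw [← h2, h3]
  exact ⟨U, hUmem, W, hWmem, lam, hnn, hanti, hzero, by push_cast at htr ⊢; exact htr, hfinal⟩

end SchmidtAux
/-- Schmidt decomposition. Every bipartite pure (unit) vector is,
up to local unitaries, of the canonical diagonal form with nonincreasing
Schmidt coefficients `√(p k)`, `p` a nonincreasing probability vector on
`Fin (min d d')`. -/
theorem stmt_3 (d d' : ℕ) (hd : 1 ≤ d) (hd' : 1 ≤ d')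
    (ψ : Fin d × Fin d' → ℂ) (hψ : ∑ x : Fin d × Fin d', ‖ψ x‖ ^ 2 = 1) :
    ∃ U ∈ Matrix.unitaryGroup (Fin d) ℂ, ∃ V ∈ Matrix.unitaryGroup (Fin d') ℂ,
      ∃ p : Fin (min d d') → ℝ, (∀ k, 0 ≤ p k) ∧ (∑ k, p k = 1) ∧ Antitone p ∧
        ψ = (U ⊗ₖ V) *ᵥ (fun x : Fin d × Fin d' =>
          if h : (x.1 : ℕ) = (x.2 : ℕ) ∧ (x.1 : ℕ) < min d d'
          then (Real.sqrt (p ⟨x.1, h.2⟩) : ℂ) else 0) := by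
  classical
  obtain ⟨U, hUmem, W, hWmem, lam, hnn, hanti, hzero, hsum, hM⟩ :=
    SchmidtAux.svd_exists (Matrix.of fun i j => ψ (i, j))
  set V : Matrix (Fin d') (Fin d') ℂ := W.map (starRingEnd ℂ) with hV
  have hVmem : V ∈ Matrix.unitaryGroup (Fin d') ℂ := by
    rw [Matrix.mem_unitaryGroup_iff]
    have h1 : W * star W = 1 := (Matrix.mem_unitaryGroup_iff).mp hWmem
    have hsV : star V = Wᵀ := by
      ext i j
      simp [hV, Matrix.star_eq_conjTranspose, Matrix.conjTranspose_apply]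
    rw [hsV]
    have h2 : V * Wᵀ = (W * star W).map (starRingEnd ℂ) := by
      ext i j
      simp [hV, Matrix.mul_apply, Matrix.star_eq_conjTranspose, Matrix.conjTranspose_apply,
        mul_comm]
    rw [h2, h1]
    simp
  set p : Fin (min d d') → ℝ := fun k => lam (Fin.castLE (min_le_right d d') k) with hp
  have hsum' : ∑ j, lam j = ∑ k, p k := by
    have hmap : ∑ k, p k = ∑ j ∈ Finset.univ.map (Fin.castLEEmb (min_le_right d d')), lam j := by
      rw [Finset.sum_map]
      rfl
    rw [hmap]
    refine (Finset.sum_subset (Finset.subset_univ _) ?_).symm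
    intro j _ hj
    refine hzero j ?_
    by_contra hc
    push_neg at hc
    exact hj (Finset.mem_map.mpr ⟨⟨(j : ℕ), hc⟩, Finset.mem_univ _, Fin.ext rfl⟩)
  have hsum1 : ∑ k, p k = 1 := by
    have h1 : ((∑ j, lam j : ℝ) : ℂ) = ((1 : ℝ) : ℂ) := by
      rw [hsum]
      rw [← hψ]
      push_cast
      refine Finset.sum_congr rfl fun x _ => ?_
      have hofa : (Matrix.of (fun i j => ψ (i, j)) : Matrix (Fin d) (Fin d') ℂ) x.1 x.2 = ψ x := rfl
      rw [hofa, ← Complex.normSq_eq_conj_mul_self, ← Complex.sq_norm]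
      norm_cast
    have := Complex.ofReal_inj.mp h1
    rw [← hsum', this]
  refine ⟨U, hUmem, V, hVmem, p, fun k => hnn _, hsum1, ?_, ?_⟩
  · exact hanti.comp_monotone (Fin.strictMono_castLE (min_le_right d d')).monotone
  · -- the vector identity
    have hψ0 : (fun x : Fin d × Fin d' =>
        if h : (x.1 : ℕ) = (x.2 : ℕ) ∧ (x.1 : ℕ) < min d d'
        then (Real.sqrt (p ⟨x.1, h.2⟩) : ℂ) else 0)
        = fun x : Fin d × Fin d' => (Matrix.of fun (i : Fin d) (j : Fin d') =>
            if (i : ℕ) = (j : ℕ) then (Real.sqrt (lam j) : ℂ) else 0) x.1 x.2 := by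
      funext x
      obtain ⟨k, l⟩ := x
      by_cases h : (k : ℕ) = (l : ℕ) ∧ (k : ℕ) < min d d'
      · rw [dif_pos h]
        simp only [Matrix.of_apply, if_pos h.1]
        congr 2
        exact congrArg lam (Fin.ext (by simpa using h.1))
      · rw [dif_neg h]
        by_cases h1 : (k : ℕ) = (l : ℕ)
        · have h2 : min d d' ≤ (l : ℕ) := by
            by_contra hc
            push_neg at hc
            exact h ⟨h1, h1 ▸ hc⟩
          simp [Matrix.of_apply, h1, hzero l h2]
        · simp [Matrix.of_apply, h1]
    rw [hψ0, SchmidtAux.kron_mulVec]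
    have hVt : Vᵀ = Wᴴ := by
      ext i j
      simp [hV, Matrix.conjTranspose_apply]
    rw [hVt, ← hM]
    funext x
    obtain ⟨i, j⟩ := x
    rfl
end

section
/- Let m, n ≥ 1, let P be a probability vector on {1,…,m}, let H_n = Σ_{j=1}^n 1/j, and let z₁ ≥ z₂ ≥ … ≥ z_{mn} be the nonincreasing rearrangement of the mn values {P(i)/(j·H_n) : 1 ≤ i ≤ m, 1 ≤ j ≤ n}. Then z_k ≤ 1/(k·H_n) for every 1 ≤ k ≤ n. -/
/-- The `n`-th harmonic number `H_n = ∑_{j=1}^n 1/j`. -/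
noncomputable def harm (n : ℕ) : ℝ := ∑ j ∈ Finset.range n, 1 / ((j : ℝ) + 1)

/-- if `z` is the nonincreasing rearrangement of the `m·n` values
`P(i)/(j·H_n)`, then `z_k ≤ 1/(k·H_n)` for every `1 ≤ k ≤ n` (zero-indexed:
`z k ≤ 1/((k+1)·H_n)` for `k < n`). -/
theorem stmt_5 (m n : ℕ) (hm : 1 ≤ m) (hn : 1 ≤ n)
    (P : Fin m → ℝ) (hP0 : ∀ i, 0 ≤ P i) (hP1 : ∑ i, P i = 1)
    (z : Fin (m * n) → ℝ) (hz : Antitone z)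
    (e : Fin (m * n) ≃ Fin m × Fin n)
    (hze : ∀ k, z k = P (e k).1 / (((((e k).2 : ℕ) : ℝ) + 1) * harm n)) :
    ∀ k : Fin (m * n), (k : ℕ) < n → z k ≤ 1 / ((((k : ℕ) : ℝ) + 1) * harm n) := by
  intro k _hkn
  have hH : 0 < harm n := by
    apply Finset.sum_pos
    · intro j _; positivity
    · exact Finset.nonempty_range_iff.mpr (by omega)
  by_contra hcon
  push_neg at hcon
  set K : ℝ := ((k : ℕ) : ℝ) + 1 with hK
  have hKpos : 0 < K := by positivity
  -- key pointwise bound for the first k+1 entries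
  have key : ∀ l : Fin (m*n), l ≤ k → (((e l).2 : ℕ) : ℝ) + 1 < P (e l).1 * K := by
    intro l hl
    have h1 : 1 / (K * harm n) < z l := lt_of_lt_of_le hcon (hz hl)
    rw [hze l] at h1
    rw [div_lt_div_iff₀ (by positivity) (by positivity)] at h1
    nlinarith [hH]
  set T : Finset (Fin m × Fin n) := (Finset.Iic k).image e with hT
  have hTcard : T.card = (k : ℕ) + 1 := by
    rw [hT, Finset.card_image_of_injective _ e.injective, Fin.card_Iic]
  have hmemT : ∀ p ∈ T, ((p.2 : ℕ) : ℝ) + 1 < P p.1 * K := by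
    intro p hp
    rw [hT, Finset.mem_image] at hp
    obtain ⟨l, hl, rfl⟩ := hp
    exact key l (Finset.mem_Iic.mp hl)
  -- fiber counts
  set c : Fin m → ℕ := fun i => (T.filter (fun p => p.1 = i)).card with hc
  have hsumc : ∑ i, c i = (k : ℕ) + 1 := by
    rw [← hTcard]
    exact (Finset.card_eq_sum_card_fiberwise (fun p _ => Finset.mem_univ p.1)).symm
  have hfiber' : ∀ i : Fin m, (T.filter (fun p => p.1 = i)).Nonempty →
      ((c i : ℕ) : ℝ) < P i * K := by
    intro i hne
    set s : Finset (Fin n) := (T.filter (fun p => p.1 = i)).image Prod.snd with hs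
    have hsne : s.Nonempty := hne.image _
    have hscard : s.card = c i := by
      rw [hs, hc]
      apply Finset.card_image_of_injOn
      intro p hp q hq hpq
      have hp1 : p.1 = i := (Finset.mem_filter.mp hp).2
      have hq1 : q.1 = i := (Finset.mem_filter.mp hq).2
      exact Prod.ext (hp1.trans hq1.symm) hpq
    set j : Fin n := s.max' hsne with hj
    have hcle : c i ≤ (j : ℕ) + 1 := by
      rw [← hscard]
      calc s.card ≤ (Finset.Iic j).card :=
            Finset.card_le_card (fun x hx => Finset.mem_Iic.mpr (s.le_max' x hx))
        _ = (j : ℕ) + 1 := Fin.card_Iic j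
    have hjmem : (i, j) ∈ T := by
      obtain ⟨p, hp, hpj⟩ := Finset.mem_image.mp (s.max'_mem hsne)
      have hp1 : p.1 = i := (Finset.mem_filter.mp hp).2
      have : p = (i, j) := Prod.ext hp1 hpj
      exact this ▸ (Finset.mem_filter.mp hp).1
    have hlt := hmemT (i, j) hjmem
    calc ((c i : ℕ) : ℝ) ≤ ((j : ℕ) : ℝ) + 1 := by exact_mod_cast hcle
      _ < P i * K := hlt
  have hfiber : ∀ i : Fin m, ((c i : ℕ) : ℝ) ≤ P i * K := by
    intro i
    rcases Finset.eq_empty_or_nonempty (T.filter (fun p => p.1 = i)) with he | hne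
    · have : c i = 0 := by rw [hc]; simp [he]
      rw [this]
      simpa using mul_nonneg (hP0 i) hKpos.le
    · exact (hfiber' i hne).le
  have hk0 : e k ∈ T := by
    rw [hT, Finset.mem_image]
    exact ⟨k, Finset.mem_Iic.mpr le_rfl, rfl⟩
  have hstrict : ((c (e k).1 : ℕ) : ℝ) < P (e k).1 * K :=
    hfiber' (e k).1 ⟨e k, Finset.mem_filter.mpr ⟨hk0, rfl⟩⟩
  have hsumlt : ∑ i, ((c i : ℕ) : ℝ) < ∑ i, P i * K := by
    apply Finset.sum_lt_sum (fun i _ => hfiber i)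
    exact ⟨(e k).1, Finset.mem_univ _, hstrict⟩
  have hL : ∑ i, ((c i : ℕ) : ℝ) = K := by
    rw [hK, ← Nat.cast_sum, hsumc]; push_cast; ring
  have hR : ∑ i, P i * K = K := by
    rw [← Finset.sum_mul, hP1, one_mul]
  rw [hL, hR] at hsumlt
  exact lt_irrefl _ hsumlt
end

section
/- Let m ≥ 1 and n ≥ 2 with n ≥ m, let H_k = Σ_{j=1}^k 1/j, and let t₁ ≥ t₂ ≥ … ≥ t_{mn} be the nonincreasing rearrangement of the mn values {1/(m·j·H_n) : 1 ≤ i ≤ m, 1 ≤ j ≤ n} (i.e., each value 1/(m·j·H_n) occurs with multiplicity m). Then Σ_{j=1}^n t_j ≥ H_{⌊n/m⌋}/H_n ≥ 1 − (ln m)/(ln n). -/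
lemma trap_log (y : ℝ) (hy : 1 ≤ y) : Real.log y ≤ (y - y⁻¹) / 2 := by
  have key : MonotoneOn (fun x : ℝ => (x - x⁻¹) / 2 - Real.log x) (Set.Ici 1) := by
    have hd : ∀ x ∈ interior (Set.Ici (1:ℝ)),
        HasDerivAt (fun x : ℝ => (x - x⁻¹) / 2 - Real.log x)
          ((1 - -(x ^ 2)⁻¹) / 2 - x⁻¹) x := by
      intro x hx
      rw [interior_Ici] at hx
      have hx0 : x ≠ 0 := ne_of_gt (lt_trans one_pos hx)
      exact ((hasDerivAt_id x).sub (hasDerivAt_inv hx0)).div_const 2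
        |>.sub (Real.hasDerivAt_log hx0)
    apply monotoneOn_of_deriv_nonneg (convex_Ici 1)
    · apply ContinuousOn.sub
      · exact (continuousOn_id.sub (continuousOn_inv₀.mono (fun x hx =>
          ne_of_gt (lt_of_lt_of_le one_pos hx)))).div_const 2
      · exact Real.continuousOn_log.mono (fun x hx =>
          ne_of_gt (lt_of_lt_of_le one_pos hx))
    · intro x hx
      exact ((hd x hx).differentiableAt).differentiableWithinAt
    · intro x hx
      rw [(hd x hx).deriv]
      rw [interior_Ici] at hx
      have hx0 : (0:ℝ) < x := lt_trans one_pos hx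
      have : (1 - -(x ^ 2)⁻¹) / 2 - x⁻¹ = (x - 1) ^ 2 / (2 * x ^ 2) := by
        field_simp; ring
      rw [this]; positivity
  have h := key (Set.self_mem_Ici) (Set.mem_Ici.2 hy) hy
  simp only [Real.log_one, inv_one, sub_self] at h
  linarith [h]

lemma midpoint_log (y : ℝ) (hy : 1 ≤ y) : 2 * (y - 1) / (y + 1) ≤ Real.log y := by
  have key : MonotoneOn (fun x : ℝ => Real.log x - 2 * (x - 1) / (x + 1)) (Set.Ici 1) := by
    have hd : ∀ x ∈ interior (Set.Ici (1:ℝ)),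
        HasDerivAt (fun x : ℝ => Real.log x - 2 * (x - 1) / (x + 1))
          (x⁻¹ - (2 * 1 * (x + 1) - 2 * (x - 1) * 1) / (x + 1) ^ 2) x := by
      intro x hx
      rw [interior_Ici] at hx
      have hx0 : x ≠ 0 := ne_of_gt (lt_trans one_pos hx)
      have hx1 : x + 1 ≠ 0 := by nlinarith [lt_trans one_pos (show (1:ℝ) < x from hx)]
      exact (Real.hasDerivAt_log hx0).sub
        ((((hasDerivAt_id x).sub_const 1).const_mul 2).div ((hasDerivAt_id x).add_const 1) hx1)
    apply monotoneOn_of_deriv_nonneg (convex_Ici 1)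
    · apply ContinuousOn.sub
      · exact Real.continuousOn_log.mono (fun x hx =>
          ne_of_gt (lt_of_lt_of_le one_pos hx))
      · apply ContinuousOn.div
        · fun_prop
        · fun_prop
        · intro x hx; have : (1:ℝ) ≤ x := hx; nlinarith
    · intro x hx
      exact ((hd x hx).differentiableAt).differentiableWithinAt
    · intro x hx
      rw [(hd x hx).deriv]
      rw [interior_Ici] at hx
      have hx0 : (0:ℝ) < x := lt_trans one_pos hx
      have hx1 : (0:ℝ) < x + 1 := by linarith
      have : x⁻¹ - (2 * 1 * (x + 1) - 2 * (x - 1) * 1) / (x + 1) ^ 2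
          = (x - 1) ^ 2 / (x * (x + 1) ^ 2) := by
        field_simp; ring
      rw [this]; positivity
  have h := key (Set.self_mem_Ici) (Set.mem_Ici.2 hy) hy
  simp only [Real.log_one] at h
  norm_num at h
  linarith [h]


lemma harm_succ (n : ℕ) : harm (n + 1) = harm n + 1 / ((n : ℝ) + 1) := by
  simp [harm, Finset.sum_range_succ]

lemma harm_pos {n : ℕ} (hn : 1 ≤ n) : 0 < harm n := by
  apply Finset.sum_pos
  · intro j _; positivity
  · exact Finset.nonempty_range_iff.2 (by omega)

lemma harm_lower (n : ℕ) (hn : 1 ≤ n) :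
    Real.log n + 1 / 2 + 1 / (2 * n) ≤ harm n := by
  induction n, hn using Nat.le_induction with
  | base => simp [harm]; norm_num
  | succ n hn ih =>
    rw [harm_succ]
    have hn0 : (0:ℝ) < n := by exact_mod_cast hn
    have hy : (1:ℝ) ≤ ((n:ℝ) + 1) / n := by
      rw [le_div_iff₀ hn0]; linarith
    have h := trap_log (((n:ℝ) + 1) / n) hy
    have hlog : Real.log (((n:ℝ)+1)/n) = Real.log ((n:ℝ)+1) - Real.log n :=
      Real.log_div (by positivity) (ne_of_gt hn0)
    have hval : ((((n:ℝ)+1)/n) - (((n:ℝ)+1)/n)⁻¹) / 2 = 1/(2*n) + 1/(2*((n:ℝ)+1)) := by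
      rw [inv_div]
      field_simp; norm_num
      ring
    rw [hlog, hval] at h
    push_cast
    push_cast at ih
    have e1 : (1:ℝ)/((n:ℝ)+1) - 1/(2*((n:ℝ)+1)) = 1/(2*((n:ℝ)+1)) := by
      field_simp; norm_num
    linarith

lemma harm_diff_upper (q : ℕ) : ∀ n, q ≤ n →
    harm n - harm q ≤ Real.log ((n:ℝ) + 1/2) - Real.log ((q:ℝ) + 1/2) := by
  intro n hn
  induction n, hn using Nat.le_induction with
  | base => simp
  | succ n hn ih =>
    rw [harm_succ]
    have hy : (1:ℝ) ≤ ((n:ℝ) + 1 + 1/2) / ((n:ℝ) + 1/2) := by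
      rw [le_div_iff₀ (by positivity)]; linarith
    have h := midpoint_log (((n:ℝ) + 1 + 1/2) / ((n:ℝ) + 1/2)) hy
    have hlog : Real.log (((n:ℝ) + 1 + 1/2) / ((n:ℝ) + 1/2))
        = Real.log ((n:ℝ) + 1 + 1/2) - Real.log ((n:ℝ) + 1/2) :=
      Real.log_div (by positivity) (by positivity)
    have hval : 2 * ((((n:ℝ) + 1 + 1/2) / ((n:ℝ) + 1/2)) - 1)
        / ((((n:ℝ) + 1 + 1/2) / ((n:ℝ) + 1/2)) + 1) = 1 / ((n:ℝ) + 1) := by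
      have hB : ((n:ℝ) + 1/2) ≠ 0 := by positivity
      field_simp; norm_num
      ring
    rw [hlog, hval] at h
    push_cast
    linarith

lemma sq_le_two_pow {n : ℕ} (hn : 4 ≤ n) : n ^ 2 ≤ 2 ^ n := by
  induction n, hn using Nat.le_induction with
  | base => norm_num
  | succ n hn ih =>
    have : (n + 1) ^ 2 ≤ 2 * n ^ 2 := by nlinarith
    calc (n + 1) ^ 2 ≤ 2 * n ^ 2 := this
      _ ≤ 2 * 2 ^ n := by omega
      _ = 2 ^ (n + 1) := by ring

lemma hpow (a b : ℝ) (k l : ℕ) (ha : 0 < a) (hb : 0 < b) (h : a ^ k ≤ b ^ l) :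
    (k:ℝ) * Real.log a ≤ (l:ℝ) * Real.log b := by
  have := Real.log_le_log (by positivity) h
  rwa [Real.log_pow, Real.log_pow] at this

lemma hfin (a b : ℕ) (ha : 0 < a) (hb : 0 < b) (h : (a:ℝ) ^ 7 ≤ (b:ℝ) ^ 12) :
    7 * Real.log (a:ℝ) ≤ 12 * Real.log (b:ℝ) := by
  have := hpow a b 7 12 (by exact_mod_cast ha) (by exact_mod_cast hb) h
  push_cast at this
  linarith

set_option maxHeartbeats 1000000 in
lemma key_ineq (m n q : ℕ) (hm : 1 ≤ m) (hn : 2 ≤ n) (hmn : m ≤ n) (hq : q = n / m) :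
    (harm n - harm q) * Real.log n ≤ Real.log m * harm n := by
  have hm0 : (0:ℝ) < m := by exact_mod_cast hm
  have hn0 : (0:ℝ) < n := by positivity
  have hLn : 0 < Real.log n := Real.log_pos (by exact_mod_cast hn)
  have hHn : 0 < harm n := harm_pos (by omega)
  have hq1 : 1 ≤ q := by rw [hq]; exact Nat.one_le_div_iff (by omega) |>.2 hmn
  have hqn : q ≤ n := by rw [hq]; exact Nat.div_le_self n m
  have ha0 : 0 ≤ Real.log m := Real.log_nonneg (by exact_mod_cast hm)
  have hfloor : n + 1 ≤ m * (q + 1) := by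
    have h1 := (Nat.div_add_mod n m).symm
    have h2 : n % m < m := Nat.mod_lt _ (by omega)
    rw [hq]
    calc n + 1 ≤ m * (n / m) + m := by omega
      _ = m * (n / m + 1) := by ring
  have hfloorR : (n:ℝ) + 1 ≤ (m:ℝ) * ((q:ℝ) + 1) := by exact_mod_cast hfloor
  rcases eq_or_lt_of_le hm with hm1 | hm2
  · have : q = n := by rw [hq, ← hm1]; simp
    rw [this]
    simp
    positivity
  rcases eq_or_lt_of_le hmn with hmn' | hmn'
  · have hq' : q = 1 := by rw [hq, hmn', Nat.div_self (by omega)]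
    rw [hq', hmn']
    have h1 : harm 1 = 1 := by simp [harm]
    rw [h1]
    nlinarith [harm_pos (show 1 ≤ n by omega)]
  -- main case 2 ≤ m < n
  have hD := harm_diff_upper q n hqn
  have hup : Real.log ((n:ℝ) + 1/2) ≤ Real.log m + Real.log ((q:ℝ) + 1) := by
    rw [← Real.log_mul (ne_of_gt hm0) (by positivity)]
    apply Real.log_le_log (by positivity)
    linarith
  have hD2 : harm n - harm q ≤ Real.log m + (Real.log ((q:ℝ) + 1) - Real.log ((q:ℝ) + 1/2)) := by
    linarith [hD, hup]
  have main : (Real.log ((q:ℝ) + 1) - Real.log ((q:ℝ) + 1/2)) * Real.log n ≤ Real.log m / 2 := by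
    by_cases hq2 : 2 ≤ q
    · have hqr : (2:ℝ) ≤ (q:ℝ) := by exact_mod_cast hq2
      have hε : Real.log ((q:ℝ) + 1) - Real.log ((q:ℝ) + 1/2) ≤ 1 / (2*(q:ℝ)+1) := by
        rw [← Real.log_div (by positivity) (by positivity)]
        have h1 := Real.log_le_sub_one_of_pos
          (show (0:ℝ) < ((q:ℝ)+1)/((q:ℝ)+1/2) by positivity)
        have h2 : ((q:ℝ)+1)/((q:ℝ)+1/2) - 1 = 1 / (2*(q:ℝ)+1) := by
          rw [div_sub_one (by positivity)]
          rw [div_eq_div_iff (by positivity) (by positivity)]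
          ring
        linarith
      have hkey : 2 * Real.log n ≤ (2*(q:ℝ)+1) * Real.log m := by
        rcases eq_or_lt_of_le (show 2 ≤ m from hm2) with hm2' | hm3
        · -- m = 2
          have hm2'' : m = 2 := hm2'.symm
          have hn4 : 4 ≤ n := by
            rw [hq, hm2''] at hq2
            omega
          have h2q : (n:ℝ) ≤ 2*(q:ℝ)+1 := by
            have h2q' : n ≤ 2*q + 1 := by
              have h1 := (Nat.div_add_mod n 2).symm
              have h2 : n % 2 < 2 := Nat.mod_lt _ (by omega)
              rw [hq, hm2'']
              omega
            exact_mod_cast h2q'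
          have hl := hpow n 2 2 n hn0 (by norm_num)
            (by exact_mod_cast sq_le_two_pow hn4)
          rw [hm2'']
          push_cast at hl ⊢
          have hmul := mul_le_mul_of_nonneg_right h2q
            (Real.log_nonneg (show (1:ℝ) ≤ 2 by norm_num))
          linarith [hl, hmul]
        · -- m ≥ 3
          have hm3' : (3:ℝ) ≤ (m:ℝ) := by exact_mod_cast hm3
          have h2m : 2 * m ≤ n := by
            rw [hq] at hq2
            exact (Nat.le_div_iff_mul_le (by omega)).1 hq2
          have h2mr : 2 * (m:ℝ) ≤ (n:ℝ) := by exact_mod_cast h2m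
          have hn6 : (6:ℝ) ≤ (n:ℝ) := by
            have h6 : 6 ≤ n := by omega
            exact_mod_cast h6
          have hexp : Real.exp 1 < 3 := by
            have := Real.exp_one_lt_d9
            linarith
          have hanti := Real.log_div_self_antitoneOn
            (show (m:ℝ) ∈ {x : ℝ | Real.exp 1 ≤ x} by
              simp only [Set.mem_setOf_eq]; linarith)
            (show (n:ℝ)/2 ∈ {x : ℝ | Real.exp 1 ≤ x} by
              simp only [Set.mem_setOf_eq]; linarith)
            (by linarith)
          simp only at hanti
          have hlogn2 : Real.log ((n:ℝ)/2) = Real.log n - Real.log 2 :=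
            Real.log_div (by positivity) (by norm_num)
          rw [hlogn2] at hanti
          have hcross : 2 * (m:ℝ) * (Real.log n - Real.log 2) ≤ (n:ℝ) * Real.log m := by
            rw [div_le_div_iff₀ (by positivity) (by positivity)] at hanti
            linarith [hanti]
          have h5 : 5 * Real.log 2 ≤ 2 * Real.log n := by
            have h32 : (2:ℝ)^5 ≤ (n:ℝ)^2 := by nlinarith [hn6]
            have := hpow 2 n 5 2 (by norm_num) hn0 h32
            push_cast at this
            linarith
          have s1 : (n:ℝ) * Real.log m ≤ ((m:ℝ) * ((q:ℝ)+1)) * Real.log m := by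
            apply mul_le_mul_of_nonneg_right _ ha0
            linarith
          have s2 : 2 * (Real.log n - Real.log 2) ≤ ((q:ℝ)+1) * Real.log m := by
            have h' : (m:ℝ) * (2*(Real.log n - Real.log 2))
                ≤ (m:ℝ) * (((q:ℝ)+1) * Real.log m) := by linarith [hcross, s1]
            exact le_of_mul_le_mul_left h' hm0
          have h53 : (5:ℝ)/3 * ((q:ℝ)+1) ≤ 2*(q:ℝ)+1 := by linarith
          have s3 : ((5:ℝ)/3 * ((q:ℝ)+1)) * Real.log m ≤ (2*(q:ℝ)+1) * Real.log m :=
            mul_le_mul_of_nonneg_right h53 ha0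
          linarith [s2, s3, h5]
      have h1 : (Real.log ((q:ℝ) + 1) - Real.log ((q:ℝ) + 1/2)) * Real.log n
          ≤ (1/(2*(q:ℝ)+1)) * Real.log n :=
        mul_le_mul_of_nonneg_right hε (le_of_lt hLn)
      have h2 : (1/(2*(q:ℝ)+1)) * Real.log n ≤ Real.log m / 2 := by
        rw [div_mul_eq_mul_div, one_mul, div_le_div_iff₀ (by positivity) (by norm_num)]
        linarith
      linarith
    · -- q = 1
      have hq1' : q = 1 := by omega
      have hε : Real.log ((q:ℝ) + 1) - Real.log ((q:ℝ) + 1/2) ≤ 7/24 := by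
        rw [hq1']
        push_cast
        have e1 : Real.log (1+1:ℝ) - Real.log (1+1/2:ℝ) = Real.log (4/3 : ℝ) := by
          rw [← Real.log_div (by norm_num) (by norm_num)]
          norm_num
        rw [e1]
        have := trap_log (4/3 : ℝ) (by norm_num)
        norm_num at this
        linarith
      have hkey : 7 * Real.log (n:ℝ) ≤ 12 * Real.log (m:ℝ) := by
        by_cases hn6 : 6 ≤ n
        · have h2m : n < 2 * m := by
            by_contra h
            have h2 : 2 ≤ n / m := (Nat.le_div_iff_mul_le (by omega)).2 (by omega)
            omega
          have h2mr : (n:ℝ) ≤ 2 * (m:ℝ) := by exact_mod_cast le_of_lt h2m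
          have hlogm : Real.log n - Real.log 2 ≤ Real.log m := by
            have hll := Real.log_le_log hn0 h2mr
            rw [Real.log_mul (by norm_num) (ne_of_gt hm0)] at hll
            linarith
          have h512 : 12 * Real.log 2 ≤ 5 * Real.log n := by
            have h6 : (6:ℝ) ≤ (n:ℝ) := by exact_mod_cast hn6
            have h65 : (2:ℝ)^12 ≤ (n:ℝ)^5 := by
              have hp := pow_le_pow_left₀ (show (0:ℝ) ≤ 6 by norm_num) h6 5
              norm_num at hp ⊢
              linarith
            have := hpow 2 n 12 5 (by norm_num) hn0 h65
            push_cast at this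
            linarith
          linarith
        · have hn5 : n < 6 := by omega
          subst hq
          interval_cases n <;> interval_cases m <;>
            first
            | omega
            | exact hfin _ _ (by norm_num) (by norm_num) (by norm_num)
      have h1 : (Real.log ((q:ℝ) + 1) - Real.log ((q:ℝ) + 1/2)) * Real.log n
          ≤ (7/24) * Real.log n :=
        mul_le_mul_of_nonneg_right hε (le_of_lt hLn)
      linarith
  have hHn' : Real.log n + 1/2 ≤ harm n := by
    have hpos : (0:ℝ) < 1 / (2*(n:ℝ)) := by positivity
    linarith [harm_lower n (show 1 ≤ n by omega)]
  calc (harm n - harm q) * Real.log n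
      ≤ (Real.log m + (Real.log ((q:ℝ) + 1) - Real.log ((q:ℝ) + 1/2))) * Real.log n := by
        apply mul_le_mul_of_nonneg_right hD2 (le_of_lt hLn)
    _ = Real.log m * Real.log n
        + (Real.log ((q:ℝ) + 1) - Real.log ((q:ℝ) + 1/2)) * Real.log n := by ring
    _ ≤ Real.log m * Real.log n + Real.log m / 2 := by linarith
    _ = Real.log m * (Real.log n + 1/2) := by ring
    _ ≤ Real.log m * harm n := by
        apply mul_le_mul_of_nonneg_left hHn' ha0

lemma filter_range_sum (c N : ℕ) (h : c ≤ N) (F : ℕ → ℝ) :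
    ∑ j ∈ Finset.range N, (if j < c then F j else 0) = ∑ j ∈ Finset.range c, F j := by
  rw [← Finset.sum_filter]
  congr 1
  ext j
  simp only [Finset.mem_filter, Finset.mem_range]
  omega

lemma le_emb {c N : ℕ} (f : Fin c → Fin N) (hf : StrictMono f) :
    ∀ i : Fin c, (i : ℕ) ≤ (f i : ℕ) := by
  have H : ∀ k, ∀ i : Fin c, i.val = k → k ≤ (f i : ℕ) := by
    intro k
    induction k with
    | zero => intro i _; exact Nat.zero_le _
    | succ k ih =>
      intro i hi
      have hk : k < c := by omega
      have h1 := ih ⟨k, hk⟩ rfl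
      have h2 : (⟨k, hk⟩ : Fin c) < i := by rw [Fin.lt_def]; simp; omega
      have h3 := hf h2
      rw [Fin.lt_def] at h3
      omega
  exact fun i => H i.val i rfl

lemma sum_subset_le (N c n : ℕ) (t : Fin N → ℝ) (ht : Antitone t) (h0 : ∀ k, 0 ≤ t k)
    (S : Finset (Fin N)) (hc : S.card = c) (hcn : c ≤ n) (hnN : n ≤ N) :
    ∑ k ∈ S, t k ≤ ∑ k ∈ Finset.univ.filter (fun k : Fin N => (k : ℕ) < n), t k := by
  have hcN : c ≤ N := hcn.trans hnN
  set F : ℕ → ℝ := fun j => if h : j < N then t ⟨j, h⟩ else 0 with hFdef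
  have hF : ∀ k : Fin N, F k.val = t k := by
    intro k
    simp only [hFdef, k.isLt, dif_pos]
  have hF0 : ∀ j, 0 ≤ F j := by
    intro j
    by_cases h : j < N <;> simp [hFdef, h, h0]
  set σ := S.orderEmbOfFin hc with hσ
  have hS : S = Finset.image (fun i => σ i) Finset.univ := by
    apply Finset.coe_injective
    rw [Finset.coe_image, Finset.coe_univ, Set.image_univ]
    exact (Finset.range_orderEmbOfFin S hc).symm
  have h1 : ∑ k ∈ S, t k = ∑ i : Fin c, t (σ i) := by
    rw [hS, Finset.sum_image (fun a _ b _ h => σ.injective h)]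
  have h2 : ∀ i : Fin c, t (σ i) ≤ F i.val := by
    intro i
    have hi : (i : ℕ) < N := lt_of_lt_of_le i.isLt hcN
    have : F i.val = t ⟨i.val, hi⟩ := dif_pos hi
    rw [this]
    apply ht
    rw [Fin.le_def]
    exact le_emb (fun i => σ i) σ.strictMono i
  calc ∑ k ∈ S, t k = ∑ i : Fin c, t (σ i) := h1
    _ ≤ ∑ i : Fin c, F i.val := Finset.sum_le_sum (fun i _ => h2 i)
    _ = ∑ j ∈ Finset.range c, F j := Fin.sum_univ_eq_sum_range F c
    _ ≤ ∑ j ∈ Finset.range n, F j := by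
        apply Finset.sum_le_sum_of_subset_of_nonneg
        · exact Finset.range_subset_range.2 hcn
        · intro j _ _; exact hF0 j
    _ = ∑ j ∈ Finset.range N, (if j < n then F j else 0) := (filter_range_sum n N hnN F).symm
    _ = ∑ k : Fin N, (if (k:ℕ) < n then F (k:ℕ) else 0) :=
        (Fin.sum_univ_eq_sum_range (fun j => if j < n then F j else 0) N).symm
    _ = ∑ k ∈ Finset.univ.filter (fun k : Fin N => (k : ℕ) < n), t k := by
        rw [Finset.sum_filter]
        apply Finset.sum_congr rfl
        intro k _
        by_cases h : (k:ℕ) < n <;> simp [h, hF k]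

/-- if `t` is the nonincreasing rearrangement of the `m·n` values
`1/(m·j·H_n)` (each with multiplicity `m`), then the sum of its first `n`
entries is at least `H_{⌊n/m⌋}/H_n`, which is at least `1 - ln m / ln n`. -/
theorem stmt_6 (m n : ℕ) (hm : 1 ≤ m) (hn : 2 ≤ n) (hmn : m ≤ n)
    (t : Fin (m * n) → ℝ) (ht : Antitone t)
    (e : Fin (m * n) ≃ Fin m × Fin n)
    (hte : ∀ k, t k = 1 / ((m : ℝ) * ((((e k).2 : ℕ) : ℝ) + 1) * harm n)) :
    harm (n / m) / harm n ≤
      ∑ k ∈ Finset.univ.filter (fun k : Fin (m * n) => (k : ℕ) < n), t k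
    ∧ 1 - Real.log m / Real.log n ≤ harm (n / m) / harm n := by
  have hm0 : (0:ℝ) < m := by exact_mod_cast hm
  have hn1 : 1 ≤ n := by omega
  have hHn : 0 < harm n := harm_pos hn1
  have hLn : 0 < Real.log n := Real.log_pos (by exact_mod_cast hn)
  set q := n / m with hq
  constructor
  · -- part 1
    set S := Finset.univ.filter (fun k : Fin (m*n) => ((e k).2 : ℕ) < q) with hSdef
    have key : ∀ g : ℕ → ℝ,
        ∑ k ∈ S, g ((e k).2 : ℕ) = (m:ℝ) * ∑ j ∈ Finset.range q, g j := by
      intro g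
      have hqn : q ≤ n := by rw [hq]; exact Nat.div_le_self n m
      rw [hSdef, Finset.sum_filter]
      rw [Equiv.sum_comp e (fun p : Fin m × Fin n =>
        if ((p.2 : ℕ) < q) then g (p.2 : ℕ) else 0)]
      rw [Fintype.sum_prod_type (f := fun p : Fin m × Fin n =>
        if ((p.2 : ℕ) < q) then g (p.2 : ℕ) else 0)]
      simp only []
      rw [Finset.sum_const, Finset.card_univ, Fintype.card_fin, nsmul_eq_mul]
      congr 1
      rw [Fin.sum_univ_eq_sum_range (fun j => if j < q then g j else 0) n]
      exact filter_range_sum q n hqn g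
    -- cardinality of S
    have hcard : S.card = m * q := by
      have h1 := key (fun _ => (1:ℝ))
      simp only [Finset.sum_const, nsmul_eq_mul, mul_one, Finset.card_range] at h1
      exact_mod_cast h1
    -- value of the sum over S
    have hval : ∑ k ∈ S, t k = harm q / harm n := by
      have h1 : ∑ k ∈ S, t k
          = ∑ k ∈ S, (fun j : ℕ => 1 / ((m:ℝ) * ((j:ℝ) + 1) * harm n)) ((e k).2 : ℕ) := by
        apply Finset.sum_congr rfl
        intro k _
        exact hte k
      rw [h1, key (fun j : ℕ => 1 / ((m:ℝ) * ((j:ℝ) + 1) * harm n))]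
      have h2 : ∑ j ∈ Finset.range q, 1 / ((m:ℝ) * ((j:ℝ) + 1) * harm n)
          = harm q * (1 / ((m:ℝ) * harm n)) := by
        conv_rhs => rw [harm, Finset.sum_mul]
        apply Finset.sum_congr rfl
        intro j _
        have hH := ne_of_gt hHn
        have hm' := ne_of_gt hm0
        field_simp
      rw [h2]
      field_simp
    -- compare
    have ht0 : ∀ k, 0 ≤ t k := by
      intro k
      rw [hte k]
      positivity
    have hcn : m * q ≤ n := by
      rw [hq, mul_comm]
      exact Nat.div_mul_le_self n m
    have hnN : n ≤ m * n := Nat.le_mul_of_pos_left n (by omega)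
    have := sum_subset_le (m*n) (m*q) n t ht ht0 S hcard hcn hnN
    rw [hval] at this
    exact this
  · -- part 2
    have key := key_ineq m n q hm hn hmn hq
    have h1 : 1 - Real.log m / Real.log n = (Real.log n - Real.log m) / Real.log n := by
      field_simp
    rw [h1, div_le_div_iff₀ hLn hHn]
    nlinarith [key]
end

section
/- Let p be a probability vector on Fin a and q a probability vector on Fin b (a, b ≥ 1). Suppose that there is no probability vector p' on Fin (a·b) such that the nonincreasing rearrangement of the product vector p⊗p' coincides (after padding the shorter vector with zeros) with the nonincreasing rearrangement q↓ of q. Then there exists ε > 0 such that for every probability vector p' on Fin (a·b), (Σ_i √( q↓(i) · (p⊗p')↓(i) ))² ≤ 1 − ε. (Unless the seed state is, up to local unitaries, the target state tensored with some pure state, exact zero-communication conversion is impossible: the achievable fidelity is bounded away from 1.) -/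
/-- A probability vector on `Fin c`. -/
def IsProbVec {c : ℕ} (p : Fin c → ℝ) : Prop := (∀ i, 0 ≤ p i) ∧ ∑ i, p i = 1

/-- `w : ℕ → ℝ` is the nonincreasing rearrangement of the finite vector `v`,
padded with zeros. -/
def IsSortedPadOf {ι : Type} [Fintype ι] (v : ι → ℝ) (w : ℕ → ℝ) : Prop :=
  Antitone w ∧ (∀ k, Fintype.card ι ≤ k → w k = 0) ∧
    ∃ e : Fin (Fintype.card ι) ≃ ι, ∀ k : Fin (Fintype.card ι), w (k : ℕ) = v (e k)

open Finset

/-- k-th largest entry (0-indexed) of a finite vector. -/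
noncomputable def kth {ι : Type} [Fintype ι] (x : ι → ℝ) (k : ℕ) : ℝ :=
  if h : ((Finset.univ : Finset ι).powersetCard (k+1)).Nonempty then
    (Finset.univ.powersetCard (k+1)).sup' h
      (fun S => if hS : S.Nonempty then S.inf' hS x else 0)
  else 0

lemma pad_nonneg {ι : Type} [Fintype ι] {x : ι → ℝ} {w : ℕ → ℝ}
    (hx : ∀ i, 0 ≤ x i) (hw : IsSortedPadOf x w) : ∀ k, 0 ≤ w k := by
  obtain ⟨hA, hZ, e, he⟩ := hw
  intro k
  by_cases h : k < Fintype.card ι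
  · have := he ⟨k, h⟩
    simp only [Fin.val_mk] at this
    rw [this]; exact hx _
  · rw [hZ k (le_of_not_gt h)]

lemma pad_sum {ι : Type} [Fintype ι] {x : ι → ℝ} {w : ℕ → ℝ} (hw : IsSortedPadOf x w)
    {N : ℕ} (hN : Fintype.card ι ≤ N) :
    ∑ k ∈ Finset.range N, w k = ∑ i, x i := by
  obtain ⟨hA, hZ, e, he⟩ := hw
  rw [← Finset.sum_subset (Finset.range_subset_range.2 hN)
      (fun k _ hk => hZ k (by simpa using hk))]
  rw [← Fin.sum_univ_eq_sum_range (fun k => w k)]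
  rw [show (∑ k : Fin (Fintype.card ι), w k) = ∑ k : Fin (Fintype.card ι), x (e k) from
    Finset.sum_congr rfl (fun k _ => he k)]
  exact Equiv.sum_comp e x

lemma pad_unique {ι : Type} [Fintype ι] {x : ι → ℝ} {w w' : ℕ → ℝ}
    (hw : IsSortedPadOf x w) (hw' : IsSortedPadOf x w') : w = w' := by
  obtain ⟨hA, hZ, e, he⟩ := hw
  obtain ⟨hA', hZ', e', he'⟩ := hw'
  funext k
  by_cases h : k < Fintype.card ι
  · let g : ι ≃ Fin (Fintype.card ι) := Fintype.equivFin ι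
    let f : Fin (Fintype.card ι) → ℝ := fun j => - x (g.symm j)
    have hval : ∀ (e₀ : Fin (Fintype.card ι) ≃ ι) (w₀ : ℕ → ℝ),
        (∀ k : Fin (Fintype.card ι), w₀ (k : ℕ) = x (e₀ k)) →
        ∀ i, f ((e₀.trans g) i) = - w₀ i := by
      intro e₀ w₀ he₀ i
      show - x (g.symm (g (e₀ i))) = - w₀ i
      rw [Equiv.symm_apply_apply, ← he₀ i]
    have key : ∀ (e₀ : Fin (Fintype.card ι) ≃ ι) (w₀ : ℕ → ℝ), Antitone w₀ →
        (∀ k : Fin (Fintype.card ι), w₀ (k : ℕ) = x (e₀ k)) →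
        Monotone (f ∘ (e₀.trans g)) := by
      intro e₀ w₀ hA₀ he₀ i j hij
      rw [Function.comp_apply, Function.comp_apply, hval e₀ w₀ he₀ i, hval e₀ w₀ he₀ j,
        neg_le_neg_iff]
      exact hA₀ (by exact_mod_cast hij)
    have heq := Tuple.unique_monotone (key e w hA he) (key e' w' hA' he')
    have hk := congrFun heq ⟨k, h⟩
    simp only [Function.comp_apply] at hk
    rw [hval e w he ⟨k, h⟩, hval e' w' he' ⟨k, h⟩] at hk
    have : w (⟨k, h⟩ : Fin (Fintype.card ι)).val = w' (⟨k, h⟩ : Fin (Fintype.card ι)).val := by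
      linarith
    simpa using this
  · rw [hZ k (le_of_not_gt h), hZ' k (le_of_not_gt h)]

lemma pad_exists {ι : Type} [Fintype ι] (x : ι → ℝ) (hx : ∀ i, 0 ≤ x i) :
    ∃ w, IsSortedPadOf x w := by
  classical
  have hn : Fintype.card ι = Fintype.card ι := rfl
  set n := Fintype.card ι with hndef
  set g : ι ≃ Fin n := Fintype.equivFin ι with hgdef
  set g0 : Fin n → ℝ := fun j => - x (g.symm j) with hg0
  set σ := Tuple.sort g0 with hσ
  have hmo : Monotone (g0 ∘ σ) := Tuple.monotone_sort g0
  refine ⟨fun k => if h : k < n then x (g.symm (σ ⟨k, h⟩)) else 0, ?_, ?_, ?_⟩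
  · intro k l hkl
    dsimp only
    by_cases hl : l < n
    · have hk : k < n := lt_of_le_of_lt hkl hl
      rw [dif_pos hl, dif_pos hk]
      have := hmo (show (⟨k, hk⟩ : Fin n) ≤ ⟨l, hl⟩ from hkl)
      simp only [Function.comp_apply, hg0, neg_le_neg_iff] at this
      exact this
    · rw [dif_neg hl]
      by_cases hk : k < n
      · rw [dif_pos hk]; exact hx _
      · rw [dif_neg hk]
  · intro k hk
    dsimp only
    rw [dif_neg (not_lt.2 hk)]
  · refine ⟨(σ : Fin n ≃ Fin n).trans g.symm, fun k => ?_⟩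
    dsimp only
    rw [dif_pos k.isLt]
    simp

lemma kth_eq {ι : Type} [Fintype ι] {x : ι → ℝ} {w : ℕ → ℝ} (hw : IsSortedPadOf x w)
    {k : ℕ} (hk : k < Fintype.card ι) : kth x k = w k := by
  classical
  obtain ⟨hA, hZ, e, he⟩ := hw
  have hk1 : k + 1 ≤ Fintype.card ι := hk
  have hne : ((Finset.univ : Finset ι).powersetCard (k+1)).Nonempty := by
    obtain ⟨t, hts, htc⟩ := Finset.exists_subset_card_eq
      (s := (Finset.univ : Finset ι)) (n := k+1) (by simpa using hk1)
    exact ⟨t, Finset.mem_powersetCard.2 ⟨hts, htc⟩⟩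
  rw [kth, dif_pos hne]
  apply le_antisymm
  · apply Finset.sup'_le
    intro S hS
    obtain ⟨hSsub, hScard⟩ := Finset.mem_powersetCard.1 hS
    have hSne : S.Nonempty := Finset.card_pos.1 (by omega)
    rw [dif_pos hSne]
    have hex : ∃ i ∈ S, k ≤ ((e.symm i : Fin (Fintype.card ι)) : ℕ) := by
      by_contra hcon
      push_neg at hcon
      have hsub : S.image (fun i => ((e.symm i : Fin (Fintype.card ι)) : ℕ)) ⊆
          Finset.range k := by
        intro m hm
        obtain ⟨i, hi, rfl⟩ := Finset.mem_image.1 hm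
        exact Finset.mem_range.2 (hcon i hi)
      have hinj : Function.Injective (fun i : ι => ((e.symm i : Fin (Fintype.card ι)) : ℕ)) :=
        Fin.val_injective.comp e.symm.injective
      have hcardim : (S.image (fun i => ((e.symm i : Fin (Fintype.card ι)) : ℕ))).card = k + 1 := by
        rw [Finset.card_image_of_injective _ hinj, hScard]
      have := Finset.card_le_card hsub
      rw [hcardim, Finset.card_range] at this
      omega
    obtain ⟨i, hiS, hik⟩ := hex
    calc S.inf' hSne x ≤ x i := Finset.inf'_le _ hiS
      _ = w ((e.symm i : Fin (Fintype.card ι)) : ℕ) := by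
          rw [he (e.symm i), e.apply_symm_apply]
      _ ≤ w k := hA hik
  · set S0 : Finset ι :=
      Finset.image (fun j : Fin (k+1) => e (Fin.castLE hk1 j)) Finset.univ with hS0def
    have hinj0 : Function.Injective (fun j : Fin (k+1) => e (Fin.castLE hk1 j)) :=
      e.injective.comp (Fin.castLE_injective hk1)
    have hS0card : S0.card = k + 1 := by
      rw [hS0def, Finset.card_image_of_injective _ hinj0, Finset.card_univ, Fintype.card_fin]
    have hS0mem : S0 ∈ (Finset.univ : Finset ι).powersetCard (k+1) :=
      Finset.mem_powersetCard.2 ⟨Finset.subset_univ _, hS0card⟩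
    have hS0ne : S0.Nonempty := Finset.card_pos.1 (by omega)
    have h1 : w k ≤ (if hS : S0.Nonempty then S0.inf' hS x else 0) := by
      rw [dif_pos hS0ne]
      apply Finset.le_inf'
      intro i hi
      obtain ⟨j, _, rfl⟩ := Finset.mem_image.1 hi
      rw [← he (Fin.castLE hk1 j)]
      exact hA (by simpa using (Fin.is_le j : (j : ℕ) ≤ k))
    exact h1.trans (Finset.le_sup' (fun S => if hS : S.Nonempty then S.inf' hS x else 0) hS0mem)

lemma continuous_finset_sup'' {α X : Type*} [TopologicalSpace X] {s : Finset α}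
    (hs : s.Nonempty) {f : α → X → ℝ} (hf : ∀ i ∈ s, Continuous (f i)) :
    Continuous fun x => s.sup' hs fun i => f i x := by
  induction hs using Finset.Nonempty.cons_induction with
  | singleton a =>
    simp only [Finset.sup'_singleton]
    exact hf a (by simp)
  | cons a s ha hne ihs =>
    have hrw : ∀ x : X, (Finset.cons a s ha).sup' (Finset.cons_nonempty ha) (fun i => f i x)
        = f a x ⊔ s.sup' hne (fun i => f i x) := fun x => Finset.sup'_cons hne _
    simp only [hrw]
    exact Continuous.max (hf a (by simp)) (ihs (fun i hi => hf i (by simp [hi])))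

lemma continuous_finset_inf'' {α X : Type*} [TopologicalSpace X] {s : Finset α}
    (hs : s.Nonempty) {f : α → X → ℝ} (hf : ∀ i ∈ s, Continuous (f i)) :
    Continuous fun x => s.inf' hs fun i => f i x := by
  induction hs using Finset.Nonempty.cons_induction with
  | singleton a =>
    simp only [Finset.inf'_singleton]
    exact hf a (by simp)
  | cons a s ha hne ihs =>
    have hrw : ∀ x : X, (Finset.cons a s ha).inf' (Finset.cons_nonempty ha) (fun i => f i x)
        = f a x ⊓ s.inf' hne (fun i => f i x) := fun x => Finset.inf'_cons hne _
    simp only [hrw]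
    exact Continuous.min (hf a (by simp)) (ihs (fun i hi => hf i (by simp [hi])))

lemma kth_continuous {ι X : Type} [Fintype ι] [TopologicalSpace X]
    (U : X → ι → ℝ) (hU : ∀ i, Continuous fun x => U x i) (k : ℕ) :
    Continuous fun x => kth (U x) k := by
  classical
  unfold kth
  by_cases h : ((Finset.univ : Finset ι).powersetCard (k+1)).Nonempty
  · simp only [dif_pos h]
    apply continuous_finset_sup'' h
    intro S hS
    by_cases hSne : S.Nonempty
    · simp only [dif_pos hSne]
      apply continuous_finset_inf'' hSne
      intro i _
      exact hU i
    · simp only [dif_neg hSne]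
      exact continuous_const
  · simp only [dif_neg h]
    exact continuous_const


/-- if no ancilla distribution `p'` makes the sorted (zero-padded)
product `p ⊗ p'` coincide with the sorted (zero-padded) `q`, then the
zero-communication conversion fidelity is bounded away from `1` uniformly
over ancilla distributions. -/
theorem stmt_9 (a b : ℕ) (ha : 1 ≤ a) (hb : 1 ≤ b)
    (p : Fin a → ℝ) (q : Fin b → ℝ) (hp : IsProbVec p) (hq : IsProbVec q)
    (hno : ¬ ∃ (p' : Fin (a * b) → ℝ) (w : ℕ → ℝ), IsProbVec p' ∧
      IsSortedPadOf (fun x : Fin a × Fin (a * b) => p x.1 * p' x.2) w ∧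
      IsSortedPadOf q w) :
    ∃ ε > 0, ∀ p' : Fin (a * b) → ℝ, IsProbVec p' →
      ∀ u v : ℕ → ℝ,
        IsSortedPadOf (fun x : Fin a × Fin (a * b) => p x.1 * p' x.2) u →
        IsSortedPadOf q v →
        (∑ i ∈ Finset.range (a * (a * b) + b), Real.sqrt (v i * u i)) ^ 2 ≤ 1 - ε := by
  classical
  obtain ⟨v0, hv0⟩ := pad_exists q hq.1
  have hcardP : Fintype.card (Fin a × Fin (a * b)) = a * (a * b) := by simp
  have hbM : b ≤ a * (a * b) :=
    le_trans (Nat.le_mul_of_pos_left b ha) (Nat.le_mul_of_pos_left (a * b) ha)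
  set N := a * (a * b) + b with hNdef
  have hv00 : ∀ k, 0 ≤ v0 k := pad_nonneg hq.1 hv0
  have hsv : ∑ i ∈ Finset.range b, v0 i = 1 := by
    have h := pad_sum hv0 (le_of_eq (Fintype.card_fin b))
    rw [h]; exact hq.2
  set fp : (Fin (a * b) → ℝ) → (Fin a × Fin (a * b) → ℝ) :=
    fun p' x => p x.1 * p' x.2 with hfp
  set G : (Fin (a * b) → ℝ) → ℝ :=
    fun p' => ∑ i ∈ Finset.range b, Real.sqrt (v0 i * kth (fp p') i) with hG
  have hGeq : ∀ p' u, IsSortedPadOf (fp p') u →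
      G p' = ∑ i ∈ Finset.range b, Real.sqrt (v0 i * u i) := by
    intro p' u hu
    simp only [hG]
    apply Finset.sum_congr rfl
    intro i hi
    rw [kth_eq hu (by rw [hcardP]; have := Finset.mem_range.1 hi; omega)]
  have hsum_fp : ∀ p' : Fin (a * b) → ℝ, IsProbVec p' →
      ∑ x : Fin a × Fin (a * b), fp p' x = 1 := by
    intro p' hp'
    simp only [hfp]
    calc ∑ x : Fin a × Fin (a * b), p x.1 * p' x.2
        = ∑ i : Fin a, ∑ j : Fin (a * b), p i * p' j := by rw [Fintype.sum_prod_type]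
      _ = (∑ i, p i) * (∑ j, p' j) := (Finset.sum_mul_sum _ _ _ _).symm
      _ = 1 := by rw [hp.2, hp'.2, mul_one]
  have hstrict : ∀ p' : Fin (a * b) → ℝ, IsProbVec p' → ∀ u, IsSortedPadOf (fp p') u →
      (∑ i ∈ Finset.range b, Real.sqrt (v0 i * u i)) < 1 := by
    intro p' hp' u hu
    have hfpn : ∀ x, 0 ≤ fp p' x := fun x => mul_nonneg (hp.1 _) (hp'.1 _)
    have hu0 : ∀ k, 0 ≤ u k := pad_nonneg hfpn hu
    have hsuN : ∑ i ∈ Finset.range N, u i = 1 := by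
      rw [pad_sum hu (by rw [hcardP]; omega), hsum_fp p' hp']
    have hsb_le : (∑ i ∈ Finset.range b, u i) ≤ 1 := by
      rw [← hsuN]
      apply Finset.sum_le_sum_of_subset_of_nonneg (Finset.range_subset_range.2 (by omega))
      intro i _ _; exact hu0 i
    have hexp : ∑ i ∈ Finset.range b, (Real.sqrt (v0 i) - Real.sqrt (u i)) ^ 2
        = (∑ i ∈ Finset.range b, v0 i) + (∑ i ∈ Finset.range b, u i)
          - 2 * ∑ i ∈ Finset.range b, Real.sqrt (v0 i * u i) := by
      rw [Finset.mul_sum, ← Finset.sum_add_distrib, ← Finset.sum_sub_distrib]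
      apply Finset.sum_congr rfl
      intro i _
      rw [Real.sqrt_mul (hv00 i), sub_sq, Real.sq_sqrt (hv00 i), Real.sq_sqrt (hu0 i)]
      ring
    rw [hsv] at hexp
    have hnn : 0 ≤ ∑ i ∈ Finset.range b, (Real.sqrt (v0 i) - Real.sqrt (u i)) ^ 2 :=
      Finset.sum_nonneg (fun i _ => sq_nonneg _)
    by_contra hcon
    push_neg at hcon
    have hF1 : ∑ i ∈ Finset.range b, Real.sqrt (v0 i * u i) = 1 :=
      le_antisymm (by linarith) hcon
    have hs1 : ∑ i ∈ Finset.range b, u i = 1 := by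
      rw [hF1] at hexp; linarith
    have hzero : ∑ i ∈ Finset.range b, (Real.sqrt (v0 i) - Real.sqrt (u i)) ^ 2 = 0 := by
      rw [hexp, hs1, hF1]; ring
    have hpt := (Finset.sum_eq_zero_iff_of_nonneg (fun i _ => sq_nonneg
      (Real.sqrt (v0 i) - Real.sqrt (u i)))).1 hzero
    have heqb : ∀ i, i < b → u i = v0 i := by
      intro i hi
      have h1 := hpt i (Finset.mem_range.2 hi)
      have h2 : Real.sqrt (v0 i) = Real.sqrt (u i) := by
        have := pow_eq_zero_iff (n := 2) (by norm_num) |>.1 h1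
        linarith
      calc u i = Real.sqrt (u i) ^ 2 := (Real.sq_sqrt (hu0 i)).symm
        _ = Real.sqrt (v0 i) ^ 2 := by rw [h2]
        _ = v0 i := Real.sq_sqrt (hv00 i)
    have hzb : ∀ i, b ≤ i → u i = 0 := by
      intro i hi
      by_cases hiN : i < N
      · have hsd : ∑ j ∈ Finset.range N \ Finset.range b, u j = 0 := by
          rw [Finset.sum_sdiff_eq_sub (Finset.range_subset_range.2 (by omega)), hsuN, hs1]
          ring
        exact (Finset.sum_eq_zero_iff_of_nonneg (fun j _ => hu0 j)).1 hsd i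
          (by simp only [Finset.mem_sdiff, Finset.mem_range]; omega)
      · exact hu.2.1 i (by rw [hcardP]; omega)
    have huv : u = v0 := by
      funext i
      by_cases hi : i < b
      · exact heqb i hi
      · rw [hzb i (le_of_not_gt hi), hv0.2.1 i (by rw [Fintype.card_fin]; omega)]
    exact hno ⟨p', u, hp', hu, by rw [huv]; exact hv0⟩
  have hsimplex : ∀ p' : Fin (a * b) → ℝ, p' ∈ stdSimplex ℝ (Fin (a * b)) ↔ IsProbVec p' :=
    fun p' => Iff.rfl
  have hGcont : Continuous G := by
    simp only [hG]
    apply continuous_finset_sum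
    intro i _
    apply Continuous.sqrt
    apply Continuous.mul continuous_const
    exact kth_continuous (fun p' => fp p')
      (fun x => by simp only [hfp]; exact continuous_const.mul (continuous_apply x.2)) i
  have hunif : IsProbVec (fun _ : Fin (a * b) => ((a * b : ℕ) : ℝ)⁻¹) := by
    constructor
    · intro i; positivity
    · rw [Finset.sum_const, Finset.card_univ, Fintype.card_fin, nsmul_eq_mul]
      exact mul_inv_cancel₀ (Nat.cast_pos.mpr (Nat.mul_pos ha hb)).ne'
  have hKne : (stdSimplex ℝ (Fin (a * b))).Nonempty := ⟨_, (hsimplex _).2 hunif⟩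
  obtain ⟨p0, hp0mem, hmax⟩ :=
    (isCompact_stdSimplex (ι := Fin (a * b)) ℝ).exists_isMaxOn hKne hGcont.continuousOn
  have hp0 : IsProbVec p0 := (hsimplex p0).1 hp0mem
  obtain ⟨u0, hu0⟩ := pad_exists (fp p0) (fun x => mul_nonneg (hp.1 _) (hp0.1 _))
  have hG0 : G p0 < 1 := by
    rw [hGeq p0 u0 hu0]; exact hstrict p0 hp0 u0 hu0
  refine ⟨1 - G p0, by linarith, ?_⟩
  intro p' hp' u v hu hv
  have hvv0 : v = v0 := pad_unique hv hv0
  rw [hvv0]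
  have hsplit : ∑ i ∈ Finset.range N, Real.sqrt (v0 i * u i)
      = ∑ i ∈ Finset.range b, Real.sqrt (v0 i * u i) := by
    symm
    apply Finset.sum_subset (Finset.range_subset_range.2 (by omega))
    intro i _ hi
    rw [hv0.2.1 i (by rw [Fintype.card_fin]; simpa using hi)]
    simp
  have hFle : ∑ i ∈ Finset.range N, Real.sqrt (v0 i * u i) ≤ G p0 := by
    rw [hsplit, ← hGeq p' u hu]
    exact hmax ((hsimplex p').2 hp')
  have hF0 : 0 ≤ ∑ i ∈ Finset.range N, Real.sqrt (v0 i * u i) :=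
    Finset.sum_nonneg (fun i _ => Real.sqrt_nonneg _)
  nlinarith [hFle, hF0, hG0]
end

section
/- Let d, n ≥ 1 and D = d^n, and let p be a nonincreasing probability vector on Fin D. Define ψ, Φ ∈ ℂ^{Fin D × Fin D} by ψ(i,j) = δ_{ij}√(p i) and Φ(i,j) = δ_{ij}·D^{−1/2}. Then the supremum over pairs of unitary D×D complex matrices U, V of |⟨ψ, (U ⊗ V)·Φ⟩|² equals D^{−1}·(Σ_{i=1}^{D} √(p i))². (The optimal fidelity of diluting n copies of the d-dimensional maximally entangled state into a target pure state using local unitaries and zero communication is d^{−n} times the (d^n, 1/2)-quasinorm of the target Schmidt distribution.) -/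
open Matrix
open scoped Kronecker

lemma sum_simp (D : ℕ) (U V : Matrix (Fin (d ^ n)) (Fin (d ^ n)) ℂ) (a : Fin (d ^ n) → ℝ) (c : ℝ) :
    (∑ y : Fin (d ^ n) × Fin (d ^ n),
      (starRingEnd ℂ) (if y.1 = y.2 then (Real.sqrt (a y.1) : ℂ) else 0) *
        ((U ⊗ₖ V) *ᵥ (fun z : Fin (d ^ n) × Fin (d ^ n) => if z.1 = z.2 then ((c:ℝ) : ℂ) else 0)) y)
    = ∑ i, (Real.sqrt (a i) : ℂ) * c * ∑ k, U i k * V i k := by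
  simp only [mulVec, dotProduct, Fintype.sum_prod_type, kroneckerMap_apply, mul_ite, mul_zero,
    ite_mul, zero_mul, Finset.sum_ite_eq, Finset.sum_ite_eq', Finset.mem_univ, if_true,
    apply_ite (starRingEnd ℂ), map_zero, Complex.conj_ofReal]
  rw [Finset.sum_congr rfl]; intro i _; rw [Finset.mul_sum, Finset.mul_sum]; apply Finset.sum_congr rfl; intro k _; ring

lemma row_sq (D : ℕ) (U : Matrix (Fin (d ^ n)) (Fin (d ^ n)) ℂ)
    (hU : U ∈ Matrix.unitaryGroup (Fin (d ^ n)) ℂ) (i : Fin (d ^ n)) :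
    ∑ k, ‖U i k‖ ^ 2 = 1 := by
  have h : U * star U = 1 := (Matrix.mem_unitaryGroup_iff).mp hU
  have h2 : (U * star U) i i = (1 : Matrix (Fin (d ^ n)) (Fin (d ^ n)) ℂ) i i := by rw [h]
  simp only [Matrix.mul_apply, Matrix.star_apply, Matrix.one_apply_eq] at h2
  have : ∑ k, ((‖U i k‖ ^ 2 : ℝ) : ℂ) = 1 := by
    rw [← h2]; apply Finset.sum_congr rfl; intro k _
    rw [RCLike.star_def, Complex.mul_conj, Complex.sq_norm]
  exact_mod_cast this

lemma cs_bound (D : ℕ) (U V : Matrix (Fin (d ^ n)) (Fin (d ^ n)) ℂ)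
    (hU : U ∈ Matrix.unitaryGroup (Fin (d ^ n)) ℂ) (hV : V ∈ Matrix.unitaryGroup (Fin (d ^ n)) ℂ)
    (i : Fin (d ^ n)) : ‖∑ k, U i k * V i k‖ ≤ 1 := by
  calc ‖∑ k, U i k * V i k‖ ≤ ∑ k, ‖U i k‖ * ‖V i k‖ := by
        simpa using norm_sum_le Finset.univ (fun k => U i k * V i k)
    _ ≤ 1 := by
        have h := Finset.sum_mul_sq_le_sq_mul_sq Finset.univ (fun k => ‖U i k‖)
          (fun k => ‖V i k‖)
        simp only [row_sq D U hU i, row_sq D V hV i, mul_one] at h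
        have hnn : 0 ≤ ∑ k, ‖U i k‖ * ‖V i k‖ :=
          Finset.sum_nonneg fun k _ => mul_nonneg (norm_nonneg _) (norm_nonneg _)
        nlinarith

/-- dilution under local unitaries.  The supremum over local
unitaries `U, V` of the fidelity between the target state with nonincreasing
Schmidt distribution `p` and `(U ⊗ V)` applied to `n` copies of the
`d`-dimensional maximally entangled state (total dimension `D = d^n`) equals
`D⁻¹ (∑ i, √(p i))²`. -/
theorem stmt_11 (d n : ℕ) (hd : 1 ≤ d) (hn : 1 ≤ n)
    (p : Fin (d ^ n) → ℝ) (hp0 : ∀ i, 0 ≤ p i) (hp1 : ∑ i, p i = 1)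
    (hpa : Antitone p) :
    sSup {x : ℝ |
      ∃ U ∈ Matrix.unitaryGroup (Fin (d ^ n)) ℂ,
        ∃ V ∈ Matrix.unitaryGroup (Fin (d ^ n)) ℂ,
          x = ‖∑ y : Fin (d ^ n) × Fin (d ^ n),
            (starRingEnd ℂ) (if y.1 = y.2 then (Real.sqrt (p y.1) : ℂ) else 0) *
              ((U ⊗ₖ V) *ᵥ
                (fun z : Fin (d ^ n) × Fin (d ^ n) =>
                  if z.1 = z.2 then (((Real.sqrt ((d : ℝ) ^ n))⁻¹ : ℝ) : ℂ) else 0)) y‖ ^ 2}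
    = ((d : ℝ) ^ n)⁻¹ * (∑ i, Real.sqrt (p i)) ^ 2 := by
  set c : ℝ := (Real.sqrt ((d : ℝ) ^ n))⁻¹ with hc
  have hDpos : (0 : ℝ) < (d : ℝ) ^ n := by positivity
  have hcpos : 0 < c := by
    rw [hc]; exact inv_pos.mpr (Real.sqrt_pos.mpr hDpos)
  have hc2 : c ^ 2 = ((d : ℝ) ^ n)⁻¹ := by
    rw [hc, ← Real.sqrt_inv, Real.sq_sqrt (by positivity)]
  have hsnn : 0 ≤ ∑ i, Real.sqrt (p i) :=
    Finset.sum_nonneg fun i _ => Real.sqrt_nonneg _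
  -- the common bound
  have key : ∀ U ∈ Matrix.unitaryGroup (Fin (d ^ n)) ℂ, ∀ V ∈ Matrix.unitaryGroup (Fin (d ^ n)) ℂ,
      ‖∑ y : Fin (d ^ n) × Fin (d ^ n),
        (starRingEnd ℂ) (if y.1 = y.2 then (Real.sqrt (p y.1) : ℂ) else 0) *
          ((U ⊗ₖ V) *ᵥ (fun z : Fin (d ^ n) × Fin (d ^ n) =>
            if z.1 = z.2 then ((c : ℝ) : ℂ) else 0)) y‖ ^ 2
      ≤ ((d : ℝ) ^ n)⁻¹ * (∑ i, Real.sqrt (p i)) ^ 2 := by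
    intro U hU V hV
    rw [sum_simp (d ^ n) U V p c]
    have habs : ‖∑ i, (Real.sqrt (p i) : ℂ) * (c : ℂ) * ∑ k, U i k * V i k‖
        ≤ (∑ i, Real.sqrt (p i)) * c := by
      calc ‖∑ i, (Real.sqrt (p i) : ℂ) * (c : ℂ) * ∑ k, U i k * V i k‖
          ≤ ∑ i, ‖(Real.sqrt (p i) : ℂ) * (c : ℂ) * ∑ k, U i k * V i k‖ := by
            simpa using norm_sum_le Finset.univ
              (fun i => (Real.sqrt (p i) : ℂ) * (c : ℂ) * ∑ k, U i k * V i k)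
        _ ≤ ∑ i, Real.sqrt (p i) * c := by
            apply Finset.sum_le_sum
            intro i _
            rw [norm_mul, norm_mul, Complex.norm_real, Complex.norm_real, Real.norm_eq_abs, Real.norm_eq_abs,
              abs_of_nonneg (Real.sqrt_nonneg _), abs_of_nonneg hcpos.le]
            have := cs_bound (d ^ n) U V hU hV i
            nlinarith [Real.sqrt_nonneg (p i), hcpos.le, mul_nonneg (Real.sqrt_nonneg (p i)) hcpos.le,
              norm_nonneg (∑ k, U i k * V i k)]
        _ = (∑ i, Real.sqrt (p i)) * c := by rw [← Finset.sum_mul]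
    calc ‖∑ i, (Real.sqrt (p i) : ℂ) * (c : ℂ) * ∑ k, U i k * V i k‖ ^ 2
        ≤ ((∑ i, Real.sqrt (p i)) * c) ^ 2 := by
          apply pow_le_pow_left₀ (norm_nonneg _) habs
      _ = ((d : ℝ) ^ n)⁻¹ * (∑ i, Real.sqrt (p i)) ^ 2 := by
          rw [mul_pow, hc2]; ring
  -- the value is attained at U = V = 1
  have mem : (((d : ℝ) ^ n)⁻¹ * (∑ i, Real.sqrt (p i)) ^ 2) ∈ {x : ℝ |
      ∃ U ∈ Matrix.unitaryGroup (Fin (d ^ n)) ℂ,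
        ∃ V ∈ Matrix.unitaryGroup (Fin (d ^ n)) ℂ,
          x = ‖∑ y : Fin (d ^ n) × Fin (d ^ n),
            (starRingEnd ℂ) (if y.1 = y.2 then (Real.sqrt (p y.1) : ℂ) else 0) *
              ((U ⊗ₖ V) *ᵥ (fun z : Fin (d ^ n) × Fin (d ^ n) =>
                if z.1 = z.2 then ((c : ℝ) : ℂ) else 0)) y‖ ^ 2} := by
    refine ⟨1, Submonoid.one_mem _, 1, Submonoid.one_mem _, ?_⟩
    rw [sum_simp (d ^ n) 1 1 p c]
    have hone : ∀ i : Fin (d ^ n), (∑ k, (1 : Matrix (Fin (d ^ n)) (Fin (d ^ n)) ℂ) i k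
        * (1 : Matrix (Fin (d ^ n)) (Fin (d ^ n)) ℂ) i k) = 1 := by
      intro i
      simp [Matrix.one_apply, ite_and]
    simp only [hone, mul_one]
    have : (∑ i, (Real.sqrt (p i) : ℂ) * (c : ℂ)) = (((∑ i, Real.sqrt (p i)) * c : ℝ) : ℂ) := by
      push_cast [Finset.sum_mul]; ring_nf
    rw [this, Complex.norm_real, Real.norm_eq_abs, abs_of_nonneg (mul_nonneg hsnn hcpos.le), mul_pow, hc2]
    ring
  apply le_antisymm
  · apply csSup_le ⟨_, mem⟩
    rintro x ⟨U, hU, V, hV, rfl⟩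
    exact key U hU V hV
  · apply le_csSup
    · refine ⟨((d : ℝ) ^ n)⁻¹ * (∑ i, Real.sqrt (p i)) ^ 2, ?_⟩
      rintro x ⟨U, hU, V, hV, rfl⟩
      exact key U hU V hV
    · exact mem
end

section
/- Let q be a nonincreasing probability vector on Fin N (N ≥ 1), let k ≥ 1, set L = ⌈N/k⌉, and for 1 ≤ i ≤ L define α_i = Σ_{j=(i−1)k+1}^{min(i·k, N)} √(q j). Let u denote the uniform probability vector on Fin k. Then: (1) for every nonincreasing probability vector p' on Fin L, Σ_{j=1}^{N} √( q(j) · (u⊗p')↓(j) ) = k^{−1/2} · Σ_{i=1}^{L} α_i·√(p' i); and (2) the supremum over all probability vectors p' on arbitrary finite index sets of (Σ_j √( q↓(j) · (u⊗p')↓(j) ))² equals k^{−1} times the supremum over nonincreasing probability vectors p' on Fin L of (Σ_{i=1}^{L} α_i √(p' i))². (This expresses the optimal zero-communication distillation fidelity into a k-dimensional maximally entangled state as a finite-dimensional optimization.) -/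
private lemma sortedPad_unique {ι : Type} [Fintype ι] {v : ι → ℝ} {w w' : ℕ → ℝ}
    (h : IsSortedPadOf v w) (h' : IsSortedPadOf v w') : w = w' := by
  obtain ⟨ha, hz, e, he⟩ := h
  obtain ⟨ha', hz', e', he'⟩ := h'
  have key : ∀ (u : ℕ → ℝ) (f : Fin (Fintype.card ι) ≃ ι),
      (∀ j : Fin (Fintype.card ι), u (j : ℕ) = v (f j)) →
      ((List.ofFn fun j : Fin (Fintype.card ι) => u (j : ℕ)) : Multiset ℝ)
        = Multiset.map v Finset.univ.val := by
    intro u f hf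
    have h1 : (fun j : Fin (Fintype.card ι) => u (j : ℕ)) = v ∘ f := funext hf
    rw [h1, List.ofFn_eq_map, ← Multiset.map_coe]
    have h2 : ((List.finRange (Fintype.card ι) : List (Fin (Fintype.card ι))) : Multiset _)
        = (Finset.univ : Finset (Fin (Fintype.card ι))).val := rfl
    rw [h2, ← Multiset.map_map]
    congr 1
    calc Multiset.map f Finset.univ.val = (Finset.map f.toEmbedding Finset.univ).val := rfl
      _ = Finset.univ.val := by rw [Finset.map_univ_equiv]
  have hperm : List.Perm (List.ofFn fun j : Fin (Fintype.card ι) => w (j : ℕ))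
      (List.ofFn fun j : Fin (Fintype.card ι) => w' (j : ℕ)) :=
    Multiset.coe_eq_coe.mp ((key w e he).trans (key w' e' he').symm)
  have hs : ∀ u : ℕ → ℝ, Antitone u →
      (List.ofFn fun j : Fin (Fintype.card ι) => u (j : ℕ)).Pairwise (· ≥ ·) := by
    intro u hu
    rw [List.pairwise_ofFn]
    intro a b hab
    exact hu (le_of_lt (show (a : ℕ) < (b : ℕ) from hab))
  have heq := List.Perm.eq_of_pairwise' (hs w ha) (hs w' ha') hperm
  have heq2 := List.ofFn_injective heq
  funext j
  by_cases hj : j < Fintype.card ι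
  · exact congrFun heq2 ⟨j, hj⟩
  · rw [hz j (le_of_not_gt hj), hz' j (le_of_not_gt hj)]

private lemma sortedPad_comp {ι : Type} [Fintype ι] {v : ι → ℝ} {w : ℕ → ℝ}
    (h : IsSortedPadOf v w) (π : ι ≃ ι) : IsSortedPadOf (v ∘ π) w := by
  obtain ⟨ha, hz, e, he⟩ := h
  exact ⟨ha, hz, e.trans π.symm, fun j => by simpa using he j⟩

private lemma sortedPad_explicit (k c : ℕ) (hk : 1 ≤ k) (p : Fin c → ℝ)
    (hp0 : ∀ i, 0 ≤ p i) (hpa : Antitone p) :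
    IsSortedPadOf (fun x : Fin k × Fin c => (1 / (k : ℝ)) * p x.2)
      (fun j : ℕ => (1 / (k : ℝ)) * (if h : j / k < c then p ⟨j / k, h⟩ else 0)) := by
  have hk0 : 0 < k := hk
  have hk0' : (0 : ℝ) ≤ 1 / (k : ℝ) := by positivity
  have hcard : Fintype.card (Fin k × Fin c) = c * k := by simp [mul_comm]
  have hptA : Antitone (fun i : ℕ => if h : i < c then p ⟨i, h⟩ else 0) := by
    intro a b hab
    by_cases hbc : b < c
    · have hac : a < c := lt_of_le_of_lt hab hbc
      simp only [dif_pos hbc, dif_pos hac]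
      exact hpa (show (⟨a, hac⟩ : Fin c) ≤ ⟨b, hbc⟩ from hab)
    · simp only [dif_neg hbc]
      by_cases hac : a < c
      · simp only [dif_pos hac]; exact hp0 _
      · simp [dif_neg hac]
  refine ⟨?_, ?_, ?_⟩
  · intro a b hab
    exact mul_le_mul_of_nonneg_left (hptA (Nat.div_le_div_right hab)) hk0'
  · intro j hj
    rw [hcard] at hj
    have : c ≤ j / k := (Nat.le_div_iff_mul_le hk0).mpr hj
    simp [dif_neg (not_lt.mpr this)]
  · refine ⟨(finCongr hcard).trans ((finProdFinEquiv (m := c) (n := k)).symm.trans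
      (Equiv.prodComm (Fin c) (Fin k))), fun j => ?_⟩
    have hjlt : (j : ℕ) < c * k := by rw [← hcard]; exact j.isLt
    have hdiv : (j : ℕ) / k < c := (Nat.div_lt_iff_lt_mul hk0).mpr hjlt
    simp only [Equiv.trans_apply, Equiv.prodComm_apply, Prod.snd_swap, dif_pos hdiv]
    congr 1

private lemma block_sum (N k L : ℕ) (hk : 1 ≤ k) (hNL : N ≤ L * k) (F G : ℕ → ℝ) :
    ∑ j ∈ Finset.range N, F j * G (j / k) =
      ∑ i ∈ Finset.range L,
        (∑ j ∈ Finset.Ico (i * k) (min ((i + 1) * k) N), F j) * G i := by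
  have hk0 : 0 < k := hk
  have hdisj : ∀ a b : ℕ, a < b →
      Disjoint (Finset.Ico (a * k) (min ((a + 1) * k) N))
        (Finset.Ico (b * k) (min ((b + 1) * k) N)) := by
    intro a b hab
    rw [Finset.disjoint_left]
    intro j hj hj'
    rw [Finset.mem_Ico, lt_min_iff] at hj hj'
    exact absurd (lt_of_lt_of_le hj.2.1 (le_trans (Nat.mul_le_mul_right k hab) hj'.1))
      (lt_irrefl j)
  have hcover : (Finset.range L).biUnion
      (fun i => Finset.Ico (i * k) (min ((i + 1) * k) N)) = Finset.range N := by
    ext j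
    simp only [Finset.mem_biUnion, Finset.mem_range, Finset.mem_Ico, lt_min_iff]
    constructor
    · rintro ⟨i, _, _, _, hjN⟩; exact hjN
    · intro hj
      refine ⟨j / k, ?_, Nat.div_mul_le_self j k, ?_, hj⟩
      · exact (Nat.div_lt_iff_lt_mul hk0).mpr (lt_of_lt_of_le hj hNL)
      · exact (Nat.div_lt_iff_lt_mul hk0).mp (Nat.lt_succ_self _)
  calc ∑ j ∈ Finset.range N, F j * G (j / k)
      = ∑ i ∈ Finset.range L, ∑ j ∈ Finset.Ico (i * k) (min ((i + 1) * k) N),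
          F j * G (j / k) := by
        rw [← hcover, Finset.sum_biUnion]
        intro a ha b hb hab
        rcases lt_or_gt_of_ne hab with h | h
        · exact hdisj a b h
        · exact (hdisj b a h).symm
    _ = ∑ i ∈ Finset.range L,
        (∑ j ∈ Finset.Ico (i * k) (min ((i + 1) * k) N), F j) * G i := by
        refine Finset.sum_congr rfl fun i _ => ?_
        rw [Finset.sum_mul]
        refine Finset.sum_congr rfl fun j hj => ?_
        rw [Finset.mem_Ico, lt_min_iff] at hj
        congr 2
        exact Nat.div_eq_of_lt_le hj.1 hj.2.1

private lemma main_sum (N k : ℕ) (hk : 1 ≤ k) (q : Fin N → ℝ) (hq0 : ∀ i, 0 ≤ q i)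
    (pt : ℕ → ℝ) (hpt0 : ∀ i, 0 ≤ pt i) :
    ∑ j : Fin N, Real.sqrt (q j * ((1 / (k : ℝ)) * pt ((j : ℕ) / k))) =
      (Real.sqrt k)⁻¹ * ∑ i ∈ Finset.range ((N + k - 1) / k),
        (∑ j ∈ Finset.Ico (i * k) (min ((i + 1) * k) N),
          Real.sqrt (if h : j < N then q ⟨j, h⟩ else 0)) * Real.sqrt (pt i) := by
  have hk0 : 0 < k := hk
  have hNL : N ≤ ((N + k - 1) / k) * k := by
    have h1 : N + k - 1 < ((N + k - 1) / k + 1) * k :=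
      (Nat.div_lt_iff_lt_mul hk0).mp (Nat.lt_succ_self _)
    rw [add_mul, one_mul] at h1
    omega
  have step1 : ∀ j : Fin N, Real.sqrt (q j * ((1 / (k : ℝ)) * pt ((j : ℕ) / k)))
      = Real.sqrt (if h : (j : ℕ) < N then q ⟨(j : ℕ), h⟩ else 0)
        * Real.sqrt (pt ((j : ℕ) / k)) * (Real.sqrt k)⁻¹ := by
    intro j
    rw [dif_pos j.isLt, Fin.eta,
      show q j * ((1 / (k : ℝ)) * pt ((j : ℕ) / k))
        = (q j * pt ((j : ℕ) / k)) * ((k : ℝ))⁻¹ by ring,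
      Real.sqrt_mul (mul_nonneg (hq0 j) (hpt0 _)), Real.sqrt_mul (hq0 j), Real.sqrt_inv]
  calc ∑ j : Fin N, Real.sqrt (q j * ((1 / (k : ℝ)) * pt ((j : ℕ) / k)))
      = ∑ j : Fin N, Real.sqrt (if h : (j : ℕ) < N then q ⟨(j : ℕ), h⟩ else 0)
          * Real.sqrt (pt ((j : ℕ) / k)) * (Real.sqrt k)⁻¹ :=
        Finset.sum_congr rfl fun j _ => step1 j
    _ = (Real.sqrt k)⁻¹ * ∑ j ∈ Finset.range N,
          Real.sqrt (if h : j < N then q ⟨j, h⟩ else 0) * Real.sqrt (pt (j / k)) := by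
        rw [← Finset.sum_mul, mul_comm,
          Fin.sum_univ_eq_sum_range
            (fun j => Real.sqrt (if h : j < N then q ⟨j, h⟩ else 0) * Real.sqrt (pt (j / k))) N]
    _ = _ := by
        rw [block_sum N k ((N + k - 1) / k) hk hNL
          (fun j => Real.sqrt (if h : j < N then q ⟨j, h⟩ else 0))
          (fun i => Real.sqrt (pt i))]


/-- distillation into a `k`-dimensional maximally entangled state
(uniform distribution `u` on `Fin k`), seed Schmidt distribution `q`
nonincreasing on `Fin N`, `L = ⌈N/k⌉`,
`α i = ∑_{j = i·k}^{min((i+1)·k, N) - 1} √(q j)` (zero-indexed blocks).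
(1) For every nonincreasing ancilla distribution `p'` on `Fin L`,
`∑_{j<N} √(q j · (u⊗p')↓ j) = k^{-1/2} ∑ i, α i √(p' i)`; and
(2) the supremum of the fidelity over all ancilla distributions equals
`k⁻¹` times the supremum over nonincreasing `p'` on `Fin L` of `(∑ i, α i √(p' i))²`. -/
theorem stmt_12 (N k : ℕ) (hN : 1 ≤ N) (hk : 1 ≤ k)
    (q : Fin N → ℝ) (hq : IsProbVec q) (hqa : Antitone q) :
    (∀ p' : Fin ((N + k - 1) / k) → ℝ, IsProbVec p' → Antitone p' →
      ∀ w : ℕ → ℝ,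
        IsSortedPadOf
          (fun x : Fin k × Fin ((N + k - 1) / k) => (1 / (k : ℝ)) * p' x.2) w →
        ∑ j : Fin N, Real.sqrt (q j * w (j : ℕ)) =
          (Real.sqrt k)⁻¹ * ∑ i : Fin ((N + k - 1) / k),
            (∑ j ∈ Finset.Ico ((i : ℕ) * k) (min (((i : ℕ) + 1) * k) N),
              Real.sqrt (if h : j < N then q ⟨j, h⟩ else 0)) * Real.sqrt (p' i))
    ∧
    sSup {x : ℝ | ∃ (c : ℕ) (p' : Fin c → ℝ) (w : ℕ → ℝ), IsProbVec p' ∧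
        IsSortedPadOf (fun y : Fin k × Fin c => (1 / (k : ℝ)) * p' y.2) w ∧
        x = (∑ j : Fin N, Real.sqrt (q j * w (j : ℕ))) ^ 2}
      = (k : ℝ)⁻¹ * sSup {y : ℝ |
          ∃ p' : Fin ((N + k - 1) / k) → ℝ, IsProbVec p' ∧ Antitone p' ∧
            y = (∑ i : Fin ((N + k - 1) / k),
              (∑ j ∈ Finset.Ico ((i : ℕ) * k) (min (((i : ℕ) + 1) * k) N),
                Real.sqrt (if h : j < N then q ⟨j, h⟩ else 0)) *
                  Real.sqrt (p' i)) ^ 2} := by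
  have hk0 : 0 < k := hk
  have hkR : (0 : ℝ) < k := by exact_mod_cast hk0
  have hL0 : 0 < (N + k - 1) / k := Nat.div_pos (by omega) hk0
  have hq1 : ∀ j, q j ≤ 1 := fun j =>
    hq.2 ▸ Finset.single_le_sum (fun i _ => hq.1 i) (Finset.mem_univ j)
  have hA0 : ∀ i : ℕ, 0 ≤ ∑ j ∈ Finset.Ico (i * k) (min ((i + 1) * k) N),
      Real.sqrt (if h : j < N then q ⟨j, h⟩ else 0) :=
    fun i => Finset.sum_nonneg fun j _ => Real.sqrt_nonneg _
  -- part 1, for any `c` in place of `L`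
  have part1 : ∀ (c : ℕ) (p' : Fin c → ℝ), IsProbVec p' → Antitone p' →
      ∀ w : ℕ → ℝ,
        IsSortedPadOf (fun x : Fin k × Fin c => (1 / (k : ℝ)) * p' x.2) w →
        ∑ j : Fin N, Real.sqrt (q j * w (j : ℕ)) =
          (Real.sqrt k)⁻¹ * ∑ i ∈ Finset.range ((N + k - 1) / k),
            (∑ j ∈ Finset.Ico (i * k) (min ((i + 1) * k) N),
              Real.sqrt (if h : j < N then q ⟨j, h⟩ else 0)) *
            Real.sqrt (if h : i < c then p' ⟨i, h⟩ else 0) := by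
    intro c p' hp hpa w hw
    have hwW := sortedPad_unique hw (sortedPad_explicit k c hk p' hp.1 hpa)
    rw [hwW]
    exact main_sum N k hk q hq.1 (fun i => if h : i < c then p' ⟨i, h⟩ else 0)
      (fun i => by split; exacts [hp.1 _, le_refl 0])
  have dite_sum : ∀ (c : ℕ) (p' : Fin c → ℝ),
      ∑ i ∈ Finset.range c,
        (∑ j ∈ Finset.Ico (i * k) (min ((i + 1) * k) N),
          Real.sqrt (if h : j < N then q ⟨j, h⟩ else 0)) *
          Real.sqrt (if h : i < c then p' ⟨i, h⟩ else 0)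
      = ∑ i : Fin c,
        (∑ j ∈ Finset.Ico ((i : ℕ) * k) (min (((i : ℕ) + 1) * k) N),
          Real.sqrt (if h : j < N then q ⟨j, h⟩ else 0)) * Real.sqrt (p' i) := by
    intro c p'
    rw [← Fin.sum_univ_eq_sum_range (fun i =>
      (∑ j ∈ Finset.Ico (i * k) (min ((i + 1) * k) N),
        Real.sqrt (if h : j < N then q ⟨j, h⟩ else 0)) *
        Real.sqrt (if h : i < c then p' ⟨i, h⟩ else 0)) c]
    exact Finset.sum_congr rfl fun i _ => by rw [dif_pos i.isLt, Fin.eta]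
  refine ⟨?_, ?_⟩
  · intro p' hp hpa w hw
    rw [part1 _ p' hp hpa w hw, dite_sum _ p']
  -- part 2
  set L := (N + k - 1) / k with hLdef
  set S : Set ℝ := {x : ℝ | ∃ (c : ℕ) (p' : Fin c → ℝ) (w : ℕ → ℝ), IsProbVec p' ∧
      IsSortedPadOf (fun y : Fin k × Fin c => (1 / (k : ℝ)) * p' y.2) w ∧
      x = (∑ j : Fin N, Real.sqrt (q j * w (j : ℕ))) ^ 2} with hSdef
  set T : Set ℝ := {y : ℝ |
      ∃ p' : Fin L → ℝ, IsProbVec p' ∧ Antitone p' ∧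
        y = (∑ i : Fin L,
          (∑ j ∈ Finset.Ico ((i : ℕ) * k) (min (((i : ℕ) + 1) * k) N),
            Real.sqrt (if h : j < N then q ⟨j, h⟩ else 0)) *
              Real.sqrt (p' i)) ^ 2} with hTdef
  have hsqk : ((Real.sqrt k)⁻¹) ^ 2 = (k : ℝ)⁻¹ := by
    rw [← Real.sqrt_inv, Real.sq_sqrt (inv_nonneg.mpr hkR.le)]
  have claimA : ∀ p' : Fin L → ℝ, IsProbVec p' → Antitone p' →
      (k : ℝ)⁻¹ * (∑ i : Fin L,
        (∑ j ∈ Finset.Ico ((i : ℕ) * k) (min (((i : ℕ) + 1) * k) N),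
          Real.sqrt (if h : j < N then q ⟨j, h⟩ else 0)) *
            Real.sqrt (p' i)) ^ 2 ∈ S := by
    intro p' hp hpa
    refine ⟨L, p', _, hp, sortedPad_explicit k L hk p' hp.1 hpa, ?_⟩
    rw [part1 L p' hp hpa _ (sortedPad_explicit k L hk p' hp.1 hpa), dite_sum L p',
      mul_pow, hsqk]
  have bddS : BddAbove S := by
    refine ⟨(N : ℝ) ^ 2, fun x hx => ?_⟩
    obtain ⟨c, p', w, hp, hw, rfl⟩ := hx
    have hp1 : ∀ i, p' i ≤ 1 := fun i =>
      hp.2 ▸ Finset.single_le_sum (fun i _ => hp.1 i) (Finset.mem_univ i)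
    have hw01 : ∀ j : ℕ, 0 ≤ w j ∧ w j ≤ 1 := by
      intro j
      obtain ⟨ha, hz, e, he⟩ := hw
      by_cases hj : j < Fintype.card (Fin k × Fin c)
      · have hwj := he ⟨j, hj⟩
        simp only at hwj
        rw [hwj]
        constructor
        · exact mul_nonneg (by positivity) (hp.1 _)
        · have h1k : 1 / (k : ℝ) ≤ 1 := by
            rw [div_le_one hkR]; exact_mod_cast hk
          calc (1 / (k : ℝ)) * p' _ ≤ 1 * 1 :=
              mul_le_mul h1k (hp1 _) (hp.1 _) zero_le_one
            _ = 1 := by ring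
      · rw [hz j (le_of_not_gt hj)]; exact ⟨le_refl 0, zero_le_one⟩
    have hterm : ∀ j : Fin N, Real.sqrt (q j * w (j : ℕ)) ≤ 1 := fun j =>
      Real.sqrt_le_one.mpr (mul_le_one₀ (hq1 j) (hw01 _).1 (hw01 _).2)
    have hsum0 : 0 ≤ ∑ j : Fin N, Real.sqrt (q j * w (j : ℕ)) :=
      Finset.sum_nonneg fun j _ => Real.sqrt_nonneg _
    have hsum : ∑ j : Fin N, Real.sqrt (q j * w (j : ℕ)) ≤ (N : ℝ) := by
      calc ∑ j : Fin N, Real.sqrt (q j * w (j : ℕ)) ≤ ∑ _j : Fin N, (1 : ℝ) :=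
            Finset.sum_le_sum fun j _ => hterm j
        _ = N := by simp
    exact pow_le_pow_left₀ hsum0 hsum 2
  have bddT : BddAbove T := by
    refine ⟨((L : ℝ) * k) ^ 2, fun y hy => ?_⟩
    obtain ⟨p', hp, hpa, rfl⟩ := hy
    have hp1 : ∀ i, p' i ≤ 1 := fun i =>
      hp.2 ▸ Finset.single_le_sum (fun i _ => hp.1 i) (Finset.mem_univ i)
    have hAk : ∀ i : ℕ, (∑ j ∈ Finset.Ico (i * k) (min ((i + 1) * k) N),
        Real.sqrt (if h : j < N then q ⟨j, h⟩ else 0)) ≤ (k : ℝ) := by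
      intro i
      have hb : ∀ j ∈ Finset.Ico (i * k) (min ((i + 1) * k) N),
          Real.sqrt (if h : j < N then q ⟨j, h⟩ else 0) ≤ 1 := by
        intro j _
        split
        · exact Real.sqrt_le_one.mpr (hq1 _)
        · rw [Real.sqrt_zero]; exact zero_le_one
      calc (∑ j ∈ Finset.Ico (i * k) (min ((i + 1) * k) N),
            Real.sqrt (if h : j < N then q ⟨j, h⟩ else 0))
          ≤ ∑ _j ∈ Finset.Ico (i * k) (min ((i + 1) * k) N), (1 : ℝ) :=
            Finset.sum_le_sum hb
        _ = ((Finset.Ico (i * k) (min ((i + 1) * k) N)).card : ℝ) := by simp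
        _ ≤ (k : ℝ) := by
            rw [Nat.card_Ico]
            have h2 : (i + 1) * k = i * k + k := by ring
            have : min ((i + 1) * k) N - i * k ≤ k := by omega
            exact_mod_cast this
    have hterm : ∀ i : Fin L,
        (∑ j ∈ Finset.Ico ((i : ℕ) * k) (min (((i : ℕ) + 1) * k) N),
          Real.sqrt (if h : j < N then q ⟨j, h⟩ else 0)) * Real.sqrt (p' i) ≤ (k : ℝ) := by
      intro i
      calc (∑ j ∈ Finset.Ico ((i : ℕ) * k) (min (((i : ℕ) + 1) * k) N),
            Real.sqrt (if h : j < N then q ⟨j, h⟩ else 0)) * Real.sqrt (p' i)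
          ≤ (k : ℝ) * 1 :=
            mul_le_mul (hAk (i : ℕ)) (Real.sqrt_le_one.mpr (hp1 i)) (Real.sqrt_nonneg _) hkR.le
        _ = k := by ring
    have hsum0 : 0 ≤ ∑ i : Fin L,
        (∑ j ∈ Finset.Ico ((i : ℕ) * k) (min (((i : ℕ) + 1) * k) N),
          Real.sqrt (if h : j < N then q ⟨j, h⟩ else 0)) * Real.sqrt (p' i) :=
      Finset.sum_nonneg fun i _ => mul_nonneg (hA0 _) (Real.sqrt_nonneg _)
    have hsum : (∑ i : Fin L,
        (∑ j ∈ Finset.Ico ((i : ℕ) * k) (min (((i : ℕ) + 1) * k) N),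
          Real.sqrt (if h : j < N then q ⟨j, h⟩ else 0)) * Real.sqrt (p' i)) ≤ (L : ℝ) * k := by
      calc (∑ i : Fin L,
            (∑ j ∈ Finset.Ico ((i : ℕ) * k) (min (((i : ℕ) + 1) * k) N),
              Real.sqrt (if h : j < N then q ⟨j, h⟩ else 0)) * Real.sqrt (p' i))
          ≤ ∑ _i : Fin L, (k : ℝ) := Finset.sum_le_sum fun i _ => hterm i
        _ = (L : ℝ) * k := by simp [mul_comm]
    exact pow_le_pow_left₀ hsum0 hsum 2
  have claimB : ∀ x ∈ S, ∃ y ∈ T, x ≤ (k : ℝ)⁻¹ * y := by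
    intro x hx
    obtain ⟨c, p', w, hp, hw, rfl⟩ := hx
    set π : Equiv.Perm (Fin c) := Fin.revPerm.trans (Tuple.sort p') with hπ
    set p₀ : Fin c → ℝ := p' ∘ π with hp₀
    have hp₀a : Antitone p₀ := fun a b hab =>
      Tuple.monotone_sort p' (Fin.rev_le_rev.mpr hab)
    have hp₀n : ∀ i, 0 ≤ p₀ i := fun i => hp.1 _
    have hp₀s : ∑ i, p₀ i = 1 := (Equiv.sum_comp π p').trans hp.2
    have hw' : IsSortedPadOf (fun y : Fin k × Fin c => (1 / (k : ℝ)) * p₀ y.2) w :=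
      sortedPad_comp hw (Equiv.prodCongr (Equiv.refl (Fin k)) π)
    have hsum := part1 c p₀ ⟨hp₀n, hp₀s⟩ hp₀a w hw'
    set pt : ℕ → ℝ := fun i => if h : i < c then p₀ ⟨i, h⟩ else 0 with hpt
    have hpt0 : ∀ i, 0 ≤ pt i := fun i => by
      rw [hpt]; dsimp only; split; exacts [hp₀n _, le_refl 0]
    have hptsum : ∀ m, c ≤ m → ∑ i ∈ Finset.range m, pt i = 1 := by
      intro m hm
      have e1 : ∑ i ∈ Finset.range m, pt i = ∑ i ∈ Finset.range c, pt i :=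
        (Finset.sum_subset (Finset.range_subset_range.mpr hm) (fun j _ hj => by
          rw [Finset.mem_range] at hj
          rw [hpt]; exact dif_neg hj)).symm
      rw [e1, ← Fin.sum_univ_eq_sum_range pt c, ← hp₀s]
      exact Finset.sum_congr rfl fun i _ => by rw [hpt]; dsimp only; rw [dif_pos i.isLt, Fin.eta]
    set r : ℝ := 1 - ∑ i ∈ Finset.range L, pt i with hr
    have hr0 : 0 ≤ r := by
      have h2 : ∑ i ∈ Finset.range L, pt i ≤ ∑ i ∈ Finset.range (max L c), pt i :=
        Finset.sum_le_sum_of_subset_of_nonneg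
          (Finset.range_subset_range.mpr (le_max_left L c)) (fun i _ _ => hpt0 i)
      rw [hptsum _ (le_max_right L c)] at h2
      rw [hr]; linarith
    set P : Fin L → ℝ := fun i => pt (i : ℕ) + (if (i : ℕ) = 0 then r else 0) with hP
    have hP0 : ∀ i, 0 ≤ P i := fun i => add_nonneg (hpt0 _) (by split <;> simp [hr0])
    have hite : ∑ i : Fin L, (if (i : ℕ) = 0 then r else 0) = r := by
      have hc : ∀ i : Fin L, ((i : ℕ) = 0) = (i = (⟨0, hL0⟩ : Fin L)) := by
        intro i; simp [Fin.ext_iff]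
      calc ∑ i : Fin L, (if (i : ℕ) = 0 then r else 0)
          = ∑ i : Fin L, (if i = (⟨0, hL0⟩ : Fin L) then r else 0) := by
            refine Finset.sum_congr rfl fun i _ => ?_
            exact if_congr (by simp [Fin.ext_iff]) rfl rfl
        _ = r := by rw [Finset.sum_ite_eq' Finset.univ (⟨0, hL0⟩ : Fin L) (fun _ => r)]; simp
    have hPs : ∑ i, P i = 1 := by
      rw [hP]
      rw [Finset.sum_add_distrib, hite, Fin.sum_univ_eq_sum_range pt L]
      rw [hr]; ring
    have hPa : Antitone P := by
      intro a b hab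
      rw [hP]; dsimp only
      have h1 : pt (b : ℕ) ≤ pt (a : ℕ) := by
        have hab' : (a : ℕ) ≤ (b : ℕ) := hab
        by_cases hbc : (b : ℕ) < c
        · have hac : (a : ℕ) < c := lt_of_le_of_lt hab' hbc
          rw [hpt]; dsimp only; rw [dif_pos hbc, dif_pos hac]
          exact hp₀a (show (⟨(a : ℕ), hac⟩ : Fin c) ≤ ⟨(b : ℕ), hbc⟩ from hab')
        · rw [hpt]; dsimp only; rw [dif_neg hbc]
          exact hpt0 _
      have h2 : (if (b : ℕ) = 0 then r else 0) ≤ (if (a : ℕ) = 0 then r else 0) := by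
        by_cases hb : (b : ℕ) = 0
        · have ha : (a : ℕ) = 0 := by
            have : (a : ℕ) ≤ (b : ℕ) := hab
            omega
          rw [if_pos hb, if_pos ha]
        · rw [if_neg hb]
          split
          exacts [hr0, le_refl 0]
      exact add_le_add h1 h2
    refine ⟨(∑ i : Fin L,
      (∑ j ∈ Finset.Ico ((i : ℕ) * k) (min (((i : ℕ) + 1) * k) N),
        Real.sqrt (if h : j < N then q ⟨j, h⟩ else 0)) *
          Real.sqrt (P i)) ^ 2, ⟨P, ⟨hP0, hPs⟩, hPa, rfl⟩, ?_⟩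
    rw [hsum, mul_pow, hsqk]
    refine mul_le_mul_of_nonneg_left ?_ (inv_nonneg.mpr hkR.le)
    refine pow_le_pow_left₀ (Finset.sum_nonneg fun i _ =>
      mul_nonneg (hA0 _) (Real.sqrt_nonneg _)) ?_ 2
    rw [← Fin.sum_univ_eq_sum_range (fun i =>
      (∑ j ∈ Finset.Ico (i * k) (min ((i + 1) * k) N),
        Real.sqrt (if h : j < N then q ⟨j, h⟩ else 0)) * Real.sqrt (pt i)) L]
    refine Finset.sum_le_sum fun i _ => ?_
    refine mul_le_mul_of_nonneg_left (Real.sqrt_le_sqrt ?_) (hA0 _)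
    rw [hP]; dsimp only
    exact le_add_of_nonneg_right (by split <;> simp [hr0])
  have hTne : T.Nonempty := by
    refine ⟨_, ⟨(fun i => if i = (⟨0, hL0⟩ : Fin L) then (1 : ℝ) else 0), ⟨?_, ?_⟩, ?_, rfl⟩⟩
    · intro i; dsimp only; split; exacts [zero_le_one, le_refl 0]
    · rw [Finset.sum_ite_eq' Finset.univ (⟨0, hL0⟩ : Fin L) (fun _ => (1 : ℝ))]; simp
    · intro a b hab
      dsimp only
      by_cases hb : b = (⟨0, hL0⟩ : Fin L)
      · have ha : a = (⟨0, hL0⟩ : Fin L) := by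
          have h1 : (a : ℕ) ≤ (b : ℕ) := hab
          have h2 : (b : ℕ) = 0 := congrArg Fin.val hb
          exact Fin.ext (by omega)
        rw [if_pos hb, if_pos ha]
      · rw [if_neg hb]
        split
        exacts [zero_le_one, le_refl 0]
  have hSne : S.Nonempty := by
    obtain ⟨y, p₁, hp₁, hp₁a, _⟩ := hTne
    exact ⟨_, claimA p₁ hp₁ hp₁a⟩
  apply le_antisymm
  · refine csSup_le hSne fun x hx => ?_
    obtain ⟨y, hyT, hxy⟩ := claimB x hx
    exact hxy.trans (mul_le_mul_of_nonneg_left (le_csSup bddT hyT) (inv_nonneg.mpr hkR.le))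
  · have h1 : sSup T ≤ (k : ℝ) * sSup S := by
      refine csSup_le hTne fun y hy => ?_
      obtain ⟨p', hp, hpa, rfl⟩ := hy
      have h2 := le_csSup bddS (claimA p' hp hpa)
      calc (∑ i : Fin L,
            (∑ j ∈ Finset.Ico ((i : ℕ) * k) (min (((i : ℕ) + 1) * k) N),
              Real.sqrt (if h : j < N then q ⟨j, h⟩ else 0)) *
                Real.sqrt (p' i)) ^ 2
          = (k : ℝ) * ((k : ℝ)⁻¹ * (∑ i : Fin L,
            (∑ j ∈ Finset.Ico ((i : ℕ) * k) (min (((i : ℕ) + 1) * k) N),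
              Real.sqrt (if h : j < N then q ⟨j, h⟩ else 0)) *
                Real.sqrt (p' i)) ^ 2) := by field_simp
        _ ≤ (k : ℝ) * sSup S := mul_le_mul_of_nonneg_left h2 hkR.le
    calc (k : ℝ)⁻¹ * sSup T ≤ (k : ℝ)⁻¹ * ((k : ℝ) * sSup S) :=
          mul_le_mul_of_nonneg_left h1 (inv_nonneg.mpr hkR.le)
      _ = sSup S := by field_simp
end

section
/- Let n ≥ 1 and p, q ∈ [1/2, 1]. Let P = (p, 1−p) and Q = (q, 1−q) be Bernoulli probability vectors, and let P^{⊗n}, Q^{⊗n} be the product vectors on {0,1}^n with P^{⊗n}(x) = Π_{k=1}^n P(x_k). Let w and v be the nonincreasing rearrangements of P^{⊗n} and Q^{⊗n} respectively. Then Σ_{i=1}^{2^n} √( w(i)·v(i) ) = Σ_{k=0}^{n} C(n,k)·(p·q)^{(n−k)/2}·((1−p)(1−q))^{k/2}, where C(n,k) is the binomial coefficient. (The square of this quantity is the optimal fidelity, under local unitaries and zero communication, for converting n copies of the two-qubit state with Schmidt distribution Q into n copies of the one with Schmidt distribution P.) -/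
/-- Hamming weight of a boolean vector. -/
def bwt {n : ℕ} (x : Fin n → Bool) : ℕ := (Finset.univ.filter fun k => x k = true).card

lemma bwt_le {n : ℕ} (x : Fin n → Bool) : bwt x ≤ n := by
  have := Finset.card_filter_le Finset.univ (fun k : Fin n => x k = true)
  simpa [bwt] using this

lemma prod_ite_eq_pow {n : ℕ} (p : ℝ) (x : Fin n → Bool) :
    (∏ k, (if x k then 1 - p else p)) = p ^ (n - bwt x) * (1 - p) ^ (bwt x) := by
  rw [Finset.prod_ite, Finset.prod_const, Finset.prod_const]
  have hcard : (Finset.univ.filter fun k : Fin n => x k = true).card +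
      (Finset.univ.filter fun k : Fin n => ¬ (x k = true)).card = n := by
    rw [Finset.card_filter_add_card_filter_not]
    simp
  have h2 : (Finset.univ.filter fun k : Fin n => ¬ (x k = true)).card = n - bwt x := by
    unfold bwt; omega
  rw [h2]
  · rw [mul_comm]; rfl

lemma F_anti {n : ℕ} {p : ℝ} (hp0 : 0 ≤ 1 - p) (hpl : 1 - p ≤ p) {k1 k2 : ℕ}
    (h12 : k1 ≤ k2) (h2 : k2 ≤ n) :
    p ^ (n - k2) * (1 - p) ^ k2 ≤ p ^ (n - k1) * (1 - p) ^ k1 := by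
  have hp0' : (0:ℝ) ≤ p := le_trans hp0 hpl
  calc p ^ (n - k2) * (1 - p) ^ k2
      = p ^ (n - k2) * ((1 - p) ^ (k2 - k1) * (1 - p) ^ k1) := by
        rw [← pow_add, Nat.sub_add_cancel h12]
    _ ≤ p ^ (n - k2) * (p ^ (k2 - k1) * (1 - p) ^ k1) := by
        gcongr
    _ = p ^ (n - k2 + (k2 - k1)) * (1 - p) ^ k1 := by rw [pow_add]; ring
    _ = p ^ (n - k1) * (1 - p) ^ k1 := by congr 2; omega

lemma card_bwt_eq (n k : ℕ) :
    (Finset.univ.filter fun x : Fin n → Bool => bwt x = k).card = n.choose k := by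
  have : (Finset.univ.filter fun x : Fin n → Bool => bwt x = k).card
      = (Finset.powersetCard k (Finset.univ : Finset (Fin n))).card := by
    apply Finset.card_bij (fun x _ => Finset.univ.filter fun j => x j = true)
    · intro x hx
      simp only [Finset.mem_filter, Finset.mem_univ, true_and] at hx
      rw [Finset.mem_powersetCard]
      exact ⟨Finset.filter_subset _ _, hx⟩
    · intro x hx y hy hxy
      funext j
      have := Finset.ext_iff.mp hxy j
      simp only [Finset.mem_filter, Finset.mem_univ, true_and] at this
      by_cases h : x j = true
      · rw [h, (this.mp h).symm]
      · cases hx' : x j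
        · cases hy' : y j
          · rfl
          · exact absurd (this.mpr hy') h
        · exact absurd hx' h
    · intro s hs
      rw [Finset.mem_powersetCard] at hs
      refine ⟨fun j => decide (j ∈ s), ?_, ?_⟩
      · rw [Finset.mem_filter]
        refine ⟨Finset.mem_univ _, ?_⟩
        rw [← hs.2]
        unfold bwt
        congr 1
        ext j; simp
      · ext j; simp
  rw [this, Finset.card_powersetCard]
  simp

lemma sqrt_pow_eq_rpow {c : ℝ} (hc : 0 ≤ c) (m : ℕ) :
    Real.sqrt (c ^ m) = c ^ ((m : ℝ) / 2) := by
  rw [Real.sqrt_eq_rpow, ← Real.rpow_natCast c m, ← Real.rpow_mul hc]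
  congr 1; ring

/-- if `w`, `v` are the nonincreasing rearrangements of the
`n`-fold Bernoulli product vectors `P^{⊗n}`, `Q^{⊗n}` (with `P = (p, 1-p)`,
`Q = (q, 1-q)`, `p, q ∈ [1/2, 1]`), then their Bhattacharyya coefficient is
`∑_{k=0}^{n} C(n,k) (pq)^{(n-k)/2} ((1-p)(1-q))^{k/2}`. -/
theorem stmt_13 (n : ℕ) (hn : 1 ≤ n) (p q : ℝ)
    (hp : p ∈ Set.Icc (1 / 2 : ℝ) 1) (hq : q ∈ Set.Icc (1 / 2 : ℝ) 1)
    (w v : Fin (2 ^ n) → ℝ) (hw : Antitone w) (hv : Antitone v)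
    (ew : Fin (2 ^ n) ≃ (Fin n → Bool)) (ev : Fin (2 ^ n) ≃ (Fin n → Bool))
    (hwe : ∀ i, w i = ∏ k, (if ew i k then 1 - p else p))
    (hve : ∀ i, v i = ∏ k, (if ev i k then 1 - q else q)) :
    ∑ i, Real.sqrt (w i * v i) =
      ∑ k ∈ Finset.range (n + 1), (n.choose k : ℝ) *
        (p * q) ^ (((n : ℝ) - (k : ℝ)) / 2) *
        ((1 - p) * (1 - q)) ^ ((k : ℝ) / 2) := by
  obtain ⟨hp1, hp2⟩ := hp
  obtain ⟨hq1, hq2⟩ := hq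
  have hp0 : (0:ℝ) ≤ 1 - p := by linarith
  have hpl : 1 - p ≤ p := by linarith
  have hq0 : (0:ℝ) ≤ 1 - q := by linarith
  have hql : 1 - q ≤ q := by linarith
  have hp0' : (0:ℝ) ≤ p := le_trans hp0 hpl
  have hq0' : (0:ℝ) ≤ q := le_trans hq0 hql
  -- sort the index set by Hamming weight
  set σ : Equiv.Perm (Fin (2 ^ n)) := Tuple.sort (fun i => bwt (ew i)) with hσ
  have hmono : Monotone (fun i => bwt (ew (σ i))) :=
    Tuple.monotone_sort (fun i => bwt (ew i))
  set τ : Fin (2 ^ n) ≃ (Fin n → Bool) := (σ : Equiv.Perm _).trans ew with hτ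
  have hwtmono : Monotone (fun i => bwt (τ i)) := hmono
  -- w equals the canonical sorted vector
  have hwval : ∀ i, w i = p ^ (n - bwt (τ i)) * (1 - p) ^ (bwt (τ i)) := by
    have hWanti : Antitone (fun i => p ^ (n - bwt (τ i)) * (1 - p) ^ (bwt (τ i))) := by
      intro i j hij
      exact F_anti hp0 hpl (hwtmono hij) (bwt_le _)
    have hcomp : w ∘ (τ.trans ew.symm) = fun i => p ^ (n - bwt (τ i)) * (1 - p) ^ (bwt (τ i)) := by
      funext i
      simp only [Function.comp, Equiv.trans_apply]
      rw [hwe, ]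
      simp only [Equiv.apply_symm_apply]
      exact prod_ite_eq_pow p (τ i)
    have key := Tuple.unique_monotone (α := ℝᵒᵈ) (f := (w : Fin (2^n) → ℝᵒᵈ))
      (σ := τ.trans ew.symm) (τ := Equiv.refl _)
      (by intro a b hab; have h := hWanti hab
          simp only [← congrFun hcomp a, ← congrFun hcomp b] at h; exact h)
      (fun a b hab => hw hab)
    intro i
    have := congrFun key i
    simp only [Function.comp, Equiv.refl_apply] at this
    rw [← this, ← congrFun hcomp i]
    rfl
  have hvval : ∀ i, v i = q ^ (n - bwt (τ i)) * (1 - q) ^ (bwt (τ i)) := by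
    have hVanti : Antitone (fun i => q ^ (n - bwt (τ i)) * (1 - q) ^ (bwt (τ i))) := by
      intro i j hij
      exact F_anti hq0 hql (hwtmono hij) (bwt_le _)
    have hcomp : v ∘ (τ.trans ev.symm) = fun i => q ^ (n - bwt (τ i)) * (1 - q) ^ (bwt (τ i)) := by
      funext i
      simp only [Function.comp, Equiv.trans_apply]
      rw [hve]
      simp only [Equiv.apply_symm_apply]
      exact prod_ite_eq_pow q (τ i)
    have key := Tuple.unique_monotone (α := ℝᵒᵈ) (f := (v : Fin (2^n) → ℝᵒᵈ))
      (σ := τ.trans ev.symm) (τ := Equiv.refl _)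
      (by intro a b hab; have h := hVanti hab
          simp only [← congrFun hcomp a, ← congrFun hcomp b] at h; exact h)
      (fun a b hab => hv hab)
    intro i
    have := congrFun key i
    simp only [Function.comp, Equiv.refl_apply] at this
    rw [← this, ← congrFun hcomp i]
    rfl
  -- now compute the sum
  have step1 : ∑ i, Real.sqrt (w i * v i)
      = ∑ i, Real.sqrt ((p*q) ^ (n - bwt (τ i)) * ((1-p)*(1-q)) ^ (bwt (τ i))) := by
    apply Finset.sum_congr rfl
    intro i _
    rw [hwval, hvval]
    congr 1
    rw [mul_pow, mul_pow]
    ring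
  rw [step1]
  rw [show (∑ i, Real.sqrt ((p*q) ^ (n - bwt (τ i)) * ((1-p)*(1-q)) ^ (bwt (τ i))))
      = ∑ x : Fin n → Bool, Real.sqrt ((p*q) ^ (n - bwt x) * ((1-p)*(1-q)) ^ (bwt x))
    from Fintype.sum_equiv τ _ _ (fun i => rfl)]
  rw [← Finset.sum_fiberwise_of_maps_to (g := fun x : Fin n → Bool => bwt x)
      (t := Finset.range (n+1))
      (fun x _ => Finset.mem_range.mpr (Nat.lt_succ_of_le (bwt_le x))) _]
  apply Finset.sum_congr rfl
  intro k hk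
  rw [Finset.mem_range] at hk
  have hkn : k ≤ n := Nat.lt_succ_iff.mp hk
  have inner : ∀ x ∈ Finset.univ.filter fun x : Fin n → Bool => bwt x = k,
      Real.sqrt ((p*q) ^ (n - bwt x) * ((1-p)*(1-q)) ^ (bwt x))
      = (p * q) ^ (((n : ℝ) - (k : ℝ)) / 2) * ((1 - p) * (1 - q)) ^ ((k : ℝ) / 2) := by
    intro x hx
    simp only [Finset.mem_filter] at hx
    rw [hx.2]
    have hpq : (0:ℝ) ≤ p * q := mul_nonneg hp0' hq0'
    have hpq' : (0:ℝ) ≤ (1-p) * (1-q) := mul_nonneg hp0 hq0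
    rw [Real.sqrt_mul (pow_nonneg hpq _), sqrt_pow_eq_rpow hpq, sqrt_pow_eq_rpow hpq']
    congr 2
    rw [Nat.cast_sub hkn]
  rw [Finset.sum_congr rfl inner, Finset.sum_const, card_bwt_eq, nsmul_eq_mul, mul_assoc]
end

section
/- Let p, q ∈ [1/2, 1) with p ≠ q. Let P = (p, 1−p), Q = (q, 1−q), and for each n ≥ 1 let w_n, v_n be the nonincreasing rearrangements of the product vectors P^{⊗n}, Q^{⊗n} on {0,1}^n. Then lim_{n→∞} ( Σ_{i=1}^{2^n} √( w_n(i)·v_n(i) ) )² = 0. (The optimal fidelity, under local unitaries and zero communication, of converting n copies of one entangled two-qubit pure state into n copies of a different entangled two-qubit pure state tends to zero as n → ∞.) -/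
open Real Filter

lemma aux_mono : StrictMonoOn (fun x : ℝ => x * Real.log x + (1 - x) * Real.log (1 - x))
    (Set.Ico (1/2 : ℝ) 1) := by
  have hderiv : ∀ x ∈ Set.Ioo (1/2 : ℝ) 1,
      HasDerivAt (fun x : ℝ => x * Real.log x + (1 - x) * Real.log (1 - x))
        (Real.log x - Real.log (1 - x)) x := by
    intro x hx
    have hx0 : x ≠ 0 := by have := hx.1; intro h; rw [h] at this; norm_num at this
    have h1x : (1 : ℝ) - x ≠ 0 := by have := hx.2; intro h; linarith [sub_eq_zero.mp h]
    have h1 : HasDerivAt (fun x : ℝ => x * Real.log x) (Real.log x + 1) x :=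
      Real.hasDerivAt_mul_log hx0
    have h2 : HasDerivAt (fun x : ℝ => (1 - x) * Real.log (1 - x))
        ((Real.log (1 - x) + 1) * (-1)) x := by
      have := (Real.hasDerivAt_mul_log h1x).comp x ((hasDerivAt_id x).const_sub 1)
      simpa [Function.comp_def] using this
    have := h1.add h2
    refine this.congr_deriv ?_
    ring
  apply strictMonoOn_of_deriv_pos (convex_Ico _ _)
  · intro x hx
    have hx0 : x ≠ 0 := by have := hx.1; intro h; rw [h] at this; norm_num at this
    have h1x : (1 : ℝ) - x ≠ 0 := by have := hx.2; intro h; linarith [sub_eq_zero.mp h]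
    exact (ContinuousAt.continuousWithinAt
      (((continuousAt_id.mul (Real.continuousAt_log hx0))).add
        ((continuousAt_const.sub continuousAt_id).mul
          ((Real.continuousAt_log h1x).comp (continuousAt_const.sub continuousAt_id)))))
  · intro x hx
    rw [interior_Ico] at hx
    rw [(hderiv x hx).deriv]
    have h1 : (0:ℝ) < 1 - x := by linarith [hx.2]
    have h2 : 1 - x < x := by linarith [hx.1]
    linarith [Real.log_lt_log h1 h2]

lemma aux_local {f : ℝ → ℝ} {c : ℝ} (hf : HasDerivAt f c 1) (hc : c ≠ 0) :
    ∃ s : ℝ, 1/2 < s ∧ f s < f 1 := by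
  rw [hasDerivAt_iff_tendsto_slope] at hf
  rcases hc.lt_or_gt with h | h
  · -- c < 0 : go right
    have h1 : ∀ᶠ x in nhdsWithin (1:ℝ) (Set.Ioi 1), slope f 1 x < 0 :=
      (hf.mono_left (nhdsWithin_mono _ fun x hx => ne_of_gt hx)).eventually (gt_mem_nhds h)
    obtain ⟨x, hx1, hx2⟩ := (h1.and self_mem_nhdsWithin).exists
    refine ⟨x, by linarith [hx2], ?_⟩
    have hx3 : (0:ℝ) < x - 1 := by have := hx2; linarith
    have := mul_neg_of_neg_of_pos hx1 hx3
    rw [slope_def_field, div_mul_cancel₀ _ (ne_of_gt hx3)] at this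
    linarith
  · -- c > 0 : go left
    have h1 : ∀ᶠ x in nhdsWithin (1:ℝ) (Set.Iio 1), slope f 1 x > 0 :=
      (hf.mono_left (nhdsWithin_mono _ fun x hx => ne_of_lt hx)).eventually (lt_mem_nhds h)
    have h2 : ∀ᶠ x in nhdsWithin (1:ℝ) (Set.Iio 1), (1/2:ℝ) < x :=
      eventually_nhdsWithin_of_eventually_nhds (eventually_gt_nhds (by norm_num))
    obtain ⟨x, ⟨hx1, hx2⟩, hx3⟩ := ((h1.and h2).and self_mem_nhdsWithin).exists
    refine ⟨x, hx2, ?_⟩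
    have hx4 : x - 1 < 0 := by have := hx3; linarith
    have := mul_neg_of_pos_of_neg hx1 hx4
    rw [slope_def_field, div_mul_cancel₀ _ (ne_of_lt hx4)] at this
    linarith

lemma aux_sum {n : ℕ} (e : Fin (2^n) ≃ (Fin n → Bool)) (a b : ℝ) (ha : 0 ≤ a) (hb : 0 ≤ b)
    (s : ℝ) :
    ∑ i : Fin (2^n), (∏ k, (if e i k then a else b)) ^ s = (b ^ s + a ^ s) ^ n := by
  rw [← Equiv.sum_comp e.symm fun i : Fin (2^n) =>
    (∏ k, (if e i k then a else b) : ℝ) ^ s]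
  simp only [Equiv.apply_symm_apply]
  calc ∑ x : Fin n → Bool, (∏ k, (if x k then a else b) : ℝ) ^ s
        = ∑ x : Fin n → Bool, ∏ k, ((if x k then a else b) : ℝ) ^ s := by
          refine Finset.sum_congr rfl fun x _ => ?_
          rw [Real.finset_prod_rpow]
          intro k _
          split <;> assumption
      _ = ∑ x : Fin n → Bool, ∏ k, (fun c : Bool => if c then a ^ s else b ^ s) (x k) := by
          refine Finset.sum_congr rfl fun x _ => Finset.prod_congr rfl fun k _ => ?_
          simp only [apply_ite (· ^ s)]
      _ = ∏ _k : Fin n, ∑ c : Bool, (if c then a ^ s else b ^ s) := (Fintype.prod_sum (fun (_ : Fin n) (c : Bool) => if c then a ^ s else b ^ s)).symm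
      _ = (b ^ s + a ^ s) ^ n := by simp [Fintype.sum_bool, add_comm]

lemma aux_deriv {p q : ℝ} (hp0 : 0 < p) (hp1 : p < 1) (hq0 : 0 < q) (hq1 : q < 1) :
    HasDerivAt (fun s : ℝ =>
        (p ^ s + (1 - p) ^ s) ^ (s / (2 * s - 1)) *
          (q ^ (s / (2 * s - 1)) + (1 - q) ^ (s / (2 * s - 1))) ^ s)
      ((p * Real.log p + (1 - p) * Real.log (1 - p)) -
        (q * Real.log q + (1 - q) * Real.log (1 - q))) 1 := by
  have hp1' : (0:ℝ) < 1 - p := by linarith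
  have hq1' : (0:ℝ) < 1 - q := by linarith
  have hα : HasDerivAt (fun s : ℝ => p ^ s + (1 - p) ^ s)
      (p ^ (1:ℝ) * Real.log p + (1 - p) ^ (1:ℝ) * Real.log (1 - p)) 1 :=
    ((Real.hasStrictDerivAt_const_rpow hp0 1).hasDerivAt).add
      ((Real.hasStrictDerivAt_const_rpow hp1' 1).hasDerivAt)
  have ht : HasDerivAt (fun s : ℝ => s / (2 * s - 1)) (-1) 1 := by
    have h := (hasDerivAt_id (1:ℝ)).div (((hasDerivAt_id (1:ℝ)).const_mul 2).sub_const 1)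
      (by norm_num)
    exact h.congr_deriv (by norm_num [id])
  have hβ : HasDerivAt (fun t : ℝ => q ^ t + (1 - q) ^ t)
      (q ^ (1:ℝ) * Real.log q + (1 - q) ^ (1:ℝ) * Real.log (1 - q)) 1 :=
    ((Real.hasStrictDerivAt_const_rpow hq0 1).hasDerivAt).add
      ((Real.hasStrictDerivAt_const_rpow hq1' 1).hasDerivAt)
  have hβ' : HasDerivAt (fun t : ℝ => q ^ t + (1 - q) ^ t)
      (q ^ (1:ℝ) * Real.log q + (1 - q) ^ (1:ℝ) * Real.log (1 - q))
      ((1:ℝ) / (2 * 1 - 1)) := by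
    rw [show (1:ℝ) / (2 * 1 - 1) = 1 by norm_num]
    exact hβ
  have hβt : HasDerivAt (fun s : ℝ => q ^ (s / (2 * s - 1)) + (1 - q) ^ (s / (2 * s - 1)))
      ((q ^ (1:ℝ) * Real.log q + (1 - q) ^ (1:ℝ) * Real.log (1 - q)) * (-1)) 1 := by
    have := hβ'.comp 1 ht
    simpa [Function.comp_def] using this
  have hpos1 : (0:ℝ) < p ^ (1:ℝ) + (1 - p) ^ (1:ℝ) :=
    add_pos (Real.rpow_pos_of_pos hp0 _) (Real.rpow_pos_of_pos hp1' _)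
  have hpos2 : (0:ℝ) < q ^ ((1:ℝ) / (2 * 1 - 1)) + (1 - q) ^ ((1:ℝ) / (2 * 1 - 1)) :=
    add_pos (Real.rpow_pos_of_pos hq0 _) (Real.rpow_pos_of_pos hq1' _)
  have h1 := hα.rpow ht hpos1
  have h2 := hβt.rpow (hasDerivAt_id 1) hpos2
  have h3 := h1.mul h2
  refine h3.congr_deriv ?_
  have e1 : (1:ℝ) / (2 * 1 - 1) = 1 := by norm_num
  rw [e1]
  simp only [Real.rpow_one, id_eq]
  rw [show p + (1 - p) = 1 by ring, show q + (1 - q) = 1 by ring]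
  simp [Real.log_one]
  ring

/-- for inequivalent entangled two-qubit states (Bernoulli
parameters `p ≠ q` in `[1/2, 1)`), the optimal local-unitary conversion
fidelity between `n` copies, i.e. the squared Bhattacharyya coefficient of the
sorted `n`-fold product distributions, tends to `0` as `n → ∞`. -/
theorem stmt_14 (p q : ℝ)
    (hp : p ∈ Set.Ico (1 / 2 : ℝ) 1) (hq : q ∈ Set.Ico (1 / 2 : ℝ) 1) (hpq : p ≠ q)
    (w v : (n : ℕ) → Fin (2 ^ n) → ℝ)
    (hw : ∀ n, Antitone (w n)) (hv : ∀ n, Antitone (v n))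
    (ew : (n : ℕ) → (Fin (2 ^ n) ≃ (Fin n → Bool)))
    (ev : (n : ℕ) → (Fin (2 ^ n) ≃ (Fin n → Bool)))
    (hwe : ∀ n i, w n i = ∏ k, (if ew n i k then 1 - p else p))
    (hve : ∀ n i, v n i = ∏ k, (if ev n i k then 1 - q else q)) :
    Filter.Tendsto (fun n : ℕ => (∑ i, Real.sqrt (w n i * v n i)) ^ 2)
      Filter.atTop (nhds 0) := by
  have hp0 : (0:ℝ) < p := lt_of_lt_of_le (by norm_num) hp.1
  have hq0 : (0:ℝ) < q := lt_of_lt_of_le (by norm_num) hq.1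
  have hp1 : p < 1 := hp.2
  have hq1 : q < 1 := hq.2
  have hp1' : (0:ℝ) < 1 - p := by linarith
  have hq1' : (0:ℝ) < 1 - q := by linarith
  -- value at 1 of the auxiliary function is 1
  have hab : (p * Real.log p + (1 - p) * Real.log (1 - p)) -
      (q * Real.log q + (1 - q) * Real.log (1 - q)) ≠ 0 := by
    refine sub_ne_zero.mpr fun h => hpq ?_
    exact aux_mono.injOn hp hq h
  obtain ⟨s, hshalf, hslt⟩ := aux_local (aux_deriv hp0 hp1 hq0 hq1) hab
  have hden : (0:ℝ) < 2 * s - 1 := by linarith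
  set t : ℝ := s / (2 * s - 1) with htdef
  have ht0 : 0 < t := div_pos (by linarith) hden
  have hs0 : 0 < s := by linarith
  -- the value at 1 is 1
  have hone : ((p ^ (1:ℝ) + (1 - p) ^ (1:ℝ)) ^ ((1:ℝ) / (2 * 1 - 1)) *
      (q ^ ((1:ℝ) / (2 * 1 - 1)) + (1 - q) ^ ((1:ℝ) / (2 * 1 - 1))) ^ (1:ℝ)) = 1 := by
    rw [show (1:ℝ) / (2 * 1 - 1) = 1 by norm_num]
    simp only [Real.rpow_one]
    rw [show p + (1 - p) = 1 by ring, show q + (1 - q) = 1 by ring]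
    norm_num
  set αs : ℝ := p ^ s + (1 - p) ^ s with hαdef
  set βt : ℝ := q ^ t + (1 - q) ^ t with hβdef
  have hαs0 : 0 ≤ αs := by
    have := Real.rpow_pos_of_pos hp0 s
    have := Real.rpow_pos_of_pos hp1' s
    rw [hαdef]; linarith
  have hβt0 : 0 ≤ βt := by
    have := Real.rpow_pos_of_pos hq0 t
    have := Real.rpow_pos_of_pos hq1' t
    rw [hβdef]; linarith
  have hglt : αs ^ t * βt ^ s < 1 := by
    have := hslt
    rw [hone] at this
    exact this
  have conj : Real.HolderConjugate (2 * s) (2 * t) := by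
    rw [Real.holderConjugate_iff]
    constructor
    · linarith
    · rw [htdef]
      field_simp
      ring
  set C : ℝ := αs ^ ((1:ℝ) / (2 * s)) * βt ^ ((1:ℝ) / (2 * t)) with hCdef
  have hC0 : 0 ≤ C := mul_nonneg (Real.rpow_nonneg hαs0 _) (Real.rpow_nonneg hβt0 _)
  have hC1 : C < 1 := by
    have e1 : αs ^ ((1:ℝ) / (2 * s)) = (αs ^ t) ^ ((1:ℝ) / (2 * s * t)) := by
      rw [← Real.rpow_mul hαs0]
      congr 1
      field_simp
    have e2 : βt ^ ((1:ℝ) / (2 * t)) = (βt ^ s) ^ ((1:ℝ) / (2 * s * t)) := by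
      rw [← Real.rpow_mul hβt0]
      congr 1
      field_simp
    rw [hCdef, e1, e2, ← Real.mul_rpow (Real.rpow_nonneg hαs0 _) (Real.rpow_nonneg hβt0 _)]
    exact Real.rpow_lt_one (mul_nonneg (Real.rpow_nonneg hαs0 _) (Real.rpow_nonneg hβt0 _))
      hglt (by positivity)
  -- the key bound
  have key : ∀ n : ℕ, (∑ i, Real.sqrt (w n i * v n i)) ≤ C ^ n := by
    intro n
    have hwn : ∀ i, 0 ≤ w n i := fun i => by
      rw [hwe]
      exact Finset.prod_nonneg fun k _ => by split <;> linarith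
    have hvn : ∀ i, 0 ≤ v n i := fun i => by
      rw [hve]
      exact Finset.prod_nonneg fun k _ => by split <;> linarith
    have sqpow : ∀ (x : ℝ), 0 ≤ x → ∀ (e : ℝ), Real.sqrt x ^ e = x ^ ((1:ℝ)/2 * e) := by
      intro x hx e
      rw [Real.sqrt_eq_rpow, ← Real.rpow_mul hx]
    have powswap : ∀ (x : ℝ), 0 ≤ x → ∀ (e : ℝ), (x ^ n) ^ e = (x ^ e) ^ n := by
      intro x hx e
      rw [← Real.rpow_natCast x n, ← Real.rpow_mul hx, mul_comm, Real.rpow_mul hx,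
        Real.rpow_natCast]
    have hsum1 : ∑ i, |Real.sqrt (w n i)| ^ (2 * s) = αs ^ n := by
      have : ∀ i, |Real.sqrt (w n i)| ^ (2 * s) = w n i ^ s := by
        intro i
        rw [abs_of_nonneg (Real.sqrt_nonneg _), sqpow _ (hwn i),
          show (1:ℝ)/2 * (2 * s) = s by ring]
      rw [Finset.sum_congr rfl fun i _ => this i]
      simp_rw [hwe n]
      exact aux_sum (ew n) (1 - p) p (by linarith) (by linarith) s
    have hsum2 : ∑ i, |Real.sqrt (v n i)| ^ (2 * t) = βt ^ n := by
      have : ∀ i, |Real.sqrt (v n i)| ^ (2 * t) = v n i ^ t := by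
        intro i
        rw [abs_of_nonneg (Real.sqrt_nonneg _), sqpow _ (hvn i),
          show (1:ℝ)/2 * (2 * t) = t by ring]
      rw [Finset.sum_congr rfl fun i _ => this i]
      simp_rw [hve n]
      exact aux_sum (ev n) (1 - q) q (by linarith) (by linarith) t
    calc (∑ i, Real.sqrt (w n i * v n i))
        = ∑ i, Real.sqrt (w n i) * Real.sqrt (v n i) := by
          refine Finset.sum_congr rfl fun i _ => ?_
          rw [Real.sqrt_mul (hwn i)]
      _ ≤ (∑ i, |Real.sqrt (w n i)| ^ (2 * s)) ^ ((1:ℝ) / (2 * s)) *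
            (∑ i, |Real.sqrt (v n i)| ^ (2 * t)) ^ ((1:ℝ) / (2 * t)) :=
          Real.inner_le_Lp_mul_Lq _ _ _ conj
      _ = (αs ^ n) ^ ((1:ℝ) / (2 * s)) * (βt ^ n) ^ ((1:ℝ) / (2 * t)) := by
          rw [hsum1, hsum2]
      _ = C ^ n := by
          rw [powswap _ hαs0, powswap _ hβt0, hCdef, mul_pow]
  have hS0 : ∀ n : ℕ, 0 ≤ ∑ i : Fin (2 ^ n), Real.sqrt (w n i * v n i) := fun n =>
    Finset.sum_nonneg fun i _ => Real.sqrt_nonneg _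
  have bound : ∀ n : ℕ, (∑ i, Real.sqrt (w n i * v n i)) ^ 2 ≤ (C ^ 2) ^ n := by
    intro n
    have := pow_le_pow_left₀ (hS0 n) (key n) 2
    calc (∑ i, Real.sqrt (w n i * v n i)) ^ 2 ≤ (C ^ n) ^ 2 := this
      _ = (C ^ 2) ^ n := by rw [← pow_mul, ← pow_mul, Nat.mul_comm]
  refine squeeze_zero (fun n => sq_nonneg _) bound ?_
  exact tendsto_pow_atTop_nhds_zero_of_lt_one (sq_nonneg C)
    (pow_lt_one₀ hC0 hC1 two_ne_zero)
end
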